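/- arXiv:math/0601021 — 8 statements merged into one kernel-verified Lean document; each statement's English description precedes it below -/
import Mathlib

section
/- Let d ≥ 1 and let S ⊂ ℤ^d be a finite set with 0 ∉ S and −S = S. Let f(x) = Σ_{λ∈S} c(λ)·exp(2πi⟨x,λ⟩) (with complex coefficients c : S → ℂ) be real-valued for every x ∈ ℝ^d. Then for every y ∈ ℝ^d there exists a point x in the closed Euclidean ball of radius D(S)/2 centered at y with f(x) = 0, where D(S) = Σ_{λ∈S} 1/(4·‖λ‖₂). -/
lemma sqrt_sum_sq_eq_norm {d : ℕ} (a : Fin d → ℝ) :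
    Real.sqrt (∑ j, a j ^ 2) = ‖(WithLp.equiv 2 (Fin d → ℝ)).symm a‖ := by
  rw [EuclideanSpace.norm_eq]
  simp [Real.norm_eq_abs, sq_abs]

lemma sqrt_tri {d : ℕ} (a v : Fin d → ℝ) (s : ℝ) :
    Real.sqrt (∑ j, (a j + s * v j) ^ 2) ≤
      Real.sqrt (∑ j, a j ^ 2) + |s| * Real.sqrt (∑ j, v j ^ 2) := by
  have h1 : (fun j => a j + s * v j) = a + s • v := by funext j; simp
  rw [sqrt_sum_sq_eq_norm, sqrt_sum_sq_eq_norm, sqrt_sum_sq_eq_norm, h1]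
  have h2 : (WithLp.equiv 2 (Fin d → ℝ)).symm (a + s • v)
      = (WithLp.equiv 2 (Fin d → ℝ)).symm a + s • (WithLp.equiv 2 (Fin d → ℝ)).symm v := rfl
  rw [h2]
  calc ‖_ + _‖ ≤ _ + ‖s • (WithLp.equiv 2 (Fin d → ℝ)).symm v‖ := norm_add_le _ _
    _ = _ := by rw [norm_smul, Real.norm_eq_abs]

lemma KO_aux (d : ℕ) : ∀ (n : ℕ) (S : Finset (Fin d → ℤ)), S.card ≤ n →
    (0 : Fin d → ℤ) ∉ S → (∀ lam ∈ S, -lam ∈ S) →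
    ∀ (c : (Fin d → ℤ) → ℂ) (f : (Fin d → ℝ) → ℂ),
    (∀ x : Fin d → ℝ, f x = ∑ lam ∈ S,
      c lam * Complex.exp (2 * Real.pi * Complex.I * ((∑ j, x j * (lam j : ℝ) : ℝ) : ℂ))) →
    (∀ x : Fin d → ℝ, (f x).im = 0) →
    ∀ y : Fin d → ℝ, ∃ x : Fin d → ℝ,
      Real.sqrt (∑ j, (x j - y j) ^ 2) ≤
        (∑ lam ∈ S, 1 / (4 * Real.sqrt (∑ j, ((lam j : ℝ)) ^ 2))) / 2 ∧
      f x = 0 := by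
  intro n
  induction n with
  | zero =>
    intro S hcard h0 hsym c f hf hreal y
    have hS : S = ∅ := Finset.card_eq_zero.mp (Nat.le_zero.mp hcard)
    subst hS
    refine ⟨y, ?_, by simp [hf]⟩
    simp
  | succ n ih =>
    intro S hcard h0 hsym c f hf hreal y
    rcases S.eq_empty_or_nonempty with rfl | ⟨μ, hμ⟩
    · refine ⟨y, ?_, by simp [hf]⟩
      simp
    -- setup
    have hμ0 : μ ≠ 0 := by rintro rfl; exact h0 hμ
    set N : ℝ := ∑ j, (μ j : ℝ) ^ 2 with hNdef
    have hN : 0 < N := by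
      obtain ⟨j, hj⟩ := Function.ne_iff.mp hμ0
      have h1 : (0:ℝ) < (μ j : ℝ) ^ 2 := by
        have : (μ j : ℝ) ≠ 0 := by exact_mod_cast hj
        positivity
      have h2 : (μ j : ℝ) ^ 2 ≤ N := by
        apply Finset.single_le_sum (f := fun j => (μ j : ℝ) ^ 2) (fun i _ => sq_nonneg _)
          (Finset.mem_univ j)
      linarith
    set v : Fin d → ℝ := fun j => (μ j : ℝ) / (2 * N) with hvdef
    have hvμ : (∑ j, v j * (μ j : ℝ)) = 1/2 := by
      have h1 : ∀ j : Fin d, v j * (μ j : ℝ) = (μ j : ℝ) ^ 2 / (2 * N) := by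
        intro j; simp only [hvdef]; ring
      rw [Finset.sum_congr rfl (fun j _ => h1 j), ← Finset.sum_div, ← hNdef]
      field_simp
    have hvμ' : (∑ j, v j * ((-μ) j : ℝ)) = -(1/2) := by
      have h1 : ∀ j : Fin d, v j * (((-μ) j : ℤ) : ℝ) = -(v j * (μ j : ℝ)) := by
        intro j
        simp only [Pi.neg_apply, Int.cast_neg]
        ring
      rw [Finset.sum_congr rfl (fun j _ => h1 j), Finset.sum_neg_distrib, hvμ]
    have hvnorm : Real.sqrt (∑ j, v j ^ 2) = 1 / (2 * Real.sqrt N) := by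
      have h1 : (∑ j, v j ^ 2) = 1 / (4 * N) := by
        have h2 : ∀ j : Fin d, v j ^ 2 = (μ j : ℝ) ^ 2 / (4 * N ^ 2) := by
          intro j; simp only [hvdef]; ring
        rw [Finset.sum_congr rfl (fun j _ => h2 j), ← Finset.sum_div, ← hNdef]
        field_simp
      rw [h1]
      rw [show (1:ℝ) / (4 * N) = (1 / (2 * Real.sqrt N)) ^ 2 by
        rw [div_pow, one_pow, mul_pow, Real.sq_sqrt hN.le]; norm_num]
      exact Real.sqrt_sq (by positivity)
    have hμμ' : μ ≠ -μ := by
      intro h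
      apply hμ0
      funext j
      have := congrFun h j
      simp only [Pi.neg_apply] at this
      show μ j = 0
      omega
    have hμ'S : -μ ∈ S := hsym μ hμ
    set T : Finset (Fin d → ℤ) := {μ, -μ} with hTdef
    have hT : T ⊆ S := by
      intro x hx
      rcases Finset.mem_insert.mp hx with rfl | hx
      · exact hμ
      · rw [Finset.mem_singleton.mp hx]; exact hμ'S
    set S' : Finset (Fin d → ℤ) := S \ T with hS'def
    have hcard' : S'.card ≤ n := by
      have h1 : S' ⊆ S.erase μ := by
        intro x hx
        rw [Finset.mem_sdiff] at hx
        rw [Finset.mem_erase]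
        exact ⟨fun h => hx.2 (by simp [hTdef, h]), hx.1⟩
      have h2 := Finset.card_le_card h1
      rw [Finset.card_erase_of_mem hμ] at h2
      omega
    have h0' : (0 : Fin d → ℤ) ∉ S' := fun h => h0 (Finset.mem_sdiff.mp h).1
    have hsym' : ∀ lam ∈ S', -lam ∈ S' := by
      intro lam hlam
      rw [Finset.mem_sdiff] at hlam ⊢
      refine ⟨hsym lam hlam.1, fun h => hlam.2 ?_⟩
      simp only [hTdef, Finset.mem_insert, Finset.mem_singleton] at h ⊢
      rcases h with h | h
      · right; rw [← h]; simp
      · left; have := congrArg (fun z => -z) h; simpa using this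
    -- the averaged polynomial
    set E : (Fin d → ℝ) → (Fin d → ℤ) → ℂ := fun x lam =>
      Complex.exp (2 * Real.pi * Complex.I * ((∑ j, x j * (lam j : ℝ) : ℝ) : ℂ)) with hEdef
    set c' : (Fin d → ℤ) → ℂ := fun lam =>
      c lam * (1 + Complex.exp (2 * Real.pi * Complex.I * ((∑ j, v j * (lam j : ℝ) : ℝ) : ℂ)))
      with hc'def
    set g : (Fin d → ℝ) → ℂ := fun x => f x + f (fun j => x j + v j) with hgdef
    have hEsplit : ∀ (x : Fin d → ℝ) (lam : Fin d → ℤ),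
        Complex.exp (2 * Real.pi * Complex.I * ((∑ j, (x j + v j) * (lam j : ℝ) : ℝ) : ℂ))
          = Complex.exp (2 * Real.pi * Complex.I * ((∑ j, x j * (lam j : ℝ) : ℝ) : ℂ))
            * Complex.exp (2 * Real.pi * Complex.I *
              ((∑ j, v j * (lam j : ℝ) : ℝ) : ℂ)) := by
      intro x lam
      rw [← Complex.exp_add]
      congr 1
      have h1 : (∑ j, (x j + v j) * (lam j : ℝ)) =
          (∑ j, x j * (lam j : ℝ)) + ∑ j, v j * (lam j : ℝ) := by
        rw [← Finset.sum_add_distrib]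
        apply Finset.sum_congr rfl
        intro j _; ring
      rw [h1]
      push_cast
      ring
    have hvanish : ∀ lam ∈ T, c' lam = 0 := by
      intro lam hlam
      have key : Complex.exp (2 * Real.pi * Complex.I *
          ((∑ j, v j * (lam j : ℝ) : ℝ) : ℂ)) = -1 := by
        rcases Finset.mem_insert.mp hlam with rfl | hlam
        · rw [hvμ]
          rw [show (2 * (Real.pi:ℂ) * Complex.I * (((1:ℝ)/2 : ℝ) : ℂ)) = Real.pi * Complex.I by
            push_cast; ring]
          exact Complex.exp_pi_mul_I
        · rw [Finset.mem_singleton.mp hlam]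
          rw [hvμ']
          rw [show (2 * (Real.pi:ℂ) * Complex.I * ((-((1:ℝ)/2) : ℝ) : ℂ))
              = -(Real.pi * Complex.I) by push_cast; ring]
          rw [Complex.exp_neg, Complex.exp_pi_mul_I]
          norm_num
      have h2 : c' lam = c lam * (1 + Complex.exp (2 * Real.pi * Complex.I *
          ((∑ j, v j * (lam j : ℝ) : ℝ) : ℂ))) := rfl
      rw [h2, key]
      ring
    have hg : ∀ x : Fin d → ℝ, g x = ∑ lam ∈ S', c' lam * E x lam := by
      intro x
      have h1 : g x = ∑ lam ∈ S, c' lam * E x lam := by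
        have ha := hf x
        have hb := hf (fun j => x j + v j)
        simp only [hgdef]
        rw [ha, hb, ← Finset.sum_add_distrib]
        apply Finset.sum_congr rfl
        intro lam _
        simp only [hEdef, hc'def]
        rw [hEsplit x lam]
        ring
      rw [h1]
      symm
      apply Finset.sum_subset (Finset.sdiff_subset)
      intro lam hlam hlam'
      have : lam ∈ T := by
        by_contra h
        exact hlam' (Finset.mem_sdiff.mpr ⟨hlam, h⟩)
      rw [hvanish lam this, zero_mul]
    have hgreal : ∀ x : Fin d → ℝ, (g x).im = 0 := by
      intro x
      simp [hgdef, Complex.add_im, hreal]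
    -- D splits
    have hnegN : (∑ j, (((-μ) j : ℤ) : ℝ) ^ 2) = N := by
      rw [hNdef]
      apply Finset.sum_congr rfl
      intro j _
      simp only [Pi.neg_apply, Int.cast_neg]
      ring
    have hDsplit : (∑ lam ∈ S, 1 / (4 * Real.sqrt (∑ j, ((lam j : ℝ)) ^ 2)))
        = (∑ lam ∈ S', 1 / (4 * Real.sqrt (∑ j, ((lam j : ℝ)) ^ 2)))
          + 1 / (2 * Real.sqrt N) := by
      rw [← Finset.sum_sdiff hT, ← hS'def]
      congr 1
      rw [hTdef, Finset.sum_insert (by simpa using hμμ'), Finset.sum_singleton]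
      rw [hnegN, ← hNdef]
      have hsN : 0 < Real.sqrt N := Real.sqrt_pos.mpr hN
      field_simp
      ring
    -- apply IH at shifted center
    obtain ⟨x₀, hx₀d, hx₀z⟩ := ih S' hcard' h0' hsym' c' g
      (fun x => by rw [hg x]) hgreal (fun j => y j - v j / 2)
    -- IVT
    set F : ℝ → ℝ := fun t => (f (fun j => x₀ j + t * v j)).re with hFdef
    have hFcont : Continuous F := by
      have h1 : F = fun t => (∑ lam ∈ S, c lam * Complex.exp (2 * Real.pi * Complex.I *
          ((∑ j, (x₀ j + t * v j) * (lam j : ℝ) : ℝ) : ℂ))).re := by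
        funext t
        rw [hFdef]
        simp only
        rw [hf]
      rw [h1]
      fun_prop
    have hF1 : F 1 = -F 0 := by
      have h1 : f x₀ + f (fun j => x₀ j + v j) = 0 := hx₀z
      have h2 : f (fun j => x₀ j + v j) = -f x₀ := by linear_combination h1
      simp only [hFdef]
      rw [show (fun j => x₀ j + 1 * v j) = fun j => x₀ j + v j by funext j; ring,
        show (fun j => x₀ j + 0 * v j) = x₀ by funext j; ring]
      rw [h2, Complex.neg_re]
    obtain ⟨t, ht, hFt⟩ : ∃ t ∈ Set.uIcc (0:ℝ) 1, F t = 0 := by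
      have hmem : (0:ℝ) ∈ Set.uIcc (F 0) (F 1) := by
        rw [hF1, Set.mem_uIcc]
        rcases le_total (F 0) 0 with h | h
        · left; constructor <;> linarith
        · right; constructor <;> linarith
      have := intermediate_value_uIcc (f := F) (a := 0) (b := 1) hFcont.continuousOn
      obtain ⟨t, ht, hFt⟩ := this hmem
      exact ⟨t, ht, hFt⟩
    have ht' : t ∈ Set.Icc (0:ℝ) 1 := by rwa [Set.uIcc_of_le zero_le_one] at ht
    refine ⟨fun j => x₀ j + t * v j, ?_, ?_⟩
    · -- distance bound
      rw [hDsplit]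
      have heq : ∀ j : Fin d, (x₀ j + t * v j) - y j
          = (x₀ j - (y j - v j / 2)) + (t - 1/2) * v j := by intro j; ring
      rw [show (∑ j, ((fun j => x₀ j + t * v j) j - y j) ^ 2)
          = ∑ j, ((x₀ j - (y j - v j / 2)) + (t - 1/2) * v j) ^ 2 by
        apply Finset.sum_congr rfl; intro j _; rw [heq j]]
      have h1 := sqrt_tri (fun j => x₀ j - (y j - v j / 2)) v (t - 1/2)
      have h2 : |t - 1/2| ≤ 1/2 := by
        rw [abs_le]; constructor <;> [linarith [ht'.1]; linarith [ht'.2]]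
      have h3 : (0:ℝ) ≤ Real.sqrt (∑ j, v j ^ 2) := Real.sqrt_nonneg _
      have h4 : |t - 1/2| * Real.sqrt (∑ j, v j ^ 2) ≤ (1/2) * (1 / (2 * Real.sqrt N)) := by
        rw [hvnorm] at h3 ⊢
        exact mul_le_mul h2 le_rfl h3 (by norm_num)
      calc Real.sqrt (∑ j, ((x₀ j - (y j - v j / 2)) + (t - 1/2) * v j) ^ 2)
          ≤ Real.sqrt (∑ j, (x₀ j - (y j - v j / 2)) ^ 2)
            + |t - 1/2| * Real.sqrt (∑ j, v j ^ 2) := h1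
        _ ≤ (∑ lam ∈ S', 1 / (4 * Real.sqrt (∑ j, ((lam j : ℝ)) ^ 2))) / 2
            + (1/2) * (1 / (2 * Real.sqrt N)) := add_le_add hx₀d h4
        _ = ((∑ lam ∈ S', 1 / (4 * Real.sqrt (∑ j, ((lam j : ℝ)) ^ 2)))
            + 1 / (2 * Real.sqrt N)) / 2 := by ring
    · -- zero
      apply Complex.ext
      · exact hFt
      · rw [hreal]; rfl

open scoped BigOperators

/-- **Theorem 1** (Kozma–Oravecz): a real trigonometric polynomial on the `d`-dimensional
torus with symmetric spectrum `S` not containing `0` has a zero in every closed euclidean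
ball of diameter `D(S) = ∑_{λ ∈ S} 1/(4‖λ‖₂)`. -/
theorem zero_in_ball_of_diam_D
    (d : ℕ) (hd : 1 ≤ d)
    (S : Finset (Fin d → ℤ)) (h0 : (0 : Fin d → ℤ) ∉ S)
    (hsym : ∀ lam ∈ S, -lam ∈ S)
    (c : (Fin d → ℤ) → ℂ) (f : (Fin d → ℝ) → ℂ)
    (hf : ∀ x : Fin d → ℝ, f x = ∑ lam ∈ S,
      c lam * Complex.exp (2 * Real.pi * Complex.I * ((∑ j, x j * (lam j : ℝ) : ℝ) : ℂ)))
    (hreal : ∀ x : Fin d → ℝ, (f x).im = 0)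
    (y : Fin d → ℝ) :
    ∃ x : Fin d → ℝ,
      Real.sqrt (∑ j, (x j - y j) ^ 2) ≤
        (∑ lam ∈ S, 1 / (4 * Real.sqrt (∑ j, ((lam j : ℝ)) ^ 2))) / 2 ∧
      f x = 0 :=
  KO_aux d S.card S le_rfl h0 hsym c f hf hreal y
end

section
/- Let S ⊂ ℤ be a finite set with 0 ∉ S and −S = S, and let f(t) = Σ_{λ∈S} c(λ)·exp(2πiλt) be real-valued for every t ∈ ℝ. Then f has a zero in every closed interval of length D(S) = Σ_{λ∈S} 1/(4·|λ|); equivalently, if f(t) ≠ 0 for every t in an interval I ⊂ ℝ, then the length of I satisfies |I| ≤ Σ_{λ∈S} 1/(4·|λ|). -/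
open scoped BigOperators

lemma KO_key : ∀ n : ℕ, ∀ S : Finset ℤ, S.card ≤ n → (0:ℤ) ∉ S → (∀ l ∈ S, -l ∈ S) →
    ∀ c : ℤ → ℂ, ∀ u v : ℝ, u ≤ v →
    (∀ t ∈ Set.Icc u v,
      0 < (∑ lam ∈ S, c lam * Complex.exp (2 * Real.pi * Complex.I * (lam:ℂ) * (t:ℂ))).re) →
    v - u ≤ ∑ lam ∈ S, 1 / (4 * |(lam:ℝ)|) := by
  intro n
  induction n with
  | zero =>
    intro S hcard _ _ c u v huv hpos
    have hS : S = ∅ := Finset.card_eq_zero.mp (Nat.le_zero.mp hcard)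
    subst hS
    have := hpos u ⟨le_refl u, huv⟩
    simp at this
  | succ n ih =>
    intro S hcard h0 hsym c u v huv hpos
    rcases S.eq_empty_or_nonempty with hS | ⟨a, ha⟩
    · subst hS
      have := hpos u ⟨le_refl u, huv⟩
      simp at this
    · -- get a positive element λ
      have ha0 : a ≠ 0 := fun h => h0 (h ▸ ha)
      obtain ⟨l, hlS, hlpos⟩ : ∃ l, l ∈ S ∧ 0 < l := by
        rcases lt_or_gt_of_ne ha0 with h | h
        · exact ⟨-a, hsym a ha, by omega⟩
        · exact ⟨a, ha, h⟩
      have hlne : -l ≠ l := by omega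
      have hmlS : -l ∈ S.erase l := Finset.mem_erase.mpr ⟨hlne, hsym l hlS⟩
      set S' : Finset ℤ := (S.erase l).erase (-l) with hS'
      have hlR : (0:ℝ) < (l:ℝ) := by exact_mod_cast hlpos
      set s : ℝ := 1 / (2 * (l:ℝ)) with hsdef
      have hs : 0 < s := by positivity
      -- sum identity for D
      have hD : ∑ lam ∈ S, 1 / (4 * |(lam:ℝ)|)
          = (∑ lam ∈ S', 1 / (4 * |(lam:ℝ)|)) + 1/(2*(l:ℝ)) := by
        rw [← Finset.add_sum_erase _ _ hlS, ← Finset.add_sum_erase _ _ hmlS]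
        have : |(l:ℝ)| = (l:ℝ) := abs_of_pos hlR
        push_cast
        rw [abs_neg, this]
        ring
      have hD' : (0:ℝ) ≤ ∑ lam ∈ S', 1 / (4 * |(lam:ℝ)|) :=
        Finset.sum_nonneg (fun i _ => by positivity)
      by_cases hcase : v - u ≤ s
      · calc v - u ≤ s := hcase
          _ ≤ (∑ lam ∈ S', 1 / (4 * |(lam:ℝ)|)) + 1/(2*(l:ℝ)) := by
              rw [hsdef]; linarith
          _ = _ := hD.symm
      · push_neg at hcase
        set v' : ℝ := v - s with hv'
        have huv' : u ≤ v' := by rw [hv']; linarith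
        -- properties of S'
        have hcard' : S'.card ≤ n := by
          have h1 : S'.card = (S.erase l).card - 1 := Finset.card_erase_of_mem hmlS
          have h2 : (S.erase l).card = S.card - 1 := Finset.card_erase_of_mem hlS
          have h3 : 0 < S.card := Finset.card_pos.mpr ⟨a, ha⟩
          omega
        have h0' : (0:ℤ) ∉ S' := fun h =>
          h0 (Finset.mem_of_mem_erase (Finset.mem_of_mem_erase h))
        have hsym' : ∀ m ∈ S', -m ∈ S' := by
          intro m hm
          simp only [hS', Finset.mem_erase] at hm ⊢
          obtain ⟨h1, h2, h3⟩ := hm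
          exact ⟨by omega, by omega, hsym m h3⟩
        -- key exponential facts
        have hlC : (l:ℂ) ≠ 0 := by exact_mod_cast hlpos.ne'
        have hsC : ((s:ℝ):ℂ) = 1 / (2 * (l:ℂ)) := by rw [hsdef]; push_cast; ring
        have hexpl : Complex.exp (2 * Real.pi * Complex.I * (l:ℂ) * ((s:ℝ):ℂ)) = -1 := by
          rw [hsC]
          have : 2 * (Real.pi:ℂ) * Complex.I * (l:ℂ) * (1 / (2 * (l:ℂ)))
              = (Real.pi:ℂ) * Complex.I := by field_simp
          rw [this, Complex.exp_pi_mul_I]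
        have hexpml : Complex.exp (2 * Real.pi * Complex.I * ((-l : ℤ):ℂ) * ((s:ℝ):ℂ)) = -1 := by
          rw [hsC]
          have : 2 * (Real.pi:ℂ) * Complex.I * ((-l:ℤ):ℂ) * (1 / (2 * (l:ℂ)))
              = -((Real.pi:ℂ) * Complex.I) := by push_cast; field_simp
          rw [this, Complex.exp_neg, Complex.exp_pi_mul_I]
          norm_num
        set c' : ℤ → ℂ := fun m =>
          c m * (1 + Complex.exp (2 * Real.pi * Complex.I * (m:ℂ) * ((s:ℝ):ℂ))) with hc'
        -- positivity of new sum
        have hpos' : ∀ t ∈ Set.Icc u v',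
            0 < (∑ lam ∈ S', c' lam * Complex.exp (2 * Real.pi * Complex.I * (lam:ℂ) * (t:ℂ))).re := by
          intro t ht
          obtain ⟨ht1, ht2⟩ := ht
          have htv : t ∈ Set.Icc u v := ⟨ht1, by rw [hv'] at ht2; linarith⟩
          have htsv : t + s ∈ Set.Icc u v := ⟨by linarith, by rw [hv'] at ht2; linarith⟩
          have hsum : ∑ lam ∈ S', c' lam * Complex.exp (2 * Real.pi * Complex.I * (lam:ℂ) * (t:ℂ))
              = (∑ lam ∈ S, c lam * Complex.exp (2 * Real.pi * Complex.I * (lam:ℂ) * (t:ℂ)))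
              + ∑ lam ∈ S, c lam * Complex.exp (2 * Real.pi * Complex.I * (lam:ℂ) * ((t+s:ℝ):ℂ)) := by
            have hcl : c' l = 0 := by
              rw [hc']; simp only; rw [hexpl]; ring
            have hcml : c' (-l) = 0 := by
              rw [hc']; simp only; push_cast at hexpml ⊢; rw [hexpml]; ring
            have hterm : ∀ m ∈ S,
                c m * Complex.exp (2 * Real.pi * Complex.I * (m:ℂ) * (t:ℂ))
                + c m * Complex.exp (2 * Real.pi * Complex.I * (m:ℂ) * ((t+s:ℝ):ℂ))
                = c' m * Complex.exp (2 * Real.pi * Complex.I * (m:ℂ) * (t:ℂ)) := by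
              intro m _
              have he : Complex.exp (2 * Real.pi * Complex.I * (m:ℂ) * ((t+s:ℝ):ℂ))
                  = Complex.exp (2 * Real.pi * Complex.I * (m:ℂ) * (t:ℂ))
                    * Complex.exp (2 * Real.pi * Complex.I * (m:ℂ) * ((s:ℝ):ℂ)) := by
                rw [← Complex.exp_add]; congr 1; push_cast; ring
              rw [he, hc']; ring
            symm
            rw [← Finset.sum_add_distrib, Finset.sum_congr rfl hterm,
              ← Finset.add_sum_erase _ _ hlS,
              ← Finset.add_sum_erase _ (fun m => c' m * Complex.exp (2 * Real.pi * Complex.I * (m:ℂ) * (t:ℂ))) hmlS,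
              hcl, hcml]
            ring
          rw [hsum]
          rw [Complex.add_re]
          exact add_pos (hpos t htv) (hpos (t+s) htsv)
        have := ih S' hcard' h0' hsym' c' u v' huv' hpos'
        rw [hD, hv'] at *
        rw [hsdef] at *
        linarith

/-- One-dimensional case of **Theorem 1** (Kozma–Oravecz): if a real trigonometric
polynomial with symmetric spectrum `S ⊆ ℤ \ {0}` has no zero on a closed interval `[u, v]`,
then `v - u ≤ D(S) = ∑_{λ ∈ S} 1/(4|λ|)`; equivalently `f` has a zero in every closed
interval of length `D(S)`. -/
theorem length_le_D_of_no_zero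
    (S : Finset ℤ) (h0 : (0 : ℤ) ∉ S) (hsym : ∀ lam ∈ S, -lam ∈ S)
    (c : ℤ → ℂ) (f : ℝ → ℂ)
    (hf : ∀ t : ℝ, f t = ∑ lam ∈ S,
      c lam * Complex.exp (2 * Real.pi * Complex.I * (lam : ℂ) * (t : ℂ)))
    (hreal : ∀ t : ℝ, (f t).im = 0)
    (u v : ℝ) (huv : u ≤ v)
    (hne : ∀ t ∈ Set.Icc u v, f t ≠ 0) :
    v - u ≤ ∑ lam ∈ S, 1 / (4 * |(lam : ℝ)|) := by
  set r : ℝ → ℝ := fun t => (f t).re with hr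
  have hcont : ContinuousOn r (Set.Icc u v) := by
    have : Continuous r := by
      have : Continuous fun t : ℝ => (∑ lam ∈ S,
          c lam * Complex.exp (2 * Real.pi * Complex.I * (lam : ℂ) * (t : ℂ))).re := by
        fun_prop
      simpa [hr, funext hf] using this
    exact this.continuousOn
  have hrne : ∀ t ∈ Set.Icc u v, r t ≠ 0 := by
    intro t ht h
    exact hne t ht (Complex.ext h (hreal t))
  -- constant sign
  have hsign : (∀ t ∈ Set.Icc u v, 0 < r t) ∨ (∀ t ∈ Set.Icc u v, r t < 0) := by
    have hu : u ∈ Set.Icc u v := ⟨le_refl u, huv⟩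
    rcases lt_or_gt_of_ne (hrne u hu) with hneg | hposu
    · right
      intro t ht
      by_contra h
      push_neg at h
      have h' : 0 < r t := lt_of_le_of_ne h (Ne.symm (hrne t ht))
      have hsub : Set.Icc u t ⊆ Set.Icc u v := Set.Icc_subset_Icc le_rfl ht.2
      have := intermediate_value_Icc ht.1 (hcont.mono hsub)
      obtain ⟨x, hx, hx0⟩ := this ⟨le_of_lt hneg, le_of_lt h'⟩
      exact hrne x (hsub hx) hx0
    · left
      intro t ht
      by_contra h
      push_neg at h
      have h' : r t < 0 := lt_of_le_of_ne h (hrne t ht)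
      have hsub : Set.Icc u t ⊆ Set.Icc u v := Set.Icc_subset_Icc le_rfl ht.2
      have := intermediate_value_Icc' ht.1 (hcont.mono hsub)
      obtain ⟨x, hx, hx0⟩ := this ⟨le_of_lt h', le_of_lt hposu⟩
      exact hrne x (hsub hx) hx0
  rcases hsign with hpos | hneg
  · exact KO_key S.card S le_rfl h0 hsym c u v huv
      (fun t ht => by have := hpos t ht; simp only [hr, hf t] at this; exact this)
  · refine KO_key S.card S le_rfl h0 hsym (fun m => -c m) u v huv (fun t ht => ?_)
    have h1 := hneg t ht
    simp only [hr, hf t] at h1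
    have : ∑ lam ∈ S, -c lam * Complex.exp (2 * Real.pi * Complex.I * (lam:ℂ) * (t:ℂ))
        = -∑ lam ∈ S, c lam * Complex.exp (2 * Real.pi * Complex.I * (lam:ℂ) * (t:ℂ)) := by
      rw [← Finset.sum_neg_distrib]
      exact Finset.sum_congr rfl (fun m _ => by ring)
    rw [this, Complex.neg_re]
    linarith
end

section
/- Let d ≥ 1 and let S ⊂ ℤ^d be a finite set with 0 ∉ S and −S = S. Let f(x) = Σ_{λ∈S} c(λ)·exp(2πi⟨x,λ⟩) be real-valued for every x ∈ ℝ^d. Then f has a zero in every closed axis-parallel cube of side length L(S), where L(S) = Σ_{λ∈S} ‖λ‖_∞/(4·‖λ‖₂²); that is, for every y ∈ ℝ^d there exists x with |x_j − y_j| ≤ L(S)/2 for all j and f(x) = 0. -/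
open scoped BigOperators

noncomputable section KOaux

namespace KOaux

variable {d : ℕ}

/-- the exponential character -/
def e (t : ℝ) : ℂ := Complex.exp (2 * Real.pi * Complex.I * (t : ℂ))

lemma e_add (a b : ℝ) : e (a + b) = e a * e b := by
  unfold e
  rw [← Complex.exp_add]
  push_cast
  ring_nf

lemma e_sum {ι : Type*} (E : Finset ι) (w : ι → ℝ) :
    e (∑ l ∈ E, w l) = ∏ l ∈ E, e (w l) := by
  classical
  induction E using Finset.cons_induction with
  | empty => simp [e]
  | cons a s ha ih => rw [Finset.sum_cons, Finset.prod_cons, e_add, ih]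

lemma e_half : e (1/2) = -1 := by
  unfold e
  rw [show ((2:ℂ) * Real.pi * Complex.I * ((1/2 : ℝ) : ℂ)) = Real.pi * Complex.I by
    push_cast; ring]
  exact Complex.exp_pi_mul_I

lemma e_neg_half : e (-(1/2)) = -1 := by
  have h := e_add (1/2) (-(1/2))
  simp only [add_neg_cancel] at h
  have h0 : e 0 = 1 := by simp [e]
  rw [h0, e_half] at h
  linear_combination h

/-- squared euclidean norm -/
def nn (l : Fin d → ℤ) : ℝ := ∑ i, ((l i : ℝ))^2

def v (l : Fin d → ℤ) : Fin d → ℝ := fun j => (l j : ℝ) / (2 * nn l)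

def dot (x : Fin d → ℝ) (m : Fin d → ℤ) : ℝ := ∑ j, x j * (m j : ℝ)

lemma nn_nonneg (l : Fin d → ℤ) : 0 ≤ nn l :=
  Finset.sum_nonneg fun i _ => sq_nonneg _

lemma nn_pos {l : Fin d → ℤ} (hl : l ≠ 0) : 0 < nn l := by
  rcases Function.ne_iff.1 hl with ⟨j, hj⟩
  refine Finset.sum_pos' (fun i _ => sq_nonneg _) ⟨j, Finset.mem_univ _, ?_⟩
  have : ((l j : ℝ)) ≠ 0 := by exact_mod_cast hj
  positivity

lemma nn_neg_eq (l : Fin d → ℤ) : nn (-l) = nn l := by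
  unfold nn
  refine Finset.sum_congr rfl fun i _ => ?_
  simp only [Pi.neg_apply]
  push_cast
  ring

lemma dot_v (l m : Fin d → ℤ) :
    dot (v l) m = (∑ j, (l j : ℝ) * (m j : ℝ)) / (2 * nn l) := by
  unfold dot v
  rw [Finset.sum_div]
  exact Finset.sum_congr rfl fun j _ => by ring

lemma dot_v_self {l : Fin d → ℤ} (hl : l ≠ 0) : dot (v l) l = 1/2 := by
  have h : (∑ j, (l j : ℝ) * (l j : ℝ)) = nn l := by
    unfold nn; exact Finset.sum_congr rfl fun j _ => (sq ((l j : ℝ))).symm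
  rw [dot_v, h]
  field_simp [(nn_pos hl).ne']

lemma dot_v_neg_self {l : Fin d → ℤ} (hl : l ≠ 0) : dot (v (-l)) l = -(1/2) := by
  have h : (∑ j, ((((-l) j : ℤ)) : ℝ) * (l j : ℝ)) = -nn l := by
    unfold nn
    rw [← Finset.sum_neg_distrib]
    refine Finset.sum_congr rfl fun j _ => ?_
    simp only [Pi.neg_apply]
    push_cast
    ring
  rw [dot_v, h, nn_neg_eq]
  field_simp [(nn_pos hl).ne']

lemma lex_pos_iff (l : Fin d → ℤ) :
    0 < toLex l ↔ ∃ i, (∀ j, j < i → (0:ℤ) = l j) ∧ 0 < l i := Iff.rfl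

lemma lex_pos_neg_of {m : Fin d → ℤ} (hm : m ≠ 0) (h : ¬ 0 < toLex m) :
    0 < toLex (-m) := by
  classical
  have hex : ∃ i, m i ≠ 0 := Function.ne_iff.1 hm
  obtain ⟨i0, hi0⟩ := hex
  obtain ⟨i, himem, hmin⟩ := Finset.exists_min_image
    (Finset.univ.filter fun i => m i ≠ 0) id ⟨i0, by simp [hi0]⟩
  have hine : m i ≠ 0 := (Finset.mem_filter.1 himem).2
  have hzero : ∀ j, j < i → m j = 0 := by
    intro j hj
    by_contra hjne
    exact absurd (hmin j (Finset.mem_filter.2 ⟨Finset.mem_univ _, hjne⟩)) (by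
      simpa using hj.not_ge)
  rcases lt_trichotomy (m i) 0 with hneg | hz | hpos
  · refine (lex_pos_iff (-m)).2 ⟨i, fun j hj => ?_, ?_⟩
    · simp [Pi.neg_apply, hzero j hj]
    · simp only [Pi.neg_apply]
      omega
  · exact absurd hz hine
  · exact absurd ((lex_pos_iff m).2 ⟨i, fun j hj => (hzero j hj).symm, hpos⟩) h

lemma not_lex_pos_neg {a : Fin d → ℤ} (h : 0 < toLex a) : ¬ 0 < toLex (-a) := by
  intro h'
  obtain ⟨i, hi, hip⟩ := (lex_pos_iff a).1 h
  obtain ⟨i', hi', hip'⟩ := (lex_pos_iff (-a)).1 h'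
  simp only [Pi.neg_apply] at hip' hi'
  rcases lt_trichotomy i i' with hlt | rfl | hlt
  · have := hi' i hlt
    omega
  · omega
  · have := hi i' hlt
    omega

end KOaux

end KOaux

open KOaux in
/-- Cube version of **Theorem 1** (Kozma–Oravecz): a real trigonometric polynomial on the
`d`-dimensional torus with symmetric spectrum `S` not containing `0` has a zero in every
closed axis-parallel cube of side length `L(S) = ∑_{λ ∈ S} ‖λ‖_∞/(4‖λ‖₂²)`. -/
theorem zero_in_cube_of_side_L
    (d : ℕ) (hd : 1 ≤ d)
    (S : Finset (Fin d → ℤ)) (h0 : (0 : Fin d → ℤ) ∉ S)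
    (hsym : ∀ lam ∈ S, -lam ∈ S)
    (c : (Fin d → ℤ) → ℂ) (f : (Fin d → ℝ) → ℂ)
    (hf : ∀ x : Fin d → ℝ, f x = ∑ lam ∈ S,
      c lam * Complex.exp (2 * Real.pi * Complex.I * ((∑ j, x j * (lam j : ℝ) : ℝ) : ℂ)))
    (hreal : ∀ x : Fin d → ℝ, (f x).im = 0)
    (y : Fin d → ℝ) :
    ∃ x : Fin d → ℝ,
      (∀ j, |x j - y j| ≤
        (∑ lam ∈ S, (⨆ i, |(lam i : ℝ)|) / (4 * ∑ i, ((lam i : ℝ)) ^ 2)) / 2) ∧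
      f x = 0 := by
  classical
  set ms : (Fin d → ℤ) → ℝ := fun l => ⨆ i, |(l i : ℝ)| with hms
  set L : ℝ := ∑ lam ∈ S, ms lam / (4 * nn lam) with hLdef
  have hgoalL : (∑ lam ∈ S, (⨆ i, |(lam i : ℝ)|) / (4 * ∑ i, ((lam i : ℝ)) ^ 2)) = L := rfl
  rw [hgoalL]
  have hS0 : ∀ l ∈ S, l ≠ 0 := fun l hl h => h0 (h ▸ hl)
  set T : Finset (Fin d → ℤ) := S.filter (fun l => 0 < toLex l) with hTdef
  have hTS : T ⊆ S := Finset.filter_subset _ _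
  -- the representative of the pair {m, -m}
  set lam0 : (Fin d → ℤ) → (Fin d → ℤ) := fun m => if 0 < toLex m then m else -m with hlam0
  have hlam0T : ∀ m ∈ S, lam0 m ∈ T := by
    intro m hm
    by_cases h : 0 < toLex m
    · simp only [hlam0, if_pos h]
      exact Finset.mem_filter.2 ⟨hm, h⟩
    · simp only [hlam0, if_neg h]
      exact Finset.mem_filter.2 ⟨hsym m hm, lex_pos_neg_of (hS0 m hm) h⟩
  have hdotlam0 : ∀ m ∈ S, dot (v (lam0 m)) m = 1/2 ∨ dot (v (lam0 m)) m = -(1/2) := by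
    intro m hm
    by_cases h : 0 < toLex m
    · left; simp only [hlam0, if_pos h]; exact dot_v_self (hS0 m hm)
    · right; simp only [hlam0, if_neg h]; exact dot_v_neg_self (hS0 m hm)
  -- base point and vertex points
  set x0 : Fin d → ℝ := fun j => y j - (∑ l ∈ T, v l j) / 2 with hx0
  set p : Finset (Fin d → ℤ) → (Fin d → ℝ) := fun E j => x0 j + ∑ l ∈ E, v l j with hp
  -- the length bound per coordinate
  have hterm_nonneg : ∀ l ∈ S, 0 ≤ ms l / (4 * nn l) := by
    intro l hl
    have h1 : 0 ≤ ms l := Real.iSup_nonneg fun i => abs_nonneg _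
    have h2 : 0 < nn l := nn_pos (hS0 l hl)
    positivity
  have hms_neg : ∀ l : Fin d → ℤ, ms (-l) = ms l := by
    intro l
    simp only [hms]
    congr 1
    ext i
    simp [Pi.neg_apply]
  have hLsplit : L = 2 * ∑ l ∈ T, ms l / (4 * nn l) := by
    rw [hLdef, ← Finset.sum_filter_add_sum_filter_not S (fun l => 0 < toLex l)]
    have h2 : ∑ l ∈ S.filter (fun l => ¬ 0 < toLex l), ms l / (4 * nn l)
        = ∑ l ∈ T, ms l / (4 * nn l) := by
      refine Finset.sum_nbij' (fun l => -l) (fun l => -l) ?_ ?_ ?_ ?_ ?_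
      · intro a ha
        rcases Finset.mem_filter.1 ha with ⟨haS, hax⟩
        refine Finset.mem_filter.2 ⟨hsym a haS, ?_⟩
        show 0 < toLex (-a)
        exact lex_pos_neg_of (hS0 a haS) hax
      · intro a ha
        rcases Finset.mem_filter.1 ha with ⟨haS, hax⟩
        refine Finset.mem_filter.2 ⟨hsym a haS, ?_⟩
        show ¬ 0 < toLex (-a)
        exact not_lex_pos_neg hax
      · intro a _; simp
      · intro a _; simp
      · intro a _; rw [hms_neg, nn_neg_eq]
    rw [h2]
    ring
  have hW : ∀ j, (∑ l ∈ T, |v l j|) ≤ L := by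
    intro j
    rw [hLsplit, Finset.mul_sum]
    refine Finset.sum_le_sum fun l hl => ?_
    have hl0 := hS0 l (hTS hl)
    have hnl := nn_pos hl0
    have habs : |v l j| = |(l j : ℝ)| / (2 * nn l) := by
      simp only [v, abs_div]
      congr 1
      rw [abs_of_pos (by positivity)]
    have hle : |(l j : ℝ)| ≤ ms l := by
      show |(l j : ℝ)| ≤ ⨆ i, |(l i : ℝ)|
      exact le_ciSup (f := fun i => |(l i : ℝ)|) (Finite.bddAbove_range _) j
    rw [habs]
    rw [show 2 * (ms l / (4 * nn l)) = ms l / (2 * nn l) by field_simp [hnl.ne']; ring]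
    gcongr
  -- vertices lie in the cube
  have hpmem : ∀ E ∈ T.powerset, ∀ j, |p E j - y j| ≤ L / 2 := by
    intro E hE j
    have hEsub : E ⊆ T := Finset.mem_powerset.1 hE
    have hrw : p E j - y j = ∑ l ∈ T, ((if l ∈ E then v l j else 0) - v l j / 2) := by
      rw [Finset.sum_sub_distrib, Finset.sum_ite_mem,
        Finset.inter_eq_right.2 hEsub, ← Finset.sum_div]
      simp only [hp, hx0]
      ring
    rw [hrw]
    calc |∑ l ∈ T, ((if l ∈ E then v l j else 0) - v l j / 2)|
        ≤ ∑ l ∈ T, |(if l ∈ E then v l j else 0) - v l j / 2| :=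
          Finset.abs_sum_le_sum_abs _ _
      _ ≤ ∑ l ∈ T, |v l j| / 2 := by
          refine Finset.sum_le_sum fun l _ => ?_
          split
          · rw [show v l j - v l j / 2 = v l j / 2 by ring, abs_div, abs_two]
          · rw [zero_sub, abs_neg, abs_div, abs_two]
      _ = (∑ l ∈ T, |v l j|) / 2 := by rw [Finset.sum_div]
      _ ≤ L / 2 := by linarith [hW j]
  -- the sum over vertices vanishes
  have hdot_p : ∀ E (m : Fin d → ℤ), dot (p E) m = dot x0 m + ∑ l ∈ E, dot (v l) m := by
    intro E m
    unfold dot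
    simp only [hp]
    have hmul : ∀ x, (x0 x + ∑ l ∈ E, v l x) * (m x : ℝ)
        = x0 x * (m x : ℝ) + ∑ l ∈ E, v l x * (m x : ℝ) := fun x => by
      rw [add_mul, Finset.sum_mul]
    simp_rw [hmul, Finset.sum_add_distrib]
    congr 1
    exact Finset.sum_comm
  -- the sum of `f` over the vertices vanishes
  have hA : ∑ E ∈ T.powerset, f (p E) = 0 := by
    have h1 : ∀ E ∈ T.powerset, f (p E)
        = ∑ m ∈ S, (c m * e (dot x0 m)) * ∏ l ∈ E, e (dot (v l) m) := by
      intro E _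
      rw [hf]
      refine Finset.sum_congr rfl fun m hm => ?_
      have hrfl : Complex.exp (2 * Real.pi * Complex.I *
          ((∑ j, p E j * (m j : ℝ) : ℝ) : ℂ)) = e (dot (p E) m) := rfl
      rw [hrfl, hdot_p E m, e_add, e_sum]
      ring
    rw [Finset.sum_congr rfl h1, Finset.sum_comm]
    refine Finset.sum_eq_zero fun m hm => ?_
    rw [← Finset.mul_sum]
    have hps : ∑ E ∈ T.powerset, ∏ l ∈ E, e (dot (v l) m)
        = ∏ l ∈ T, (e (dot (v l) m) + 1) := by
      rw [Finset.prod_add]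
      refine (Finset.sum_congr rfl fun E _ => by simp).symm
    have hzero : ∏ l ∈ T, (e (dot (v l) m) + 1) = 0 := by
      refine Finset.prod_eq_zero (hlam0T m hm) ?_
      rcases hdotlam0 m hm with h | h <;> rw [h]
      · rw [e_half]; ring
      · rw [e_neg_half]; ring
    rw [hps, hzero, mul_zero]
  have hre0 : ∑ E ∈ T.powerset, (f (p E)).re = 0 := by
    rw [← Complex.re_sum, hA, Complex.zero_re]
  have hEneg : ∃ E ∈ T.powerset, (f (p E)).re ≤ 0 := by
    by_contra hcon
    push_neg at hcon
    have hpos := Finset.sum_pos (fun E hE => hcon E hE) ⟨∅, Finset.empty_mem_powerset T⟩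
    rw [hre0] at hpos
    exact lt_irrefl 0 hpos
  have hEpos : ∃ E ∈ T.powerset, 0 ≤ (f (p E)).re := by
    by_contra hcon
    push_neg at hcon
    have hneg : ∑ E ∈ T.powerset, (f (p E)).re < 0 :=
      Finset.sum_neg (fun E hE => hcon E hE) ⟨∅, Finset.empty_mem_powerset T⟩
    rw [hre0] at hneg
    exact lt_irrefl 0 hneg
  -- the cube
  set cube : Set (Fin d → ℝ) := Set.univ.pi fun j => Set.Icc (y j - L/2) (y j + L/2)
    with hcube
  have hconv : Convex ℝ cube := convex_pi fun i _ => convex_Icc _ _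
  have hmemiff : ∀ x : Fin d → ℝ, x ∈ cube ↔ ∀ j, |x j - y j| ≤ L/2 := by
    intro x
    simp only [hcube, Set.mem_pi, Set.mem_univ, Set.mem_Icc, forall_const, abs_le,
      forall_true_left]
    constructor
    · intro h j; have := h j; constructor <;> linarith [this.1, this.2]
    · intro h j; have := h j; constructor <;> linarith [this.1, this.2]
  have hcontf : Continuous f := by
    rw [funext hf]
    refine continuous_finset_sum _ fun m _ => continuous_const.mul ?_
    refine Complex.continuous_exp.comp ?_
    refine continuous_const.mul ?_
    refine Complex.continuous_ofReal.comp ?_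
    exact continuous_finset_sum _ fun j _ => (continuous_apply j).mul continuous_const
  obtain ⟨E1, hE1, hE1le⟩ := hEneg
  obtain ⟨E2, hE2, hE2ge⟩ := hEpos
  obtain ⟨x, hxcube, hxz⟩ := (hconv.isPreconnected).intermediate_value₂
    ((hmemiff (p E1)).2 (hpmem E1 hE1)) ((hmemiff (p E2)).2 (hpmem E2 hE2))
    ((Complex.continuous_re.comp hcontf).continuousOn) continuousOn_const hE1le hE2ge
  refine ⟨x, (hmemiff x).1 hxcube, ?_⟩
  exact Complex.ext_iff.2 ⟨by simpa using hxz, by simpa using hreal x⟩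
end

section
/- Let N ≥ 1 and K ≥ 0 be integers and let S = {λ ∈ ℤ : N ≤ |λ| ≤ N+K}. Then the supremum, over all real trigonometric polynomials f with spectrum contained in S and over all intervals I ⊆ [0,1] on which f has no zero, of the length |I|, equals (K+1)/(2N+K). -/
open scoped BigOperators

open Complex Set
open scoped Real

noncomputable section

namespace KO


/-- sign constancy of a nonvanishing continuous function on an interval -/
lemma sign_const (u v : ℝ) (g : ℝ → ℝ) (hg : ContinuousOn g (Set.Icc u v))
    (h0 : ∀ t ∈ Set.Icc u v, g t ≠ 0) :
    (∀ t ∈ Set.Icc u v, 0 < g t) ∨ (∀ t ∈ Set.Icc u v, g t < 0) := by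
  by_contra hcon
  push_neg at hcon
  obtain ⟨⟨t₁, ht₁, h₁⟩, ⟨t₂, ht₂, h₂⟩⟩ := hcon
  have h₁' : g t₁ < 0 := lt_of_le_of_ne h₁ (h0 t₁ ht₁)
  have h₂' : 0 < g t₂ := lt_of_le_of_ne h₂ (Ne.symm (h0 t₂ ht₂))
  have hsub : Set.uIcc t₁ t₂ ⊆ Set.Icc u v := Set.uIcc_subset_Icc ht₁ ht₂
  have : (0:ℝ) ∈ g '' Set.uIcc t₁ t₂ := by
    apply intermediate_value_uIcc (hg.mono hsub)
    exact Set.mem_uIcc.2 (Or.inl ⟨le_of_lt h₁', le_of_lt h₂'⟩)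
  obtain ⟨t, ht, hgt⟩ := this
  exact h0 t (hsub ht) hgt

/-- if cos (q t) > 0 on an interval then q increases by less than π -/
lemma cos_pos_imp (u v : ℝ) (huv : u ≤ v) (q : ℝ → ℝ)
    (hq : ContinuousOn q (Set.Icc u v))
    (hpos : ∀ t ∈ Set.Icc u v, 0 < Real.cos (q t)) :
    q v - q u < π := by
  by_contra hcon
  push_neg at hcon
  set m : ℤ := ⌈(q u - π/2)/π⌉ with hm
  have hπ : (0:ℝ) < π := Real.pi_pos
  have hx1 : q u ≤ π/2 + m * π := by
    have := Int.le_ceil ((q u - π/2)/π)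
    rw [div_le_iff₀ hπ] at this
    linarith
  have hx2 : π/2 + m * π < q u + π := by
    have h := Int.ceil_lt_add_one ((q u - π/2)/π)
    have h2 : ((m:ℝ) - 1) < (q u - π/2)/π := by
      have : (m:ℝ) < (q u - π/2)/π + 1 := h
      linarith
    have h3 := (lt_div_iff₀ hπ).mp h2
    nlinarith
  have hx3 : π/2 + m*π ≤ q v := by linarith
  have hmem : (π/2 + m*π) ∈ Set.Icc (q u) (q v) := ⟨hx1, hx3⟩
  obtain ⟨t, ht, hqt⟩ := intermediate_value_Icc huv hq hmem
  have : Real.cos (q t) = 0 := by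
    rw [hqt]
    rw [Real.cos_eq_zero_iff]
    exact ⟨m, by ring⟩
  linarith [hpos t ht]

/-- Re (1/(1-ζ)) ≥ 1/2 when |ζ| ≤ 1 (and 1 - ζ ≠ 0). -/
lemma re_inv_one_sub (ζ : ℂ) (hζ : ‖ζ‖ ≤ 1) (hne : (1:ℂ) - ζ ≠ 0) :
    (1/2 : ℝ) ≤ ((1 - ζ)⁻¹).re := by
  have hsq : Complex.normSq ζ ≤ 1 := by
    have := Complex.sq_norm ζ
    nlinarith [norm_nonneg ζ]
  have hnsq : 0 < Complex.normSq (1 - ζ) := Complex.normSq_pos.2 hne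
  rw [Complex.inv_re]
  rw [le_div_iff₀ hnsq]
  have h1 : (1 - ζ).re = 1 - ζ.re := by simp
  have h2 : Complex.normSq (1 - ζ) = 1 - 2*ζ.re + Complex.normSq ζ := by
    simp [Complex.normSq_apply, Complex.sub_re, Complex.sub_im]
    ring
  rw [h1, h2]
  nlinarith

/-- Phase decomposition for a single factor E t - w on [u,v]. -/
lemma root_phase (u v : ℝ) (hu : 0 ≤ u) (huv : u ≤ v) (hv : v ≤ 1) (w : ℂ)
    (hw : ∀ t ∈ Set.Icc u v, Complex.exp (2*(π:ℂ)*I*(t:ℂ)) ≠ w) :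
    ∃ (γ : ℂ) (ρ θ : ℝ → ℝ), γ ≠ 0 ∧ ContinuousOn θ (Set.Icc u v) ∧
      (∀ t ∈ Set.Icc u v,
        Complex.exp (2*(π:ℂ)*I*(t:ℂ)) - w = γ * Complex.exp ((ρ t : ℂ) + (θ t : ℂ) * I)) ∧
      π * (v - u) - π ≤ θ v - θ u := by
  have hπ : (0:ℝ) < π := Real.pi_pos
  have hvu : 0 ≤ v - u := by linarith
  rcases lt_trichotomy ‖w‖ 1 with hlt | heq | hgt
  · -- |w| < 1
    set x : ℝ → ℂ := fun t => 1 - w * Complex.exp (-(2*(π:ℂ)*I*(t:ℂ))) with hxdef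
    have habs1 : ∀ t : ℝ, ‖Complex.exp (-(2*(π:ℂ)*I*(t:ℂ)))‖ = 1 := by
      intro t
      have h : -(2*(π:ℂ)*I*(t:ℂ)) = ((-(2*π*t):ℝ):ℂ) * I := by push_cast; ring
      rw [h, Complex.norm_exp_ofReal_mul_I]
    have hxre : ∀ t : ℝ, 0 < (x t).re := by
      intro t
      have h1 : ‖w * Complex.exp (-(2*(π:ℂ)*I*(t:ℂ)))‖ < 1 := by
        rw [norm_mul, habs1, mul_one]; exact hlt
      have h2 := Complex.abs_re_le_norm (w * Complex.exp (-(2*(π:ℂ)*I*(t:ℂ))))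
      have h3 : (x t).re = 1 - (w * Complex.exp (-(2*(π:ℂ)*I*(t:ℂ)))).re := by
        simp [hxdef]
      rw [h3]
      have := le_abs_self (w * Complex.exp (-(2*(π:ℂ)*I*(t:ℂ)))).re
      linarith
    have hxne : ∀ t : ℝ, x t ≠ 0 := by
      intro t h
      have := hxre t
      rw [h] at this; simp at this
    refine ⟨1, fun t => (Complex.log (x t)).re, fun t => 2*π*t + (Complex.log (x t)).im,
      one_ne_zero, ?_, ?_, ?_⟩
    · have hxc : Continuous x := by
        apply continuous_const.sub
        exact continuous_const.mul (Complex.continuous_exp.comp (by continuity))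
      apply ContinuousOn.add (by fun_prop)
      intro t _
      apply ContinuousAt.continuousWithinAt
      have : ContinuousAt (fun z : ℂ => (Complex.log z).im) (x t) := by
        simp only [Complex.log_im]
        exact Complex.continuousAt_arg (Complex.mem_slitPlane_iff.2 (Or.inl (hxre t)))
      exact this.comp hxc.continuousAt
    · intro t _
      have hEx : Complex.exp (2*(π:ℂ)*I*(t:ℂ)) * Complex.exp (-(2*(π:ℂ)*I*(t:ℂ))) = 1 := by
        rw [← Complex.exp_add]; simp
      have h1 : Complex.exp (2*(π:ℂ)*I*(t:ℂ)) * x t = Complex.exp (2*(π:ℂ)*I*(t:ℂ)) - w := by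
        have : Complex.exp (2*(π:ℂ)*I*(t:ℂ)) * x t
            = Complex.exp (2*(π:ℂ)*I*(t:ℂ))
              - w * (Complex.exp (2*(π:ℂ)*I*(t:ℂ)) * Complex.exp (-(2*(π:ℂ)*I*(t:ℂ)))) := by
          simp only [hxdef]; ring
        rw [this, hEx, mul_one]
      rw [← h1, one_mul]
      have h2 : x t = Complex.exp (Complex.log (x t)) := (Complex.exp_log (hxne t)).symm
      conv_lhs => rw [h2]
      rw [← Complex.exp_add]
      congr 1
      rw [← Complex.re_add_im (Complex.log (x t))]
      push_cast
      ring
    · have ha : ∀ t : ℝ, |(Complex.log (x t)).im| < π/2 := by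
        intro t
        rw [Complex.log_im]
        exact Complex.abs_arg_lt_pi_div_two_iff.2 (Or.inl (hxre t))
      have h1 := abs_lt.mp (ha v)
      have h2 := abs_lt.mp (ha u)
      have h3 : π*(v-u) ≤ 2*π*(v-u) := by nlinarith
      dsimp only
      linarith
  · -- |w| = 1
    have hw0 : w ≠ 0 := by
      intro h; rw [h] at heq; simp at heq
    set s : ℝ := w.arg / (2*π) with hsdef
    have hws : w = Complex.exp (((2*π*s:ℝ):ℂ) * I) := by
      have h2π : (2*π : ℝ) ≠ 0 := by positivity
      have h1 : (2*π*s : ℝ) = w.arg := by rw [hsdef]; field_simp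
      rw [h1]
      have := Complex.norm_mul_exp_arg_mul_I w
      rw [heq] at this
      simpa using this.symm
    set g : ℝ → ℝ := fun t => Real.sin (π*(t - s)) with hgdef
    have hgne : ∀ t ∈ Set.Icc u v, g t ≠ 0 := by
      intro t ht h0
      rw [hgdef] at h0
      rw [Real.sin_eq_zero_iff] at h0
      obtain ⟨n, hn⟩ := h0
      have htns : t = s + n := by
        have : π * (t - s - n) = 0 := by linarith
        have := mul_eq_zero.mp this
        rcases this with h | h
        · exact absurd h (ne_of_gt hπ)
        · linarith
      apply hw t ht
      rw [hws]
      have hexp : (2*(π:ℂ)*I*(t:ℂ)) = ((2*π*s:ℝ):ℂ)*I + (n:ℂ)*(2*(π:ℂ)*I) := by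
        rw [htns]; push_cast; ring
      rw [hexp, Complex.exp_add, Complex.exp_int_mul_two_pi_mul_I, mul_one]
    have hgc : Continuous g := by rw [hgdef]; fun_prop
    obtain ⟨σ, hσ1, hσpos⟩ : ∃ σ : ℝ, (σ = 1 ∨ σ = -1) ∧ ∀ t ∈ Set.Icc u v, 0 < σ * g t := by
      rcases sign_const u v g hgc.continuousOn hgne with h | h
      · exact ⟨1, Or.inl rfl, fun t ht => by simpa using h t ht⟩
      · exact ⟨-1, Or.inr rfl, fun t ht => by simpa using h t ht⟩
    have hσσ : σ * σ = 1 := by rcases hσ1 with h | h <;> rw [h] <;> norm_num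
    have hσne : (σ:ℂ) ≠ 0 := by
      rcases hσ1 with h | h <;> rw [h] <;> norm_num
    refine ⟨(σ:ℂ) * (2*I*Complex.exp (((π*s:ℝ):ℂ)*I)),
      fun t => Real.log (σ * g t), fun t => π * t, ?_, by fun_prop, ?_, ?_⟩
    · apply mul_ne_zero hσne
      apply mul_ne_zero (by norm_num : (2*I : ℂ) ≠ 0)
      exact Complex.exp_ne_zero _
    · intro t ht
      have key : Complex.exp (2*(π:ℂ)*I*(t:ℂ)) - w
          = Complex.exp ((((π*(t+s)):ℝ):ℂ)*I) * (2*I*(Complex.sin ((π*(t-s):ℝ):ℂ))) := by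
        rw [hws]
        have e1 : (2*(π:ℂ)*I*(t:ℂ)) = (((π*(t+s)):ℝ):ℂ)*I + (((π*(t-s)):ℝ):ℂ)*I := by
          push_cast; ring
        have e2 : (((2*π*s:ℝ):ℂ)*I) = (((π*(t+s)):ℝ):ℂ)*I + (-(((π*(t-s)):ℝ):ℂ))*I := by
          push_cast; ring
        rw [e1, e2, Complex.exp_add, Complex.exp_add]
        have e3 : Complex.exp ((((π*(t-s)):ℝ):ℂ)*I) - Complex.exp ((-(((π*(t-s)):ℝ):ℂ))*I)
            = 2*I*Complex.sin ((π*(t-s):ℝ):ℂ) := by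
          rw [Complex.exp_mul_I, Complex.exp_mul_I, Complex.cos_neg, Complex.sin_neg]
          ring
        rw [← mul_sub, e3]
      rw [key]
      have hsin : Complex.sin ((π*(t-s):ℝ):ℂ) = ((g t : ℝ) : ℂ) := by
        rw [hgdef, Complex.ofReal_sin]
      rw [hsin]
      have h5 : Complex.exp (((Real.log (σ * g t) : ℝ)):ℂ) = (((σ * g t : ℝ)):ℂ) := by
        rw [← Complex.ofReal_exp, Real.exp_log (hσpos t ht)]
      rw [Complex.exp_add, h5]
      have e4 : Complex.exp (((π*(t+s):ℝ):ℂ)*I)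
          = Complex.exp (((π*t:ℝ):ℂ)*I) * Complex.exp (((π*s:ℝ):ℂ)*I) := by
        rw [← Complex.exp_add]
        congr 1
        push_cast
        ring
      rw [e4]
      have hσC : ((σ:ℂ))*((σ:ℂ)) = 1 := by
        rw [← Complex.ofReal_mul, hσσ]; norm_num
      push_cast
      linear_combination (-(2*I*Complex.exp ((π:ℂ)*t*I) * Complex.exp ((π:ℂ)*s*I) * ((g t : ℝ):ℂ))) * hσC
    · dsimp only
      have : π * v - π * u = π * (v - u) := by ring
      linarith
  · -- |w| > 1
    have hw0 : w ≠ 0 := by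
      intro h; rw [h] at hgt; simp at hgt; linarith
    set x : ℝ → ℂ := fun t => 1 - Complex.exp (2*(π:ℂ)*I*(t:ℂ)) * w⁻¹ with hxdef
    have habs1 : ∀ t : ℝ, ‖Complex.exp (2*(π:ℂ)*I*(t:ℂ))‖ = 1 := by
      intro t
      have h : (2*(π:ℂ)*I*(t:ℂ)) = ((2*π*t:ℝ):ℂ) * I := by push_cast; ring
      rw [h, Complex.norm_exp_ofReal_mul_I]
    have habs : ∀ t : ℝ, ‖Complex.exp (2*(π:ℂ)*I*(t:ℂ)) * w⁻¹‖ < 1 := by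
      intro t
      rw [norm_mul, habs1, one_mul, norm_inv]
      rw [inv_lt_one_iff₀]
      right; exact hgt
    have hxre : ∀ t : ℝ, 0 < (x t).re := by
      intro t
      have h2 := Complex.abs_re_le_norm (Complex.exp (2*(π:ℂ)*I*(t:ℂ)) * w⁻¹)
      have h3 : (x t).re = 1 - (Complex.exp (2*(π:ℂ)*I*(t:ℂ)) * w⁻¹).re := by simp [hxdef]
      rw [h3]
      have := le_abs_self (Complex.exp (2*(π:ℂ)*I*(t:ℂ)) * w⁻¹).re
      linarith [habs t]
    have hxne : ∀ t : ℝ, x t ≠ 0 := by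
      intro t h
      have := hxre t
      rw [h] at this; simp at this
    -- derivative facts
    have hE' : ∀ t : ℝ, HasDerivAt (fun t : ℝ => Complex.exp (2*(π:ℂ)*I*(t:ℂ)))
        (2*(π:ℂ)*I * Complex.exp (2*(π:ℂ)*I*(t:ℂ))) t := by
      intro t
      have h1 : HasDerivAt (fun z : ℂ => 2*(π:ℂ)*I*z) (2*(π:ℂ)*I) ((t:ℝ):ℂ) := by
        simpa using (hasDerivAt_id ((t:ℝ):ℂ)).const_mul (2*(π:ℂ)*I)
      have h2 := h1.cexp
      have h3 := h2.comp_ofReal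
      simpa [mul_comm] using h3
    have hx' : ∀ t : ℝ, HasDerivAt x (-(2*(π:ℂ)*I * Complex.exp (2*(π:ℂ)*I*(t:ℂ)) * w⁻¹)) t := by
      intro t
      exact ((hE' t).mul_const w⁻¹).const_sub 1
    have hlog : ∀ t : ℝ, HasDerivAt (fun t => Complex.log (x t))
        ((-(2*(π:ℂ)*I * Complex.exp (2*(π:ℂ)*I*(t:ℂ)) * w⁻¹)) / x t) t := by
      intro t
      exact HasDerivAt.clog_real (hx' t) (Complex.mem_slitPlane_iff.2 (Or.inl (hxre t)))
    have him : ∀ t : ℝ, HasDerivAt (fun t => (Complex.log (x t)).im)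
        (((-(2*(π:ℂ)*I * Complex.exp (2*(π:ℂ)*I*(t:ℂ)) * w⁻¹)) / x t).im) t := by
      intro t
      exact Complex.imCLM.hasFDerivAt.comp_hasDerivAt t (hlog t)
    -- derivative bound
    have hbound : ∀ t : ℝ,
        (((-(2*(π:ℂ)*I * Complex.exp (2*(π:ℂ)*I*(t:ℂ)) * w⁻¹)) / x t).im) ≤ π := by
      intro t
      set ζ : ℂ := Complex.exp (2*(π:ℂ)*I*(t:ℂ)) * w⁻¹ with hζdef
      have hζabs : ‖ζ‖ < 1 := habs t
      have hxt : x t = 1 - ζ := rfl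
      have hne : (1:ℂ) - ζ ≠ 0 := by rw [← hxt]; exact hxne t
      have hq : (1/2 : ℝ) ≤ ((1 - ζ)⁻¹).re := re_inv_one_sub ζ (le_of_lt hζabs) hne
      have hinv : (1-ζ)⁻¹*(1-ζ) = 1 := inv_mul_cancel₀ hne
      have hnum : -(2*(π:ℂ)*I * Complex.exp (2*(π:ℂ)*I*(t:ℂ)) * w⁻¹) = -(2*(π:ℂ)*I*ζ) := by
        rw [hζdef]; ring
      have hqeq : (-(2*(π:ℂ)*I * ζ)) / (1 - ζ) = ((-(2*π):ℝ):ℂ) * (I * ((1-ζ)⁻¹ - 1)) := by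
        rw [div_eq_iff hne]
        push_cast
        linear_combination (2*(π:ℂ)*I) * hinv
      rw [hnum, hxt, hqeq]
      have him1 : (((-(2*π):ℝ):ℂ) * (I * ((1-ζ)⁻¹ - 1))).im = (-(2*π)) * ((1-ζ)⁻¹ - 1).re := by
        simp [Complex.I_mul_im]
      rw [him1]
      have : ((1-ζ)⁻¹ - 1).re = ((1-ζ)⁻¹).re - 1 := by simp
      rw [this]
      nlinarith
    refine ⟨-w, fun t => (Complex.log (x t)).re, fun t => (Complex.log (x t)).im,
      neg_ne_zero.2 hw0, ?_, ?_, ?_⟩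
    · intro t _
      exact (him t).continuousAt.continuousWithinAt
    · intro t _
      have hinv : w * w⁻¹ = 1 := mul_inv_cancel₀ hw0
      have h1 : (-w) * x t = Complex.exp (2*(π:ℂ)*I*(t:ℂ)) * (w * w⁻¹) - w := by
        simp only [hxdef]; ring
      rw [hinv, mul_one] at h1
      rw [← h1]
      have h2 : x t = Complex.exp (Complex.log (x t)) := (Complex.exp_log (hxne t)).symm
      have hlogeq : Complex.log (x t)
          = (((Complex.log (x t)).re : ℝ):ℂ) + (((Complex.log (x t)).im : ℝ):ℂ) * I :=
        (Complex.re_add_im _).symm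
      conv_lhs => rw [h2, hlogeq]
    · -- monotonicity argument
      set θ : ℝ → ℝ := fun t => (Complex.log (x t)).im with hθdef
      have hmono : Monotone (fun t => π * t - θ t) := by
        apply monotone_of_deriv_nonneg
        · intro t
          exact (((hasDerivAt_id t).const_mul π).sub (him t)).differentiableAt
        · intro t
          have hd : HasDerivAt (fun t => π * t - θ t)
              (π * 1 - (((-(2*(π:ℂ)*I * Complex.exp (2*(π:ℂ)*I*(t:ℂ)) * w⁻¹)) / x t).im)) t :=
            ((hasDerivAt_id t).const_mul π).sub (him t)
          rw [hd.deriv]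
          have := hbound t
          linarith
      have hper : θ (u + 1) = θ u := by
        have hEu : Complex.exp (2*(π:ℂ)*I*((u+1:ℝ):ℂ)) = Complex.exp (2*(π:ℂ)*I*((u:ℝ):ℂ)) := by
          have h : (2*(π:ℂ)*I*((u+1:ℝ):ℂ)) = 2*(π:ℂ)*I*((u:ℝ):ℂ) + 2*(π:ℂ)*I := by
            push_cast; ring
          rw [h, Complex.exp_add, Complex.exp_two_pi_mul_I, mul_one]
        simp only [hθdef, hxdef]
        rw [hEu]
      have h1 : π * v - θ v ≤ π * (u+1) - θ (u+1) := hmono (by linarith)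
      rw [hper] at h1
      linarith

lemma list_phase (u v : ℝ) (hu : 0 ≤ u) (huv : u ≤ v) (hv : v ≤ 1) :
    ∀ l : List ℂ, (∀ w ∈ l, ∀ t ∈ Set.Icc u v, Complex.exp (2*(π:ℂ)*I*(t:ℂ)) ≠ w) →
    ∃ (γ : ℂ) (ρ θ : ℝ → ℝ), γ ≠ 0 ∧ ContinuousOn θ (Set.Icc u v) ∧
      (∀ t ∈ Set.Icc u v,
        (l.map (fun w => Complex.exp (2*(π:ℂ)*I*(t:ℂ)) - w)).prod
          = γ * Complex.exp ((ρ t : ℂ) + (θ t : ℂ) * I)) ∧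
      (l.length : ℝ) * (π * (v - u) - π) ≤ θ v - θ u := by
  intro l
  induction l with
  | nil =>
    intro _
    refine ⟨1, fun _ => 0, fun _ => 0, one_ne_zero, continuousOn_const, ?_, by simp⟩
    intro t _
    simp
  | cons w l ih =>
    intro hl
    obtain ⟨γ₁, ρ₁, θ₁, hγ₁, hθ₁c, hid₁, hb₁⟩ :=
      root_phase u v hu huv hv w (hl w List.mem_cons_self)
    obtain ⟨γ₂, ρ₂, θ₂, hγ₂, hθ₂c, hid₂, hb₂⟩ :=
      ih (fun w' hw' => hl w' (List.mem_cons_of_mem w hw'))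
    refine ⟨γ₁*γ₂, fun t => ρ₁ t + ρ₂ t, fun t => θ₁ t + θ₂ t, mul_ne_zero hγ₁ hγ₂,
      hθ₁c.add hθ₂c, ?_, ?_⟩
    · intro t ht
      rw [List.map_cons, List.prod_cons, hid₁ t ht, hid₂ t ht]
      rw [mul_mul_mul_comm, ← Complex.exp_add]
      congr 2
      push_cast
      ring
    · have hπ : (0:ℝ) < π := Real.pi_pos
      have hvu1 : v - u ≤ 1 := by linarith
      have hX : π*(v-u) - π ≤ 0 := by nlinarith
      simp only [List.length_cons]
      push_cast
      show ((l.length:ℝ) + 1) * (π*(v-u) - π) ≤ (θ₁ v + θ₂ v) - (θ₁ u + θ₂ u)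
      nlinarith [hb₁, hb₂]

lemma core (u v : ℝ) (huv : u ≤ v) (C₀ : ℂ) (ρ Θ : ℝ → ℝ)
    (hΘ : ContinuousOn Θ (Set.Icc u v))
    (hpos : ∀ t ∈ Set.Icc u v, 0 < (C₀ * Complex.exp ((ρ t : ℂ) + (Θ t : ℂ) * I)).re) :
    Θ v - Θ u < π := by
  have hC : C₀ ≠ 0 := by
    intro h
    have := hpos u ⟨le_refl u, huv⟩
    rw [h, zero_mul] at this
    simp at this
  have hre : ‖C₀‖ * Real.cos C₀.arg = C₀.re := by
    have h := congrArg Complex.re (Complex.norm_mul_exp_arg_mul_I C₀)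
    rwa [Complex.re_ofReal_mul, Complex.exp_ofReal_mul_I_re] at h
  have him : ‖C₀‖ * Real.sin C₀.arg = C₀.im := by
    have h := congrArg Complex.im (Complex.norm_mul_exp_arg_mul_I C₀)
    rwa [Complex.im_ofReal_mul, Complex.exp_ofReal_mul_I_im] at h
  have hkey : ∀ t : ℝ, (C₀ * Complex.exp ((ρ t : ℂ) + (Θ t : ℂ) * I)).re
      = Real.exp (ρ t) * (‖C₀‖ * Real.cos (C₀.arg + Θ t)) := by
    intro t
    rw [Complex.exp_add, Complex.exp_mul_I]
    rw [← Complex.ofReal_exp, ← Complex.ofReal_cos, ← Complex.ofReal_sin]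
    rw [Real.cos_add]
    simp only [Complex.mul_re, Complex.mul_im, Complex.ofReal_re, Complex.ofReal_im,
      Complex.add_re, Complex.add_im, Complex.I_re, Complex.I_im]
    linear_combination (- Real.exp (ρ t) * Real.cos (Θ t)) * hre
      + (Real.exp (ρ t) * Real.sin (Θ t)) * him
  have hcos : ∀ t ∈ Set.Icc u v, 0 < Real.cos (C₀.arg + Θ t) := by
    intro t ht
    have h := hpos t ht
    rw [hkey t] at h
    have he : 0 < Real.exp (ρ t) := Real.exp_pos _
    have ha : 0 < ‖C₀‖ := norm_pos_iff.2 hC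
    by_contra hcc
    push_neg at hcc
    nlinarith [mul_nonneg (mul_pos he ha).le (neg_nonneg.2 hcc)]
  have h := cos_pos_imp u v huv (fun t => C₀.arg + Θ t)
    (continuousOn_const.add hΘ) hcos
  linarith
lemma upper_bound (N K : ℕ) (hN : 1 ≤ N) (S : Finset ℤ)
    (hS : ∀ lam : ℤ, lam ∈ S ↔ (N : ℤ) ≤ |lam| ∧ |lam| ≤ (N : ℤ) + K)
    (c : ℤ → ℂ) (u v : ℝ) (hu : 0 ≤ u) (huv : u ≤ v) (hv : v ≤ 1)
    (hrel : ∀ t : ℝ, (∑ lam ∈ S, c lam * Complex.exp (2*(π:ℂ)*I*(lam:ℂ)*(t:ℂ))).im = 0)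
    (hnz : ∀ t ∈ Set.Icc u v, (∑ lam ∈ S, c lam * Complex.exp (2*(π:ℂ)*I*(lam:ℂ)*(t:ℂ))) ≠ 0) :
    v - u ≤ ((K:ℝ)+1) / (2*N+K) := by
  have hπ : (0:ℝ) < π := Real.pi_pos
  set f : ℝ → ℂ := fun t => ∑ lam ∈ S, c lam * Complex.exp (2*(π:ℂ)*I*(lam:ℂ)*(t:ℂ)) with hfdef
  have hSneg : ∀ lam, lam ∈ S → -lam ∈ S := by
    intro lam h
    rw [hS] at h ⊢
    simpa [abs_neg] using h
  have hconj : ∀ t : ℝ, (starRingEnd ℂ) (f t) = f t :=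
    fun t => Complex.conj_eq_iff_im.2 (hrel t)
  set b : ℤ → ℂ := fun lam => (c lam + (starRingEnd ℂ) (c (-lam)))/2 with hbdef
  have hbconj : ∀ lam : ℤ, b (-lam) = (starRingEnd ℂ) (b lam) := by
    intro lam
    simp only [hbdef, neg_neg, map_div₀, map_add, Complex.conj_conj, map_ofNat]
    ring
  have hb : ∀ t : ℝ, f t = ∑ lam ∈ S, b lam * Complex.exp (2*(π:ℂ)*I*(lam:ℂ)*(t:ℂ)) := by
    intro t
    have h1 : (starRingEnd ℂ) (f t)
        = ∑ lam ∈ S, (starRingEnd ℂ) (c lam) * Complex.exp (-(2*(π:ℂ)*I*(lam:ℂ)*(t:ℂ))) := by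
      rw [hfdef]
      rw [map_sum]
      refine Finset.sum_congr rfl (fun lam _ => ?_)
      rw [map_mul, ← Complex.exp_conj]
      congr 1
      simp only [map_mul, Complex.conj_I, Complex.conj_ofReal, map_ofNat, map_intCast]
      ring
    have h2 : ∑ lam ∈ S, (starRingEnd ℂ) (c lam) * Complex.exp (-(2*(π:ℂ)*I*(lam:ℂ)*(t:ℂ)))
        = ∑ lam ∈ S, (starRingEnd ℂ) (c (-lam)) * Complex.exp (2*(π:ℂ)*I*(lam:ℂ)*(t:ℂ)) := by
      apply Finset.sum_nbij' (fun lam => -lam) (fun lam => -lam)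
      · intro a ha; exact hSneg a ha
      · intro a ha; exact hSneg a ha
      · intro a _; ring
      · intro a _; ring
      · intro a _
        rw [neg_neg]
        congr 1
        push_cast
        ring
    have h3 : f t = (f t + (starRingEnd ℂ) (f t))/2 := by rw [hconj t]; ring
    rw [h3]
    conv_lhs => rw [h1, h2]
    rw [hfdef]
    rw [← Finset.sum_add_distrib, Finset.sum_div]
    refine Finset.sum_congr rfl fun lam _ => ?_
    simp only [hbdef]
    ring
  -- split S
  set A : Finset ℤ := Finset.Icc (N:ℤ) ((N:ℤ)+K) with hAdef
  have hNpos : (0:ℤ) < (N:ℤ) := by exact_mod_cast hN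
  have hSsplit : S = A ∪ A.image (fun lam => -lam) := by
    ext lam
    simp only [Finset.mem_union, Finset.mem_image, Finset.mem_Icc, hS, hAdef]
    constructor
    · rintro ⟨h1, h2⟩
      rcases abs_cases lam with ⟨he, hsgn⟩ | ⟨he, hsgn⟩
      · left; omega
      · right; exact ⟨-lam, by omega, by ring⟩
    · rintro (⟨h1, h2⟩ | ⟨a, ⟨ha1, ha2⟩, rfl⟩)
      · rcases abs_cases lam with ⟨he, hsgn⟩ | ⟨he, hsgn⟩ <;> omega
      · rcases abs_cases (-a) with ⟨he, hsgn⟩ | ⟨he, hsgn⟩ <;> omega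
  have hdisj : Disjoint A (A.image (fun lam => -lam)) := by
    rw [Finset.disjoint_left]
    intro a ha hb2
    simp only [Finset.mem_image, Finset.mem_Icc, hAdef] at ha hb2
    obtain ⟨x, hx, hxa⟩ := hb2
    omega
  set z : ℝ → ℂ := fun t => ∑ lam ∈ A, b lam * Complex.exp (2*(π:ℂ)*I*(lam:ℂ)*(t:ℂ)) with hzdef
  have hfz : ∀ t : ℝ, f t = z t + (starRingEnd ℂ) (z t) := by
    intro t
    rw [hb t]
    rw [hSsplit, Finset.sum_union hdisj]
    congr 1
    rw [Finset.sum_image (by intro a _ b _ h; exact neg_injective h)]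
    rw [hzdef, map_sum]
    refine Finset.sum_congr rfl fun lam _ => ?_
    rw [map_mul, ← Complex.exp_conj, hbconj lam]
    congr 1
    simp only [map_mul, Complex.conj_I, Complex.conj_ofReal, map_ofNat, map_intCast]
    push_cast
    ring
  -- polynomial
  set P : Polynomial ℂ :=
    ∑ lam ∈ A, Polynomial.C (b lam) * Polynomial.X ^ ((lam - (N:ℤ)).toNat) with hPdef
  have hPdeg : P.natDegree ≤ K := by
    apply Polynomial.natDegree_sum_le_of_forall_le
    intro lam hlam
    apply le_trans (Polynomial.natDegree_C_mul_X_pow_le _ _)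
    simp only [Finset.mem_Icc, hAdef] at hlam
    omega
  have hzP : ∀ t : ℝ, z t
      = Complex.exp (2*(π:ℂ)*I*((N:ℕ):ℂ)*(t:ℂ)) * P.eval (Complex.exp (2*(π:ℂ)*I*(t:ℂ))) := by
    intro t
    rw [hPdef, Polynomial.eval_finset_sum]
    rw [Finset.mul_sum, hzdef]
    refine Finset.sum_congr rfl fun lam hlam => ?_
    simp only [Polynomial.eval_mul, Polynomial.eval_C, Polynomial.eval_pow, Polynomial.eval_X]
    simp only [Finset.mem_Icc, hAdef] at hlam
    have hn : (((lam - (N:ℤ)).toNat : ℕ) : ℂ) = (lam : ℂ) - (N:ℕ) := by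
      have h : (((lam - (N:ℤ)).toNat : ℕ) : ℤ) = lam - (N:ℤ) := Int.toNat_of_nonneg (by omega)
      push_cast at h ⊢
      exact_mod_cast h
    have hsplit : Complex.exp (2*(π:ℂ)*I*(lam:ℂ)*(t:ℂ))
        = Complex.exp (2*(π:ℂ)*I*((N:ℕ):ℂ)*(t:ℂ))
          * Complex.exp (2*(π:ℂ)*I*(t:ℂ)) ^ ((lam - (N:ℤ)).toNat) := by
      rw [← Complex.exp_nat_mul, ← Complex.exp_add]
      congr 1
      rw [hn]
      push_cast
      ring
    rw [hsplit]
    ring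
  have hP0 : P ≠ 0 := by
    intro hP
    apply hnz u ⟨le_refl u, huv⟩
    have : z u = 0 := by rw [hzP u, hP]; simp
    rw [show (∑ lam ∈ S, c lam * Complex.exp (2*(π:ℂ)*I*(lam:ℂ)*(u:ℂ))) = f u from rfl]
    rw [hfz u, this]
    simp
  have hsplits : P.Splits := IsAlgClosed.splits P
  have hcard : Multiset.card P.roots = P.natDegree := (Polynomial.splits_iff_card_roots).mp hsplits
  set l : List ℂ := P.roots.toList with hldef
  have hlen : l.length ≤ K := by
    rw [hldef, Multiset.length_toList, hcard]; exact hPdeg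
  have hfac : ∀ x : ℂ, P.eval x = P.leadingCoeff * (l.map (fun a => x - a)).prod := by
    intro x
    conv_lhs => rw [hsplits.eq_prod_roots]
    rw [Polynomial.eval_mul, Polynomial.eval_C, Polynomial.eval_multiset_prod]
    congr 1
    have h1 : P.roots = (l : Multiset ℂ) := (Multiset.coe_toList P.roots).symm
    rw [Multiset.map_map]
    simp only [Function.comp, Polynomial.eval_sub, Polynomial.eval_X, Polynomial.eval_C]
    rw [h1, Multiset.map_coe, Multiset.prod_coe]
  have hEne : ∀ w ∈ l, ∀ t ∈ Set.Icc u v, Complex.exp (2*(π:ℂ)*I*(t:ℂ)) ≠ w := by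
    intro w hwl t ht heq
    have hroot : P.eval w = 0 := by
      have hw : w ∈ P.roots := by rwa [hldef, Multiset.mem_toList] at hwl
      exact (Polynomial.isRoot_of_mem_roots hw)
    apply hnz t ht
    have hz0 : z t = 0 := by rw [hzP t, heq, hroot]; simp
    rw [show (∑ lam ∈ S, c lam * Complex.exp (2*(π:ℂ)*I*(lam:ℂ)*(t:ℂ))) = f t from rfl]
    rw [hfz t, hz0]
    simp
  obtain ⟨γ, ρ, θ, hγ, hθc, hid, hΔ⟩ := list_phase u v hu huv hv l hEne
  set C₀ : ℂ := P.leadingCoeff * γ with hC₀def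
  have hC₀ : C₀ ≠ 0 := mul_ne_zero (Polynomial.leadingCoeff_ne_zero.mpr hP0) hγ
  have hzexp : ∀ t ∈ Set.Icc u v,
      z t = C₀ * Complex.exp ((ρ t : ℂ) + ((2*π*(N:ℝ)*t + θ t : ℝ) : ℂ) * I) := by
    intro t ht
    rw [hzP t, hfac, hid t ht]
    have hcomb : Complex.exp (2*(π:ℂ)*I*((N:ℕ):ℂ)*(t:ℂ)) * Complex.exp ((ρ t :ℂ) + (θ t:ℂ)*I)
        = Complex.exp ((ρ t:ℂ) + ((2*π*(N:ℝ)*t + θ t : ℝ):ℂ)*I) := by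
      rw [← Complex.exp_add]
      congr 1
      push_cast
      ring
    rw [← hcomb, hC₀def]
    ring
  -- sign constancy of re z
  have hrecont : ContinuousOn (fun t => (z t).re) (Set.Icc u v) := by
    apply Continuous.continuousOn
    apply Complex.continuous_re.comp
    apply continuous_finset_sum
    intro lam _
    apply continuous_const.mul
    apply Complex.continuous_exp.comp
    exact continuous_const.mul Complex.continuous_ofReal
  have hner : ∀ t ∈ Set.Icc u v, (z t).re ≠ 0 := by
    intro t ht h0
    apply hnz t ht
    rw [show (∑ lam ∈ S, c lam * Complex.exp (2*(π:ℂ)*I*(lam:ℂ)*(t:ℂ))) = f t from rfl]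
    rw [hfz t, Complex.add_conj, h0]
    simp
  have hΘcont : ContinuousOn (fun t => 2*π*(N:ℝ)*t + θ t) (Set.Icc u v) :=
    (continuous_const.mul continuous_id).continuousOn.add hθc
  have hkey : (2*π*(N:ℝ)*v + θ v) - (2*π*(N:ℝ)*u + θ u) < π := by
    rcases sign_const u v (fun t => (z t).re) hrecont hner with hsgn | hsgn
    · apply core u v huv C₀ ρ (fun t => 2*π*(N:ℝ)*t + θ t) hΘcont
      intro t ht
      rw [← hzexp t ht]
      exact hsgn t ht
    · apply core u v huv (-C₀) ρ (fun t => 2*π*(N:ℝ)*t + θ t) hΘcont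
      intro t ht
      have hneg : (-C₀) * Complex.exp ((ρ t : ℂ) + ((2*π*(N:ℝ)*t + θ t : ℝ) : ℂ) * I)
          = -(z t) := by rw [hzexp t ht]; ring
      rw [hneg, Complex.neg_re]
      have := hsgn t ht
      linarith
  have hvu1 : v - u ≤ 1 := by linarith
  have hX : π*(v-u) - π ≤ 0 := by nlinarith
  have hKΔ : (K:ℝ)*(π*(v-u) - π) ≤ θ v - θ u := by
    refine le_trans ?_ hΔ
    apply mul_le_mul_of_nonpos_right _ hX
    exact_mod_cast hlen
  have hD : (0:ℝ) < 2*(N:ℝ)+(K:ℝ) := by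
    have : (1:ℝ) ≤ (N:ℝ) := by exact_mod_cast hN
    positivity
  rw [le_div_iff₀ hD]
  nlinarith

def q (t : ℝ) : ℂ := Complex.exp ((↑(π * t) : ℂ) * I)

lemma q_ne_zero (t : ℝ) : q t ≠ 0 := Complex.exp_ne_zero _

lemma q_zpow (t : ℝ) (d : ℤ) : q t ^ d = Complex.exp ((d : ℂ) * ((↑(π * t) : ℂ) * I)) :=
  (Complex.exp_int_mul _ d).symm

lemma sum_ext (s t : Finset ℤ) (f : ℤ → ℂ) (h : ∀ d, f d ≠ 0 → d ∈ s ∧ d ∈ t) :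
    ∑ d ∈ s, f d = ∑ d ∈ t, f d := by
  have h1 : ∑ d ∈ s ∩ t, f d = ∑ d ∈ s, f d := by
    apply Finset.sum_subset Finset.inter_subset_left
    intro d hds hdn
    by_contra hne
    exact hdn (Finset.mem_inter.2 ⟨(h d hne).1, (h d hne).2⟩)
  have h2 : ∑ d ∈ s ∩ t, f d = ∑ d ∈ t, f d := by
    apply Finset.sum_subset Finset.inter_subset_right
    intro d hds hdn
    by_contra hne
    exact hdn (Finset.mem_inter.2 ⟨(h d hne).1, (h d hne).2⟩)
  rw [← h1, h2]

lemma shift_up (B : ℤ) (a : ℤ → ℂ) (ha : ∀ d : ℤ, a d ≠ 0 → -B < d ∧ d < B) (x : ℂ) :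
    ∑ d ∈ Finset.Icc (-B) B, a (d+1) * x^d
      = ∑ d ∈ Finset.Icc (-B) B, a d * x^(d-1) := by
  have h1 : ∑ d ∈ Finset.Icc (-B+1) (B+1), a d * x^(d-1)
      = ∑ d ∈ Finset.Icc (-B) B, a (d+1) * x^d := by
    rw [show Finset.Icc (-B+1) (B+1)
        = (Finset.Icc (-B) B).map (addRightEmbedding 1) by
      rw [Finset.map_add_right_Icc]]
    rw [Finset.sum_map]
    simp only [addRightEmbedding_apply, add_sub_cancel_right]
  rw [← h1]
  apply sum_ext
  intro d hd
  have hane : a d ≠ 0 := by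
    intro h0
    apply hd
    rw [h0, zero_mul]
  have := ha d hane
  simp only [Finset.mem_Icc]
  omega

lemma shift_down (B : ℤ) (a : ℤ → ℂ) (ha : ∀ d : ℤ, a d ≠ 0 → -B < d ∧ d < B) (x : ℂ) :
    ∑ d ∈ Finset.Icc (-B) B, a (d-1) * x^d
      = ∑ d ∈ Finset.Icc (-B) B, a d * x^(d+1) := by
  have h1 : ∑ d ∈ Finset.Icc (-B-1) (B-1), a d * x^(d+1)
      = ∑ d ∈ Finset.Icc (-B) B, a (d-1) * x^d := by
    rw [show Finset.Icc (-B-1) (B-1)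
        = (Finset.Icc (-B) B).map (addRightEmbedding (-1)) by
      rw [Finset.map_add_right_Icc]; congr 1 <;> ring]
    rw [Finset.sum_map]
    simp only [addRightEmbedding_apply]
    refine Finset.sum_congr rfl fun d _ => ?_
    rw [show d + -1 = d - 1 from by ring]
    rw [show d - 1 + 1 = d from by ring]
  rw [← h1]
  apply sum_ext
  intro d hd
  have hane : a d ≠ 0 := by
    intro h0
    apply hd
    rw [h0, zero_mul]
  have := ha d hane
  simp only [Finset.mem_Icc]
  omega

lemma sin_expand (z : ℂ) :
    Complex.sin z = (Complex.exp (-z * I) - Complex.exp (z * I)) * I / 2 := rfl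

lemma rep (D M : ℕ) (sh : ℕ → ℝ) : ∀ m : ℕ, m ≤ M →
    ∃ a : ℤ → ℂ,
      (∀ d : ℤ, a d ≠ 0 →
        (D - m ≤ d.natAbs ∧ d.natAbs ≤ D + m ∧ (d + (D:ℤ) + (m:ℤ)) % 2 = 0)) ∧
      ∀ t : ℝ,
        Complex.sin (↑(π * (D:ℝ) * t)) * ∏ j ∈ Finset.range m, Complex.sin (↑(π * (t - sh j)))
          = ∑ d ∈ Finset.Icc (-((D:ℤ)+(M:ℤ))) ((D:ℤ)+(M:ℤ)), a d * q t ^ d := by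
  intro m
  induction m with
  | zero =>
    intro _
    refine ⟨fun d => (if d = (D:ℤ) then -(I/2) else 0) + (if d = -(D:ℤ) then I/2 else 0),
      ?_, ?_⟩
    · intro d hd
      have hcases : d = (D:ℤ) ∨ d = -(D:ℤ) := by
        by_contra hcon
        push_neg at hcon
        simp [hcon.1, hcon.2] at hd
      rcases hcases with h | h <;> subst h <;>
        refine ⟨by omega, by omega, by omega⟩
    · intro t
      rw [Finset.prod_range_zero, mul_one]
      rw [sin_expand]
      have hD1 : Complex.exp ((↑(π * (D:ℝ) * t) : ℂ) * I) = q t ^ ((D:ℕ):ℤ) := by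
        rw [q_zpow]
        congr 1
        push_cast
        ring
      have hD2 : Complex.exp (-(↑(π * (D:ℝ) * t) : ℂ) * I) = q t ^ (-((D:ℕ):ℤ)) := by
        rw [q_zpow]
        congr 1
        push_cast
        ring
      rw [hD1, hD2]
      simp only [add_mul, ite_mul, zero_mul]
      rw [Finset.sum_add_distrib]
      rw [Finset.sum_ite_eq' _ ((D:ℕ):ℤ) (fun d => -(I/2) * q t ^ d)]
      rw [Finset.sum_ite_eq' _ (-((D:ℕ):ℤ)) (fun d => (I/2) * q t ^ d)]
      rw [if_pos (by simp only [Finset.mem_Icc]; omega),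
        if_pos (by simp only [Finset.mem_Icc]; omega)]
      ring
  | succ m ih =>
    intro hm1
    obtain ⟨a, hsupp, hsum⟩ := ih (by omega)
    have hsupp' : ∀ d : ℤ, a d ≠ 0 → -((D:ℤ)+(M:ℤ)) < d ∧ d < (D:ℤ)+(M:ℤ) := by
      intro d hd
      have := hsupp d hd
      omega
    set s : ℝ := sh m with hsdef
    set ep : ℂ := Complex.exp ((↑(π * s) : ℂ) * I) with hepdef
    set em : ℂ := Complex.exp (-(↑(π * s) : ℂ) * I) with hemdef
    refine ⟨fun d => (a (d+1) * ep - a (d-1) * em) * I / 2, ?_, ?_⟩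
    · intro d hd
      have hd' : (a (d+1) * ep - a (d-1) * em) * I / 2 ≠ 0 := hd
      have hcases : a (d+1) ≠ 0 ∨ a (d-1) ≠ 0 := by
        by_contra hcon
        push_neg at hcon
        rw [hcon.1, hcon.2] at hd'
        simp at hd'
      rcases hcases with h | h
      · have := hsupp _ h
        omega
      · have := hsupp _ h
        omega
    · intro t
      rw [Finset.prod_range_succ, ← mul_assoc, hsum t]
      have hsin_new : Complex.sin (↑(π * (t - sh m)))
          = ((q t)⁻¹ * ep - q t * em) * I / 2 := by
        rw [sin_expand]
        have h1 : Complex.exp (-(↑(π * (t - sh m)) : ℂ) * I) = (q t)⁻¹ * ep := by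
          rw [show (q t)⁻¹ = Complex.exp (-((↑(π * t) : ℂ) * I)) by
            rw [q, ← Complex.exp_neg]]
          rw [hepdef, ← Complex.exp_add]
          congr 1
          push_cast
          ring
        have h2 : Complex.exp ((↑(π * (t - sh m)) : ℂ) * I) = q t * em := by
          rw [q, hemdef, ← Complex.exp_add]
          congr 1
          push_cast
          ring
        rw [h1, h2]
      rw [hsin_new]
      rw [Finset.sum_mul]
      rw [Finset.sum_congr rfl (fun d _ => show
        (a d * q t ^ d) * (((q t)⁻¹ * ep - q t * em) * I / 2)
          = (I/2 * ep) * (a d * q t ^ (d-1)) - (I/2 * em) * (a d * q t ^ (d+1)) by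
        rw [zpow_sub_one₀ (q_ne_zero t), zpow_add_one₀ (q_ne_zero t)]
        field_simp)]
      rw [Finset.sum_sub_distrib, ← Finset.mul_sum, ← Finset.mul_sum]
      rw [← shift_up ((D:ℤ)+(M:ℤ)) a hsupp' (q t), ← shift_down ((D:ℤ)+(M:ℤ)) a hsupp' (q t)]
      rw [Finset.mul_sum, Finset.mul_sum, ← Finset.sum_sub_distrib]
      refine Finset.sum_congr rfl fun d _ => ?_
      push_cast
      ring

def f0 (N K : ℕ) (t : ℝ) : ℝ :=
  (-1)^K * Real.sin (π * ((2*N+K : ℕ):ℝ) * t)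
    * ∏ j ∈ Finset.range K, Real.sin (π * (t - ((j:ℝ)+1)/((2*N+K : ℕ):ℝ)))

lemma exists_coeffs (N K : ℕ) (hN : 1 ≤ N) (S : Finset ℤ)
    (hS : ∀ lam : ℤ, lam ∈ S ↔ (N : ℤ) ≤ |lam| ∧ |lam| ≤ (N : ℤ) + K) :
    ∃ c : ℤ → ℂ, ∀ t : ℝ,
      ∑ lam ∈ S, c lam * Complex.exp (2*(π:ℂ)*I*(lam:ℂ)*(t:ℂ)) = ((f0 N K t : ℝ) : ℂ) := by
  obtain ⟨a, hsupp, hsum⟩ :=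
    rep (2*N+K) K (fun j => ((j:ℝ)+1)/((2*N+K : ℕ):ℝ)) K (le_refl K)
  refine ⟨fun lam => (-1)^K * a (2*lam), ?_⟩
  intro t
  have hterm : ∀ lam : ℤ, Complex.exp (2*(π:ℂ)*I*(lam:ℂ)*(t:ℂ)) = q t ^ (2*lam) := by
    intro lam
    rw [q_zpow]
    congr 1
    push_cast
    ring
  have h1 : ∑ lam ∈ S, ((-1:ℂ))^K * a (2*lam) * Complex.exp (2*(π:ℂ)*I*(lam:ℂ)*(t:ℂ))
      = ((-1:ℂ))^K * ∑ lam ∈ S, a (2*lam) * q t ^ (2*lam) := by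
    rw [Finset.mul_sum]
    refine Finset.sum_congr rfl fun lam _ => ?_
    rw [hterm lam]
    ring
  have h2 : ∑ lam ∈ S, a (2*lam) * q t ^ (2*lam)
      = ∑ d ∈ S.image (fun lam => 2*lam), a d * q t ^ d := by
    rw [Finset.sum_image (by intro x _ y _ h; have h' : 2*x = 2*y := h; omega)]
  have h3 : ∑ d ∈ S.image (fun lam => 2*lam), a d * q t ^ d
      = ∑ d ∈ Finset.Icc (-(((2*N+K:ℕ):ℤ)+(K:ℤ))) (((2*N+K:ℕ):ℤ)+(K:ℤ)), a d * q t ^ d := by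
    apply sum_ext
    intro d hd
    have hane : a d ≠ 0 := by
      intro h0
      apply hd
      rw [h0, zero_mul]
    obtain ⟨hsp1, hsp2, hsp3⟩ := hsupp d hane
    obtain ⟨l, rfl⟩ : ∃ l, d = 2*l := ⟨d/2, by omega⟩
    have h2l : (2*l).natAbs = 2 * l.natAbs := by
      rw [Int.natAbs_mul]
      norm_num
    constructor
    · apply Finset.mem_image.2
      refine ⟨l, (hS _).2 ⟨?_, ?_⟩, rfl⟩
      · rw [Int.abs_eq_natAbs]
        exact_mod_cast (by omega : N ≤ l.natAbs)
      · rw [Int.abs_eq_natAbs]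
        have hle : l.natAbs ≤ N + K := by omega
        exact_mod_cast hle
    · simp only [Finset.mem_Icc]
      omega
  have hcast : ((f0 N K t : ℝ) : ℂ)
      = ((-1:ℂ))^K * (Complex.sin (↑(π * ((2*N+K:ℕ):ℝ) * t))
        * ∏ j ∈ Finset.range K, Complex.sin (↑(π * (t - ((j:ℝ)+1)/((2*N+K:ℕ):ℝ))))) := by
    unfold f0
    rw [Complex.ofReal_mul, Complex.ofReal_mul, Complex.ofReal_pow, Complex.ofReal_neg,
      Complex.ofReal_one, Complex.ofReal_sin, Complex.ofReal_prod, mul_assoc]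
    congr 1
    congr 1
    refine Finset.prod_congr rfl fun j _ => ?_
    rw [Complex.ofReal_sin]
  rw [show (fun lam => ((-1:ℂ))^K * a (2*lam)) = fun lam => ((-1:ℂ))^K * a (2*lam) from rfl]
  rw [hcast]
  calc ∑ lam ∈ S, ((-1:ℂ))^K * a (2*lam) * Complex.exp (2*(π:ℂ)*I*(lam:ℂ)*(t:ℂ))
      = ((-1:ℂ))^K * ∑ lam ∈ S, a (2*lam) * q t ^ (2*lam) := h1
    _ = ((-1:ℂ))^K * ∑ d ∈ Finset.Icc (-(((2*N+K:ℕ):ℤ)+(K:ℤ))) (((2*N+K:ℕ):ℤ)+(K:ℤ)),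
          a d * q t ^ d := by rw [h2, h3]
    _ = _ := by rw [← hsum t]
lemma sin_add_nat_mul_pi (x : ℝ) (n : ℕ) :
    Real.sin (x + n*π) = (-1)^n * Real.sin x := by
  induction n with
  | zero => simp
  | succ n ih =>
    have h : x + ((n+1 : ℕ):ℝ)*π = (x + (n:ℝ)*π) + π := by push_cast; ring
    rw [h, Real.sin_add_pi, ih, pow_succ]
    ring

lemma f0_pos (N K : ℕ) (hN : 1 ≤ N) (t : ℝ) (h0 : 0 < t)
    (hL : t < ((K:ℝ)+1)/((2*N+K:ℕ):ℝ))
    (hne : ∀ j ∈ Finset.range K, t ≠ ((j:ℝ)+1)/((2*N+K:ℕ):ℝ)) :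
    0 < f0 N K t := by
  unfold f0
  set D : ℕ := 2*N+K with hDdef
  have hD1 : (1:ℝ) ≤ (D:ℝ) := by
    have : 1 ≤ D := by omega
    exact_mod_cast this
  have hDpos : (0:ℝ) < (D:ℝ) := by linarith
  have hπ : (0:ℝ) < π := Real.pi_pos
  set m : ℕ := ⌊(D:ℝ)*t⌋₊ with hm
  have hDt0 : 0 < (D:ℝ)*t := by positivity
  have hm1 : (m:ℝ) ≤ (D:ℝ)*t := Nat.floor_le (le_of_lt hDt0)
  have hm2 : (D:ℝ)*t < (m:ℝ)+1 := Nat.lt_floor_add_one _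
  have hmK : m ≤ K := by
    have h : (D:ℝ)*t < (K:ℝ)+1 := by
      rw [lt_div_iff₀ hDpos] at hL
      nlinarith
    have h2 : m < K+1 := by
      apply (Nat.floor_lt (le_of_lt hDt0)).2
      push_cast
      exact h
    omega
  have hmlt : (m:ℝ) < (D:ℝ)*t := by
    rcases lt_or_eq_of_le hm1 with h | h
    · exact h
    · exfalso
      have htm : t = (m:ℝ)/(D:ℝ) := by
        field_simp
        linarith
      have hm0 : m ≠ 0 := by
        intro h0'
        rw [h0'] at htm
        norm_num at htm
        rw [htm] at h0
        exact lt_irrefl _ h0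
      apply hne (m-1) (Finset.mem_range.2 (by omega))
      rw [htm]
      congr 1
      push_cast [Nat.cast_sub (by omega : 1 ≤ m)]
      ring
  have hsinD : Real.sin (π * (D:ℝ) * t) = (-1)^m * Real.sin (π*((D:ℝ)*t - (m:ℝ))) := by
    have h : π * (D:ℝ) * t = π*((D:ℝ)*t - (m:ℝ)) + (m:ℝ)*π := by ring
    rw [h, sin_add_nat_mul_pi]
  have hsinDpos : 0 < Real.sin (π*((D:ℝ)*t - (m:ℝ))) := by
    apply Real.sin_pos_of_pos_of_lt_pi
    · nlinarith
    · nlinarith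
  have hsplit : ∏ j ∈ Finset.range K, Real.sin (π * (t - ((j:ℝ)+1)/(D:ℝ)))
      = (∏ j ∈ Finset.Ico 0 m, Real.sin (π * (t - ((j:ℝ)+1)/(D:ℝ))))
        * ∏ j ∈ Finset.Ico m K, Real.sin (π * (t - ((j:ℝ)+1)/(D:ℝ))) := by
    rw [Finset.range_eq_Ico, Finset.prod_Ico_consecutive _ (Nat.zero_le m) hmK]
  have hpos1 : 0 < ∏ j ∈ Finset.Ico 0 m, Real.sin (π * (t - ((j:ℝ)+1)/(D:ℝ))) := by
    apply Finset.prod_pos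
    intro j hj
    simp only [Finset.mem_Ico] at hj
    apply Real.sin_pos_of_pos_of_lt_pi
    · have hj1 : ((j:ℝ)+1) ≤ (m:ℝ) := by
        have : j+1 ≤ m := hj.2
        exact_mod_cast this
      have h2 : ((j:ℝ)+1)/(D:ℝ) < t := by
        rw [div_lt_iff₀ hDpos]
        nlinarith
      nlinarith
    · have hjD : ((j:ℝ)+1) ≤ (D:ℝ) := by
        have : j+1 ≤ D := by
          have := hj.2
          omega
        exact_mod_cast this
      have hKD : ((K:ℝ)+1)/(D:ℝ) ≤ 1 + ((j:ℝ)+1)/(D:ℝ) := by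
        rw [div_le_iff₀ hDpos]
        have hKD' : (K:ℝ) ≤ (D:ℝ) := by
          have : K ≤ D := by omega
          exact_mod_cast this
        have hj0 : (0:ℝ) ≤ (j:ℝ) := by positivity
        have expand : (1 + ((j:ℝ)+1)/(D:ℝ)) * (D:ℝ) = (D:ℝ) + ((j:ℝ)+1) := by
          field_simp
        rw [expand]
        linarith
      have ht1 : t < 1 + ((j:ℝ)+1)/(D:ℝ) := lt_of_lt_of_le hL hKD
      nlinarith
  have hneg2 : ∀ j ∈ Finset.Ico m K, Real.sin (π * (t - ((j:ℝ)+1)/(D:ℝ)))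
      = (-1) * Real.sin (π * (((j:ℝ)+1)/(D:ℝ) - t)) := by
    intro j _
    rw [neg_one_mul, ← Real.sin_neg]
    congr 1
    ring
  have hsplit2 : ∏ j ∈ Finset.Ico m K, Real.sin (π * (t - ((j:ℝ)+1)/(D:ℝ)))
      = (-1:ℝ)^(K - m) * ∏ j ∈ Finset.Ico m K, Real.sin (π * (((j:ℝ)+1)/(D:ℝ) - t)) := by
    rw [Finset.prod_congr rfl hneg2, Finset.prod_mul_distrib, Finset.prod_const,
      Nat.card_Ico]
  have hpos2 : 0 < ∏ j ∈ Finset.Ico m K, Real.sin (π * (((j:ℝ)+1)/(D:ℝ) - t)) := by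
    apply Finset.prod_pos
    intro j hj
    simp only [Finset.mem_Ico] at hj
    apply Real.sin_pos_of_pos_of_lt_pi
    · have hmj : (m:ℝ)+1 ≤ (j:ℝ)+1 := by
        have : m ≤ j := hj.1
        have : (m:ℝ) ≤ (j:ℝ) := by exact_mod_cast this
        linarith
      have h2 : t < ((j:ℝ)+1)/(D:ℝ) := by
        rw [lt_div_iff₀ hDpos]
        nlinarith
      nlinarith
    · have h1 : ((j:ℝ)+1)/(D:ℝ) ≤ 1 := by
        rw [div_le_one hDpos]
        have : j+1 ≤ D := by
          have := hj.2
          omega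
        exact_mod_cast this
      nlinarith
  rw [hsinD, hsplit, hsplit2]
  have hsign : (-1:ℝ)^K * (-1:ℝ)^m * (-1:ℝ)^(K-m) = 1 := by
    rw [← pow_add, ← pow_add]
    have h : K + m + (K - m) = 2*K := by omega
    rw [h, pow_mul]
    norm_num
  have harr : (-1:ℝ)^K * ((-1:ℝ)^m * Real.sin (π*((D:ℝ)*t - (m:ℝ))))
      * ((∏ j ∈ Finset.Ico 0 m, Real.sin (π * (t - ((j:ℝ)+1)/(D:ℝ))))
        * ((-1:ℝ)^(K-m) * ∏ j ∈ Finset.Ico m K, Real.sin (π * (((j:ℝ)+1)/(D:ℝ) - t))))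
      = ((-1:ℝ)^K * (-1:ℝ)^m * (-1:ℝ)^(K-m))
        * (Real.sin (π*((D:ℝ)*t - (m:ℝ)))
          * ((∏ j ∈ Finset.Ico 0 m, Real.sin (π * (t - ((j:ℝ)+1)/(D:ℝ))))
            * ∏ j ∈ Finset.Ico m K, Real.sin (π * (((j:ℝ)+1)/(D:ℝ) - t)))) := by
    ring
  rw [harr, hsign, one_mul]
  exact mul_pos hsinDpos (mul_pos hpos1 hpos2)

lemma f0_nonneg (N K : ℕ) (hN : 1 ≤ N) (t : ℝ) (h0 : 0 ≤ t)
    (hL : t ≤ ((K:ℝ)+1)/((2*N+K:ℕ):ℝ)) :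
    0 ≤ f0 N K t := by
  have hD1 : (1:ℝ) ≤ ((2*N+K:ℕ):ℝ) := by
    have : 1 ≤ 2*N+K := by omega
    exact_mod_cast this
  have hDpos : (0:ℝ) < ((2*N+K:ℕ):ℝ) := by linarith
  rcases eq_or_lt_of_le h0 with h | h
  · rw [← h]
    unfold f0
    simp
  rcases eq_or_lt_of_le hL with h' | h'
  · rw [h']
    unfold f0
    have harg : π * ((2*N+K:ℕ):ℝ) * (((K:ℝ)+1)/((2*N+K:ℕ):ℝ)) = ((K+1:ℕ):ℝ) * π := by
      push_cast
      field_simp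
    rw [harg, Real.sin_nat_mul_pi]
    simp
  by_cases hex : ∃ j ∈ Finset.range K, t = ((j:ℝ)+1)/((2*N+K:ℕ):ℝ)
  · obtain ⟨j, hj, hjt⟩ := hex
    unfold f0
    have hzero : ∏ j ∈ Finset.range K, Real.sin (π * (t - ((j:ℝ)+1)/((2*N+K:ℕ):ℝ))) = 0 := by
      apply Finset.prod_eq_zero hj
      rw [hjt]
      simp
    rw [hzero, mul_zero]
  · push_neg at hex
    exact le_of_lt (f0_pos N K hN t h h' hex)

lemma f0_abs_le (N K : ℕ) (t : ℝ) : |f0 N K t| ≤ 1 := by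
  have hsin1 : ∀ x : ℝ, |Real.sin x| ≤ 1 := fun x =>
    abs_le.2 ⟨Real.neg_one_le_sin x, Real.sin_le_one x⟩
  unfold f0
  rw [abs_mul, abs_mul]
  have hK1 : |(-1:ℝ)^K| = 1 := by
    rw [_root_.abs_pow, abs_neg, abs_one, one_pow]
  rw [hK1, one_mul]
  have h1 : |Real.sin (π * ((2*N+K:ℕ):ℝ) * t)| ≤ 1 := hsin1 _
  have h2 : |∏ j ∈ Finset.range K, Real.sin (π * (t - ((j:ℝ)+1)/((2*N+K:ℕ):ℝ)))| ≤ 1 := by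
    rw [Finset.abs_prod]
    apply Finset.prod_le_one
    · intro j _
      exact abs_nonneg _
    · intro j _
      exact hsin1 _
  calc |Real.sin (π * ((2*N+K:ℕ):ℝ) * t)|
        * |∏ j ∈ Finset.range K, Real.sin (π * (t - ((j:ℝ)+1)/((2*N+K:ℕ):ℝ)))|
      ≤ 1 * 1 := by
        apply mul_le_mul h1 h2 (abs_nonneg _) (by norm_num)
    _ = 1 := by norm_num

lemma f0_continuous (N K : ℕ) : Continuous (f0 N K) := by
  unfold f0
  apply Continuous.mul
  · apply Continuous.mul continuous_const
    exact Real.continuous_sin.comp (continuous_const.mul continuous_id)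
  · apply continuous_finset_prod
    intro j _
    exact Real.continuous_sin.comp (continuous_const.mul (continuous_id.sub continuous_const))
lemma lower_element (N K : ℕ) (hN : 1 ≤ N) (S : Finset ℤ)
    (hS : ∀ lam : ℤ, lam ∈ S ↔ (N : ℤ) ≤ |lam| ∧ |lam| ≤ (N : ℤ) + K)
    (ε : ℝ) (hε : 0 < ε) (hεL : ε < (((K:ℝ)+1)/((2*N+K:ℕ):ℝ))/2) :
    ∃ c : ℤ → ℂ,
      (∀ t : ℝ, (∑ lam ∈ S, c lam * Complex.exp (2*(π:ℂ)*I*(lam:ℂ)*(t:ℂ))).im = 0) ∧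
      (∀ t ∈ Set.Icc ε ((((K:ℝ)+1)/((2*N+K:ℕ):ℝ)) - ε),
        (∑ lam ∈ S, c lam * Complex.exp (2*(π:ℂ)*I*(lam:ℂ)*(t:ℂ))) ≠ 0) := by
  obtain ⟨c₀, hc₀⟩ := exists_coeffs N K hN S hS
  set D : ℕ := 2*N+K with hDdef
  set L : ℝ := ((K:ℝ)+1)/((D:ℕ):ℝ) with hLdef
  have hD1 : (1:ℝ) ≤ (D:ℝ) := by
    have : 1 ≤ D := by omega
    exact_mod_cast this
  have hDpos : (0:ℝ) < (D:ℝ) := by linarith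
  set s : ℝ := 1/(3*(D:ℝ)) with hsdef
  set r : ℝ := 1/(4*(D:ℝ)) with hrdef
  have hr0 : 0 < r := by rw [hrdef]; positivity
  have hs0 : 0 < s := by rw [hsdef]; positivity
  have hDne : (D:ℝ) ≠ 0 := ne_of_gt hDpos
  have h3D : (0:ℝ) < 3*(D:ℝ) := by linarith
  have h4D : (0:ℝ) < 4*(D:ℝ) := by linarith
  have h12D : (0:ℝ) < 12*(D:ℝ) := by linarith
  have hrs : r < s := by
    rw [hrdef, hsdef, div_lt_div_iff₀ h4D h3D]
    nlinarith
  have hrs1 : r + s < 1/(D:ℝ) := by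
    have h1 : r + s = 7/(12*(D:ℝ)) := by
      rw [hrdef, hsdef]
      field_simp
      ring
    rw [h1, div_lt_div_iff₀ h12D hDpos]
    nlinarith
  -- the generic positive-perturbation case near a node
  have hcaseb : ∀ δ' : ℝ, 0 < δ' → ∀ t ∈ Set.Icc ε (L - ε),
      ∀ j ∈ Finset.range K, |t - ((j:ℝ)+1)/(D:ℝ)| < r →
      0 < f0 N K t + δ' * f0 N K (t+s) := by
    intro δ' hδ' t ht j hj habs
    have ht0 : 0 < t := lt_of_lt_of_le hε ht.1
    have htL : t ≤ L := le_trans ht.2 (by linarith)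
    have h1 : 0 ≤ f0 N K t := f0_nonneg N K hN t (le_of_lt ht0) htL
    have hablt := abs_lt.mp habs
    have hjK : j < K := Finset.mem_range.mp hj
    have h2 : 0 < f0 N K (t+s) := by
      apply f0_pos N K hN
      · linarith
      · -- t + s < L
        have hj1 : ((j:ℝ)+1) ≤ (K:ℝ) := by exact_mod_cast hjK
        have hstep : ((j:ℝ)+1)/(D:ℝ) + 1/(D:ℝ) ≤ L := by
          rw [hLdef, ← add_div, div_le_div_iff₀ hDpos hDpos]
          nlinarith
        linarith
      · -- avoid the nodes
        intro i hi hti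
        have hlow : ((j:ℝ)+1)/(D:ℝ) < t + s := by linarith
        have hhigh : t + s < ((j:ℝ)+1)/(D:ℝ) + 1/(D:ℝ) := by linarith
        rw [hti] at hlow hhigh
        have hjlt : (j:ℝ)+1 < (i:ℝ)+1 := by
          have := mul_lt_mul_of_pos_right hlow hDpos
          rwa [div_mul_cancel₀ _ (ne_of_gt hDpos), div_mul_cancel₀ _ (ne_of_gt hDpos)] at this
        have hilt : (i:ℝ)+1 < (j:ℝ)+2 := by
          rw [← add_div] at hhigh
          have := mul_lt_mul_of_pos_right hhigh hDpos
          rw [div_mul_cancel₀ _ (ne_of_gt hDpos), div_mul_cancel₀ _ (ne_of_gt hDpos)] at this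
          linarith
        have hji : j < i := by exact_mod_cast (by linarith : (j:ℝ) < (i:ℝ))
        have hij : i < j+1 := by exact_mod_cast (by linarith : (i:ℝ) < (j:ℝ)+1)
        omega
    have := mul_pos hδ' h2
    linarith
  -- choose δ
  set A' : Set ℝ := {x | x ∈ Set.Icc ε (L - ε)
    ∧ ∀ j ∈ Finset.range K, r ≤ |x - ((j:ℝ)+1)/(D:ℝ)|} with hA'def
  have hA'sub : A' ⊆ Set.Icc ε (L - ε) := fun x hx => hx.1
  have hA'closed : IsClosed A' := by
    have hA'eq : A' = Set.Icc ε (L - ε)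
        ∩ ⋂ j ∈ Finset.range K, {x : ℝ | r ≤ |x - ((j:ℝ)+1)/(D:ℝ)|} := by
      ext x
      simp only [hA'def, Set.mem_setOf_eq, Set.mem_inter_iff, Set.mem_iInter]
    rw [hA'eq]
    apply IsClosed.inter isClosed_Icc
    apply isClosed_biInter
    intro j _
    apply isClosed_le continuous_const
    exact (continuous_id.sub continuous_const).abs
  have hA'cpt : IsCompact A' := IsCompact.of_isClosed_subset isCompact_Icc hA'closed hA'sub
  obtain ⟨δ, hδ0, hFpos⟩ : ∃ δ : ℝ, 0 < δ ∧
      ∀ t ∈ Set.Icc ε (L - ε), 0 < f0 N K t + δ * f0 N K (t+s) := by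
    by_cases hA : A'.Nonempty
    · obtain ⟨t₀, ht₀, hmin⟩ := hA'cpt.exists_isMinOn hA (f0_continuous N K).continuousOn
      have hm₀ : 0 < f0 N K t₀ := by
        apply f0_pos N K hN
        · exact lt_of_lt_of_le hε ht₀.1.1
        · have := ht₀.1.2
          linarith
        · intro j hj heq
          have hthis := ht₀.2 j hj
          rw [heq] at hthis
          have hzero : ((j:ℝ)+1)/((2*N+K:ℕ):ℝ) - ((j:ℝ)+1)/(D:ℝ) = 0 := by
            rw [hDdef]
            ring
          rw [hzero, abs_zero] at hthis
          linarith
      refine ⟨f0 N K t₀ / 2, by linarith, ?_⟩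
      intro t ht
      by_cases hcase : ∀ j ∈ Finset.range K, r ≤ |t - ((j:ℝ)+1)/(D:ℝ)|
      · have htA : t ∈ A' := ⟨ht, hcase⟩
        have hge : f0 N K t₀ ≤ f0 N K t := hmin htA
        have habs := abs_le.mp (f0_abs_le N K (t+s))
        nlinarith
      · push_neg at hcase
        obtain ⟨j, hj, hjr⟩ := hcase
        exact hcaseb _ (by linarith) t ht j hj hjr
    · refine ⟨1, one_pos, ?_⟩
      intro t ht
      have : ¬ (∀ j ∈ Finset.range K, r ≤ |t - ((j:ℝ)+1)/(D:ℝ)|) := by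
        intro hcase
        exact hA ⟨t, ht, hcase⟩
      push_neg at this
      obtain ⟨j, hj, hjr⟩ := this
      exact hcaseb 1 one_pos t ht j hj hjr
  -- final coefficients
  refine ⟨fun lam => c₀ lam * (1 + (δ:ℂ) * Complex.exp (2*(π:ℂ)*I*(lam:ℂ)*(s:ℂ))), ?_, ?_⟩
  all_goals
    have hsum : ∀ t : ℝ,
        ∑ lam ∈ S, (c₀ lam * (1 + (δ:ℂ) * Complex.exp (2*(π:ℂ)*I*(lam:ℂ)*(s:ℂ))))
          * Complex.exp (2*(π:ℂ)*I*(lam:ℂ)*(t:ℂ))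
        = (((f0 N K t + δ * f0 N K (t+s)) : ℝ) : ℂ) := by
      intro t
      have hterm : ∀ lam ∈ S,
          (c₀ lam * (1 + (δ:ℂ) * Complex.exp (2*(π:ℂ)*I*(lam:ℂ)*(s:ℂ))))
            * Complex.exp (2*(π:ℂ)*I*(lam:ℂ)*(t:ℂ))
          = c₀ lam * Complex.exp (2*(π:ℂ)*I*(lam:ℂ)*(t:ℂ))
            + (δ:ℂ) * (c₀ lam * Complex.exp (2*(π:ℂ)*I*(lam:ℂ)*((t+s:ℝ):ℂ))) := by
        intro lam _
        have hes : Complex.exp (2*(π:ℂ)*I*(lam:ℂ)*((t+s:ℝ):ℂ))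
            = Complex.exp (2*(π:ℂ)*I*(lam:ℂ)*(s:ℂ)) * Complex.exp (2*(π:ℂ)*I*(lam:ℂ)*(t:ℂ)) := by
          rw [← Complex.exp_add]
          congr 1
          push_cast
          ring
        rw [hes]
        ring
      rw [Finset.sum_congr rfl hterm, Finset.sum_add_distrib, ← Finset.mul_sum]
      rw [hc₀ t, hc₀ (t+s)]
      push_cast
      ring
  · intro t
    rw [hsum t]
    exact Complex.ofReal_im _
  · intro t ht
    rw [hsum t]
    have := hFpos t ht
    exact_mod_cast Complex.ofReal_ne_zero.mpr (by linarith)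

end KO

/-- **Theorem 2** (Kozma–Oravecz): for the spectrum `S = {λ ∈ ℤ : N ≤ |λ| ≤ N + K}`,
the supremum of the lengths of intervals `I ⊆ [0,1]` on which some real trigonometric
polynomial with spectrum in `S` has no zero equals `(K+1)/(2N+K)`. -/
theorem M_interval_spectrum
    (N K : ℕ) (hN : 1 ≤ N)
    (S : Finset ℤ)
    (hS : ∀ lam : ℤ, lam ∈ S ↔ (N : ℤ) ≤ |lam| ∧ |lam| ≤ (N : ℤ) + K) :
    sSup {r : ℝ | ∃ (c : ℤ → ℂ) (u v : ℝ), 0 ≤ u ∧ u ≤ v ∧ v ≤ 1 ∧ r = v - u ∧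
        (∀ t : ℝ, (∑ lam ∈ S,
          c lam * Complex.exp (2 * Real.pi * Complex.I * (lam : ℂ) * (t : ℂ))).im = 0) ∧
        (∀ t ∈ Set.Icc u v, (∑ lam ∈ S,
          c lam * Complex.exp (2 * Real.pi * Complex.I * (lam : ℂ) * (t : ℂ))) ≠ 0)}
      = ((K : ℝ) + 1) / (2 * N + K) := by
  have hN' : (1:ℝ) ≤ (N:ℝ) := by exact_mod_cast hN
  have hD : (0:ℝ) < 2*(N:ℝ)+(K:ℝ) := by positivity
  have hcast : ((2*N+K:ℕ):ℝ) = 2*(N:ℝ)+(K:ℝ) := by push_cast; ring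
  set L : ℝ := ((K:ℝ)+1) / (2*(N:ℝ)+(K:ℝ)) with hLdef
  have hL0 : 0 < L := by positivity
  have hL1 : L ≤ 1 := by
    rw [hLdef, div_le_one hD]
    linarith
  have hgt : ∀ w : ℝ, w < L →
      ∃ a ∈ {r : ℝ | ∃ (c : ℤ → ℂ) (u v : ℝ), 0 ≤ u ∧ u ≤ v ∧ v ≤ 1 ∧ r = v - u ∧
        (∀ t : ℝ, (∑ lam ∈ S,
          c lam * Complex.exp (2 * Real.pi * Complex.I * (lam : ℂ) * (t : ℂ))).im = 0) ∧
        (∀ t ∈ Set.Icc u v, (∑ lam ∈ S,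
          c lam * Complex.exp (2 * Real.pi * Complex.I * (lam : ℂ) * (t : ℂ))) ≠ 0)}, w < a := by
    intro w hw
    set ε : ℝ := min (L/4) ((L - w)/4) with hεdef
    have hε0 : 0 < ε := by
      apply lt_min
      · linarith
      · linarith
    have hε1 : ε ≤ L/4 := min_le_left _ _
    have hε2 : ε ≤ (L - w)/4 := min_le_right _ _
    have hεL2 : ε < L/2 := by linarith
    obtain ⟨c, him, hnz⟩ := KO.lower_element N K hN S hS ε hε0 (by rw [hcast]; exact hεL2)
    refine ⟨L - 2*ε, ⟨c, ε, L - ε, le_of_lt hε0, by linarith, by linarith, by ring, him, ?_⟩, ?_⟩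
    · intro t ht
      apply hnz t
      rw [hcast]
      exact ht
    · linarith
  apply csSup_eq_of_forall_le_of_forall_lt_exists_gt
  · obtain ⟨a, ha, _⟩ := hgt (L/2) (by linarith)
    exact ⟨a, ha⟩
  · rintro a ⟨c, u, v, hu, huv, hv, hr, him, hnz⟩
    rw [hr]
    exact KO.upper_bound N K hN S hS c u v hu huv hv him hnz
  · exact hgt


end
end

section
/- Let N, K, b be integers with N ≥ 1, K ≥ 0, b ≥ 1 and b < 2N, and let S = {λ ∈ ℤ : |λ| = N + jb for some 0 ≤ j ≤ K}. If f is a real trigonometric polynomial with spectrum contained in S and f(t) > 0 for every t in an interval I ⊂ ℝ, then the length of I satisfies |I| ≤ (K+1)/(bK+2N). -/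
open scoped BigOperators
open Finset Complex

noncomputable def Cc (q w : ℂ) (n r : ℕ) : ℂ :=
  (-w)^r * (∏ i ∈ Finset.range r, q^i) * (∏ i ∈ Finset.range r, (1 - q^(n-i)))
    / ∏ i ∈ Finset.range r, (1 - q^(i+1))

lemma Cc_zero (q w : ℂ) (n : ℕ) : Cc q w n 0 = 1 := by simp [Cc]

lemma Cc_top (q w : ℂ) (n : ℕ) : Cc q w n (n+1) = 0 := by
  have : (∏ i ∈ Finset.range (n+1), (1 - q^(n-i))) = 0 := by
    apply Finset.prod_eq_zero (Finset.self_mem_range_succ n)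
    simp
  simp [Cc, this]

lemma Cc_pascal (q w : ℂ) (n t : ℕ) (ht : t ≤ n)
    (hq : ∀ i, 1 ≤ i → i ≤ n + 1 → q^i ≠ 1) :
    Cc q w (n+1) (t+1) = Cc q w n (t+1) - w * q^n * Cc q w n t := by
  set Q := ∏ i ∈ Finset.range t, q^i with hQdef
  set A := ∏ i ∈ Finset.range t, (1 - q^(n-i)) with hAdef
  set D := ∏ i ∈ Finset.range t, (1 - q^(i+1)) with hDdef
  have hA1 : (∏ i ∈ Finset.range (t+1), (1 - q^(n+1-i))) = (1 - q^(n+1)) * A := by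
    rw [Finset.prod_range_succ']
    have : ∀ i ∈ Finset.range t, (1 - q^(n+1-(i+1))) = (1 - q^(n-i)) := by
      intro i _; congr 2; omega
    rw [Finset.prod_congr rfl this]
    simp only [Nat.sub_zero]; ring
  have hA2 : (∏ i ∈ Finset.range (t+1), (1 - q^(n-i))) = A * (1 - q^(n-t)) := by
    rw [Finset.prod_range_succ]
  have hD : (∏ i ∈ Finset.range (t+1), (1 - q^(i+1))) = D * (1 - q^(t+1)) := by
    rw [Finset.prod_range_succ]
  have hQ : (∏ i ∈ Finset.range (t+1), q^i) = Q * q^t := by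
    rw [Finset.prod_range_succ]
  have hDne : D ≠ 0 := by
    rw [hDdef]
    apply Finset.prod_ne_zero_iff.2
    intro i hi
    have := hq (i+1) (by omega) (by simp at hi; omega)
    intro h; apply this; linear_combination -h
  have ht1 : (1 - q^(t+1)) ≠ 0 := by
    have := hq (t+1) (by omega) (by omega)
    intro h; apply this; linear_combination -h
  have hpow : q^t * q^(n-t) = q^n := by rw [← pow_add]; congr 1; omega
  have key : q^t * (1-q^(n+1)) = q^t * (1-q^(n-t)) + q^n * (1-q^(t+1)) := by
    have h2 : q^n * q^(t+1) = q^t * q^(n+1) := by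
      rw [← pow_add, ← pow_add]; congr 1; omega
    linear_combination hpow - h2
  have e1 : Cc q w (n+1) (t+1)
      = ((-w)^(t+1) * Q * A) / (D * (1-q^(t+1))) * (q^t * (1-q^(n+1))) := by
    rw [Cc, hA1, hD, hQ]; ring
  have e2 : Cc q w n (t+1)
      = ((-w)^(t+1) * Q * A) / (D * (1-q^(t+1))) * (q^t * (1-q^(n-t))) := by
    rw [Cc, hA2, hD, hQ]; ring
  have e3 : w * q^n * Cc q w n t
      = ((-w)^(t+1) * Q * A) / (D * (1-q^(t+1))) * (-(q^n * (1-q^(t+1)))) := by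
    rw [Cc]
    rw [← hQdef, ← hAdef, ← hDdef]
    field_simp
    ring
  rw [e1, e2, e3]
  linear_combination (((-w)^(t+1) * Q * A) / (D * (1-q^(t+1)))) * key

theorem qbt (q w : ℂ) :
    ∀ n : ℕ, (∀ i, 1 ≤ i → i ≤ n → q^i ≠ 1) → ∀ z : ℂ,
    ∏ j ∈ Finset.range n, (z - w * q^j)
      = ∑ r ∈ Finset.range (n+1), Cc q w n r * z^(n-r) := by
  intro n
  induction n with
  | zero => intro _ z; simp [Cc]
  | succ n ih =>
    intro hq z
    have ihz := ih (fun i h1 h2 => hq i h1 (by omega)) z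
    rw [Finset.prod_range_succ, ihz]
    have expand : (∑ r ∈ Finset.range (n+1), Cc q w n r * z^(n-r)) * (z - w * q^n)
        = (∑ r ∈ Finset.range (n+1), Cc q w n r * z^(n-r) * z)
          - ∑ r ∈ Finset.range (n+1), w * q^n * (Cc q w n r * z^(n-r)) := by
      rw [← Finset.sum_mul, ← Finset.mul_sum]; ring
    rw [expand]
    have first : (∑ r ∈ Finset.range (n+1), Cc q w n r * z^(n-r) * z)
        = z^(n+1) + ∑ r ∈ Finset.range (n+1), Cc q w n (r+1) * z^(n-r) := by
      have h1 : ∀ r ∈ Finset.range (n+1), Cc q w n r * z^(n-r) * z = Cc q w n r * z^(n+1-r) := by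
        intro r hr; simp at hr
        rw [mul_assoc, ← pow_succ]
        congr 2; omega
      rw [Finset.sum_congr rfl h1]
      have h2 : (∑ r ∈ Finset.range (n+2), Cc q w n r * z^(n+1-r))
          = (∑ r ∈ Finset.range (n+1), Cc q w n r * z^(n+1-r)) + Cc q w n (n+1) * z^0 := by
        rw [Finset.sum_range_succ]; norm_num
      have h3 : (∑ r ∈ Finset.range (n+2), Cc q w n r * z^(n+1-r))
          = (∑ r ∈ Finset.range (n+1), Cc q w n (r+1) * z^(n+1-(r+1))) + Cc q w n 0 * z^(n+1-0) := by
        rw [Finset.sum_range_succ']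
      rw [Cc_top] at h2
      simp only [mul_zero, zero_mul, add_zero] at h2
      rw [← h2, h3, Cc_zero]
      have h5 : ∀ r ∈ Finset.range (n+1),
          Cc q w n (r+1) * z^(n+1-(r+1)) = Cc q w n (r+1) * z^(n-r) := by
        intro r _; congr 2; omega
      rw [Finset.sum_congr rfl h5, Nat.sub_zero, one_mul, add_comm]
    rw [first]
    conv_rhs => rw [Finset.sum_range_succ']
    have h4 : ∀ r ∈ Finset.range (n+1),
        Cc q w (n+1) (r+1) * z^(n+1-(r+1)) = (Cc q w n (r+1) - w * q^n * Cc q w n r) * z^(n-r) := by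
      intro r hr; simp at hr
      rw [Cc_pascal q w n r (by omega) hq]
      congr 2; omega
    rw [Finset.sum_congr rfl h4, Cc_zero, Nat.sub_zero, one_mul]
    have h6 : (∑ r ∈ Finset.range (n+1), (Cc q w n (r+1) - w * q^n * Cc q w n r) * z^(n-r))
        = (∑ r ∈ Finset.range (n+1), Cc q w n (r+1) * z^(n-r))
          - ∑ r ∈ Finset.range (n+1), w * q^n * (Cc q w n r * z^(n-r)) := by
      rw [← Finset.sum_sub_distrib]
      apply Finset.sum_congr rfl
      intro r _; ring
    rw [h6]
    ring

lemma hsub (x : ℝ) : (1 : ℂ) - Complex.exp (2*(x:ℂ)*Complex.I)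
    = Complex.exp ((x:ℂ)*Complex.I) * (-2*Complex.I) * ((Real.sin x : ℝ) : ℂ) := by
  rw [Complex.ofReal_sin, Complex.sin]
  have hE : Complex.exp ((x:ℂ)*Complex.I) * Complex.exp (-((x:ℂ)*Complex.I)) = 1 := by
    rw [← Complex.exp_add]; ring_nf; exact Complex.exp_zero
  have hE2 : Complex.exp ((x:ℂ)*Complex.I) * Complex.exp ((x:ℂ)*Complex.I)
      = Complex.exp (2*(x:ℂ)*Complex.I) := by
    rw [← Complex.exp_add]; ring_nf
  have hI : Complex.I^2 = -1 := Complex.I_sq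
  have hB : Complex.exp (-(x:ℂ)*Complex.I) = Complex.exp (-((x:ℂ)*Complex.I)) := by ring_nf
  rw [hB]
  field_simp
  linear_combination (-1)*hE + 1*hE2
    + (1*Complex.exp ((x:ℂ)*Complex.I) * Complex.exp (-((x:ℂ)*Complex.I))
       - 1*Complex.exp ((x:ℂ)*Complex.I)^2) * hI

lemma factor_eq (β : ℝ) (K : ℕ) (i : ℕ) (hi : i ≤ K)
    (hsin : Real.sin (((i+1:ℕ):ℝ)*β) ≠ 0) :
    Complex.exp (2*(β:ℂ)*Complex.I)^i
      * (1 - Complex.exp (2*(β:ℂ)*Complex.I)^(K+1-i))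
      / (1 - Complex.exp (2*(β:ℂ)*Complex.I)^(i+1))
    = Complex.exp ((K:ℂ)*(β:ℂ)*Complex.I)
      * ((Real.sin (((K+1-i : ℕ):ℝ)*β) / Real.sin (((i+1:ℕ):ℝ)*β) : ℝ) : ℂ) := by
  set s : ℝ := ((K+1-i : ℕ):ℝ)*β with hs
  set t : ℝ := ((i+1 : ℕ):ℝ)*β with ht
  have ha : (1:ℂ) - Complex.exp (2*(β:ℂ)*Complex.I)^(K+1-i)
      = Complex.exp ((s:ℂ)*Complex.I) * (-2*Complex.I) * ((Real.sin s : ℝ) : ℂ) := by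
    rw [← hsub s]
    congr 2
    rw [← Complex.exp_nat_mul]
    congr 1
    rw [hs]
    simp only [Complex.ofReal_mul, Complex.ofReal_natCast]
    ring
  have hb : (1:ℂ) - Complex.exp (2*(β:ℂ)*Complex.I)^(i+1)
      = Complex.exp ((t:ℂ)*Complex.I) * (-2*Complex.I) * ((Real.sin t : ℝ) : ℂ) := by
    rw [← hsub t]
    congr 2
    rw [← Complex.exp_nat_mul]
    congr 1
    rw [ht]
    simp only [Complex.ofReal_mul, Complex.ofReal_natCast]
    ring
  have hc : Complex.exp (2*(β:ℂ)*Complex.I)^i = Complex.exp ((i:ℂ)*(2*(β:ℂ)*Complex.I)) := by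
    rw [← Complex.exp_nat_mul]
  rw [ha, hb, hc]
  have hexp : Complex.exp ((i:ℂ)*(2*(β:ℂ)*Complex.I)) * Complex.exp ((s:ℂ)*Complex.I)
      = Complex.exp ((K:ℂ)*(β:ℂ)*Complex.I) * Complex.exp ((t:ℂ)*Complex.I) := by
    rw [← Complex.exp_add, ← Complex.exp_add]
    congr 1
    rw [hs, ht]
    have h1 : ((K+1-i : ℕ):ℝ) = (K:ℝ)+1-i := by
      have : i ≤ K+1 := by omega
      push_cast [Nat.cast_sub this]
      ring
    rw [h1]
    simp only [Complex.ofReal_mul, Complex.ofReal_sub, Complex.ofReal_add,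
      Complex.ofReal_natCast, Complex.ofReal_one]
    push_cast
    ring
  have hsin' : ((Real.sin t : ℝ) : ℂ) ≠ 0 := Complex.ofReal_ne_zero.2 hsin
  have h2 : Complex.exp ((t:ℂ)*Complex.I) * (-2*Complex.I) * ((Real.sin t : ℝ) : ℂ) ≠ 0 := by
    apply mul_ne_zero
    apply mul_ne_zero (Complex.exp_ne_zero _)
    · simp [Complex.I_ne_zero]
    · exact hsin'
  rw [Complex.ofReal_div, mul_div_assoc', div_eq_div_iff h2 hsin']
  linear_combination (-2*Complex.I*(Real.sin s : ℂ)*(Real.sin t : ℂ)) * hexp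

lemma Cc_real (β : ℝ) (K : ℕ) (hβ : 0 < β) (hπ : ((K:ℝ)+1)*β < Real.pi)
    (r : ℕ) (hr : r ≤ K+1) :
    Cc (Complex.exp (2*(β:ℂ)*Complex.I)) (Complex.exp (((Real.pi - K*β : ℝ):ℂ)*Complex.I)) (K+1) r
    = ((∏ i ∈ Finset.range r, (Real.sin (((K+1-i : ℕ):ℝ)*β) / Real.sin (((i+1:ℕ):ℝ)*β)) : ℝ) : ℂ) := by
  set q : ℂ := Complex.exp (2*(β:ℂ)*Complex.I) with hq
  set w : ℂ := Complex.exp (((Real.pi - K*β : ℝ):ℂ)*Complex.I) with hw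
  have hsinpos : ∀ a : ℕ, 1 ≤ a → a ≤ K+1 → 0 < Real.sin ((a:ℝ)*β) := by
    intro a h1 h2
    apply Real.sin_pos_of_pos_of_lt_pi
    · positivity
    · calc (a:ℝ)*β ≤ ((K:ℝ)+1)*β := by
            apply mul_le_mul_of_nonneg_right _ hβ.le
            exact_mod_cast h2
        _ < Real.pi := hπ
  have hfac : ∀ i ∈ Finset.range r,
      q^i * (1 - q^(K+1-i)) / (1 - q^(i+1))
      = Complex.exp ((K:ℂ)*(β:ℂ)*Complex.I)
        * ((Real.sin (((K+1-i : ℕ):ℝ)*β) / Real.sin (((i+1:ℕ):ℝ)*β) : ℝ) : ℂ) := by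
    intro i hi
    simp only [Finset.mem_range] at hi
    exact factor_eq β K i (by omega) (ne_of_gt (hsinpos (i+1) (by omega) (by omega)))
  have hsplit : (∏ i ∈ Finset.range r, (q^i * (1 - q^(K+1-i)) / (1 - q^(i+1))))
      = (∏ i ∈ Finset.range r, q^i) * (∏ i ∈ Finset.range r, (1 - q^(K+1-i)))
        / ∏ i ∈ Finset.range r, (1 - q^(i+1)) := by
    rw [Finset.prod_div_distrib, Finset.prod_mul_distrib]
  rw [Cc]
  have hassoc : (-w)^r * (∏ i ∈ Finset.range r, q^i) * (∏ i ∈ Finset.range r, (1 - q^(K+1-i)))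
        / (∏ i ∈ Finset.range r, (1 - q^(i+1)))
      = (-w)^r * ((∏ i ∈ Finset.range r, q^i) * (∏ i ∈ Finset.range r, (1 - q^(K+1-i)))
        / ∏ i ∈ Finset.range r, (1 - q^(i+1))) := by ring
  rw [hassoc, ← hsplit, Finset.prod_congr rfl hfac,
    Finset.prod_mul_distrib, Finset.prod_const, ← Complex.ofReal_prod,
    Finset.card_range]
  have hcomb : (-w) * Complex.exp ((K:ℂ)*(β:ℂ)*Complex.I) = 1 := by
    have h1 : w * Complex.exp ((K:ℂ)*(β:ℂ)*Complex.I) = Complex.exp ((Real.pi:ℂ)*Complex.I) := by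
      rw [hw, ← Complex.exp_add]
      congr 1
      push_cast
      ring
    have h2 : Complex.exp ((Real.pi:ℂ)*Complex.I) = -1 := by
      exact_mod_cast Complex.exp_pi_mul_I
    calc (-w) * Complex.exp ((K:ℂ)*(β:ℂ)*Complex.I)
        = -(w * Complex.exp ((K:ℂ)*(β:ℂ)*Complex.I)) := by ring
      _ = -(-1) := by rw [h1, h2]
      _ = 1 := by norm_num
  calc (-w)^r * (Complex.exp ((K:ℂ)*(β:ℂ)*Complex.I)^r
        * ((∏ i ∈ Finset.range r, (Real.sin (((K+1-i : ℕ):ℝ)*β) / Real.sin (((i+1:ℕ):ℝ)*β)) : ℝ) : ℂ))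
      = ((-w) * Complex.exp ((K:ℂ)*(β:ℂ)*Complex.I))^r
        * ((∏ i ∈ Finset.range r, (Real.sin (((K+1-i : ℕ):ℝ)*β) / Real.sin (((i+1:ℕ):ℝ)*β)) : ℝ) : ℂ) := by
        rw [mul_pow]; ring
    _ = _ := by rw [hcomb]; simp

/-- Upper bound in **Theorem 3** (Kozma–Oravecz): if a real trigonometric polynomial
with spectrum in `S = {λ ∈ ℤ : |λ| = N + jb, 0 ≤ j ≤ K}` (where `b < 2N`) is strictly
positive on an interval `[u, v]`, then `v - u ≤ (K+1)/(bK+2N)`. -/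
theorem length_le_of_pos_arith_prog
    (N K b : ℕ) (hN : 1 ≤ N) (hb : 1 ≤ b) (hbN : b < 2 * N)
    (S : Finset ℤ)
    (hS : ∀ lam : ℤ, lam ∈ S ↔ ∃ j : ℕ, j ≤ K ∧ |lam| = (N : ℤ) + j * b)
    (c : ℤ → ℂ) (f : ℝ → ℂ)
    (hf : ∀ t : ℝ, f t = ∑ lam ∈ S,
      c lam * Complex.exp (2 * Real.pi * Complex.I * (lam : ℂ) * (t : ℂ)))
    (hreal : ∀ t : ℝ, (f t).im = 0)
    (u v : ℝ) (huv : u ≤ v)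
    (hpos : ∀ t ∈ Set.Icc u v, 0 < (f t).re) :
    v - u ≤ ((K : ℝ) + 1) / (b * K + 2 * N) := by

  by_contra hcon
  push_neg at hcon
  set D : ℕ := b * K + 2 * N with hDdef
  have hD : 0 < D := by omega
  have hDR : (0:ℝ) < D := by exact_mod_cast hD
  have hDne : (D:ℝ) ≠ 0 := ne_of_gt hDR
  have hDcast : ((b:ℝ) * K + 2 * N) = (D:ℝ) := by rw [hDdef]; push_cast; ring
  rw [hDcast] at hcon
  set β : ℝ := Real.pi * b / D with hβdef
  have hβ : 0 < β := by
    apply div_pos _ hDR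
    have := Real.pi_pos
    positivity
  have hKb : (K+1) * b < D := by
    have h1 : K * b + b < K * b + 2 * N := by omega
    calc (K+1)*b = K*b + b := by ring
      _ < K*b + 2*N := h1
      _ = D := by rw [hDdef]; ring
  have hπ : ((K:ℝ)+1)*β < Real.pi := by
    have h1 : ((K:ℝ)+1) * b < D := by exact_mod_cast hKb
    rw [hβdef, show ((K:ℝ)+1)*(Real.pi * b / D) = Real.pi * (((K:ℝ)+1)*b/D) by ring]
    nth_rewrite 2 [show Real.pi = Real.pi * 1 by ring]
    apply mul_lt_mul_of_pos_left _ Real.pi_pos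
    rw [div_lt_one hDR]
    exact h1
  set q : ℂ := Complex.exp (2*(β:ℂ)*Complex.I) with hqdef
  set w : ℂ := Complex.exp (((Real.pi - K*β : ℝ):ℂ)*Complex.I) with hwdef
  set a : ℕ → ℝ := fun m =>
    ∏ i ∈ Finset.range (K+1-m), (Real.sin (((K+1-i : ℕ):ℝ)*β) / Real.sin (((i+1:ℕ):ℝ)*β))
    with hadef
  have hsinpos : ∀ s : ℕ, 1 ≤ s → s ≤ K+1 → 0 < Real.sin ((s:ℝ)*β) := by
    intro s h1 h2
    apply Real.sin_pos_of_pos_of_lt_pi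
    · positivity
    · calc (s:ℝ)*β ≤ ((K:ℝ)+1)*β := by
            apply mul_le_mul_of_nonneg_right _ hβ.le
            exact_mod_cast h2
        _ < Real.pi := hπ
  have hapos : ∀ m : ℕ, 0 < a m := by
    intro m
    apply Finset.prod_pos
    intro i hi
    simp only [Finset.mem_range] at hi
    apply div_pos
    · exact hsinpos (K+1-i) (by omega) (by omega)
    · exact hsinpos (i+1) (by omega) (by omega)
  have hq_ne : ∀ i : ℕ, 1 ≤ i → i ≤ K+1 → q^i ≠ 1 := by
    intro i h1 h2 heq
    rw [hqdef, ← Complex.exp_nat_mul, Complex.exp_eq_one_iff] at heq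
    obtain ⟨n, hn⟩ := heq
    have him := congrArg Complex.im hn
    simp [Complex.mul_im, Complex.mul_re, Complex.I_im, Complex.I_re] at him
    have hiβ1 : 0 < (i:ℝ) * β := by positivity
    have hiβ2 : (i:ℝ) * β < Real.pi := by
      calc (i:ℝ)*β ≤ ((K:ℝ)+1)*β := by
            apply mul_le_mul_of_nonneg_right _ hβ.le
            exact_mod_cast h2
        _ < Real.pi := hπ
    have hpi := Real.pi_pos
    have hn0 : (0:ℝ) < (n:ℝ) := by nlinarith
    have hn1 : (n:ℝ) < 1 := by nlinarith
    have hgt : (0:ℤ) < n := by exact_mod_cast hn0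
    have hlt1 : n < 1 := by exact_mod_cast hn1
    omega
  have hzero : ∀ z : ℂ, (∃ j : ℕ, j ≤ K ∧ z = w * q^j) →
      ∑ m ∈ Finset.range (K+2), (a m : ℂ) * z^m = 0 := by
    rintro z ⟨j, hj, hz⟩
    have hreflect : ∑ m ∈ Finset.range (K+2), (a m : ℂ) * z^m
        = ∑ r ∈ Finset.range (K+2), (a (K+1-r) : ℂ) * z^(K+1-r) := by
      rw [← Finset.sum_range_reflect]
      apply Finset.sum_congr rfl
      intro i _
      rw [show K+2-1-i = K+1-i by omega]
    rw [hreflect]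
    have hterm : ∀ r ∈ Finset.range (K+2),
        (a (K+1-r) : ℂ) * z^(K+1-r) = Cc q w (K+1) r * z^(K+1-r) := by
      intro r hr
      simp only [Finset.mem_range] at hr
      congr 1
      rw [hqdef, hwdef, Cc_real β K hβ hπ r (by omega)]
      norm_cast
      simp only [hadef]
      rw [show K+1-(K+1-r) = r by omega]
    rw [Finset.sum_congr rfl hterm, ← qbt q w (K+1) hq_ne z]
    apply Finset.prod_eq_zero (i := j)
    · simp only [Finset.mem_range]; omega
    · rw [hz]; ring
  have hβD : β * D = Real.pi * b := by
    rw [hβdef]; field_simp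
  have hwq : ∀ j : ℕ, j ≤ K →
      w * q^j = Complex.exp (((2*Real.pi*((N:ℝ)+j*b)/D : ℝ):ℂ) * Complex.I) := by
    intro j hj
    rw [hwdef, hqdef, ← Complex.exp_nat_mul, ← Complex.exp_add]
    congr 1
    have key : (Real.pi - K*β) + j*(2*β) = 2*Real.pi*((N:ℝ)+j*b)/D := by
      rw [eq_div_iff hDne]
      have hDr : (D:ℝ) = (b:ℝ)*K + 2*N := by rw [hDdef]; push_cast; ring
      calc ((Real.pi - K*β) + j*(2*β)) * D
          = Real.pi * D - (K:ℝ)*(β*D) + 2*j*(β*D) := by ring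
        _ = Real.pi * ((b:ℝ)*K + 2*N) - K*(Real.pi*b) + 2*j*(Real.pi*b) := by
            rw [hβD, hDr]
        _ = 2*Real.pi*((N:ℝ)+j*b) := by ring
    have keyC : ((2*Real.pi*((N:ℝ)+j*b)/D : ℝ):ℂ)
        = ((Real.pi - K*β : ℝ):ℂ) + (j:ℂ)*(2*(β:ℂ)) := by
      rw [← key]
      push_cast
      ring
    rw [keyC]
    ring
  have hfreq : ∀ lam ∈ S, ∃ j : ℕ, j ≤ K ∧
      Complex.exp (2*(Real.pi:ℂ)*Complex.I*(lam:ℂ)/(D:ℂ)) = w * q^j := by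
    intro lam hlam
    obtain ⟨j, hj, habs⟩ := (hS lam).1 hlam
    rcases le_or_gt 0 lam with hpos' | hneg
    · refine ⟨j, hj, ?_⟩
      have hlameq : lam = (N:ℤ) + j * b := by rwa [abs_of_nonneg hpos'] at habs
      rw [hwq j hj]
      congr 1
      rw [hlameq]
      push_cast
      field_simp
    · refine ⟨K - j, by omega, ?_⟩
      have hlameq : lam = -((N:ℤ) + j * b) := by
        rw [abs_of_neg hneg] at habs; omega
      rw [hwq (K-j) (by omega)]
      have hKj : ((K-j : ℕ):ℝ) = (K:ℝ) - j := by
        push_cast [Nat.cast_sub hj]; ring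
      have hDC : (D:ℂ) ≠ 0 := Nat.cast_ne_zero.2 (by omega)
      have hDrC : (D:ℂ) = (b:ℂ)*K + 2*N := by rw [hDdef]; push_cast; ring
      have hstep : (2*(Real.pi:ℂ)*Complex.I*(lam:ℂ)/(D:ℂ))
          = ((2*Real.pi*((N:ℝ)+(K-j:ℕ)*b)/D : ℝ):ℂ) * Complex.I + (-1 : ℤ) * (2*(Real.pi:ℂ)*Complex.I) := by
        have hlamC : (lam:ℂ) = -((N:ℂ) + j*b) := by rw [hlameq]; push_cast; ring
        rw [hlamC]
        push_cast [Nat.cast_sub hj]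
        field_simp
        linear_combination hDrC
      rw [hstep, Complex.exp_add, Complex.exp_int_mul_two_pi_mul_I]
      ring
  set T : ℂ := ∑ m ∈ Finset.range (K+2), (a m : ℂ) * f (u + m/D) with hTdef
  have hT0 : T = 0 := by
    rw [hTdef]
    have hfm : ∀ m ∈ Finset.range (K+2), (a m : ℂ) * f (u + m/D)
        = ∑ lam ∈ S, (c lam * Complex.exp (2*(Real.pi:ℂ)*Complex.I*(lam:ℂ)*(u:ℂ)))
            * ((a m : ℂ) * (Complex.exp (2*(Real.pi:ℂ)*Complex.I*(lam:ℂ)/(D:ℂ)))^m) := by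
      intro m _
      rw [hf (u + m/D), Finset.mul_sum]
      apply Finset.sum_congr rfl
      intro lam _
      have hsplit : Complex.exp (2 * (Real.pi:ℂ) * Complex.I * (lam:ℂ) * ((u + m/D : ℝ):ℂ))
          = Complex.exp (2*(Real.pi:ℂ)*Complex.I*(lam:ℂ)*(u:ℂ))
            * (Complex.exp (2*(Real.pi:ℂ)*Complex.I*(lam:ℂ)/(D:ℂ)))^m := by
        rw [← Complex.exp_nat_mul, ← Complex.exp_add]
        congr 1
        push_cast
        field_simp
      rw [hsplit]
      ring
    rw [Finset.sum_congr rfl hfm, Finset.sum_comm]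
    apply Finset.sum_eq_zero
    intro lam hlam
    rw [← Finset.mul_sum]
    rw [hzero _ (by
      obtain ⟨j, hj, hz⟩ := hfreq lam hlam
      exact ⟨j, hj, hz⟩), mul_zero]
  have hmem : ∀ m ∈ Finset.range (K+2), u + m/D ∈ Set.Icc u v := by
    intro m hm
    simp only [Finset.mem_range] at hm
    constructor
    · have : (0:ℝ) ≤ (m:ℝ)/D := by positivity
      linarith
    · have h1 : (m:ℝ) ≤ (K:ℝ)+1 := by exact_mod_cast (by omega : m ≤ K+1)
      have h2 : (m:ℝ)/D ≤ ((K:ℝ)+1)/D := by gcongr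
      linarith [hcon]
  have hTre : 0 < T.re := by
    rw [hTdef, Complex.re_sum]
    apply Finset.sum_pos
    · intro m hm
      have h1 : ((a m : ℂ) * f (u + m/D)).re = a m * (f (u + m/D)).re := by
        simp [Complex.mul_re]
      rw [h1]
      exact mul_pos (hapos m) (hpos _ (hmem m hm))
    · exact ⟨0, by simp⟩
  rw [hT0] at hTre
  simp at hTre
end

section
/- Let N, K, b be integers with N ≥ 1, K ≥ 0, b ≥ 1 and b < 2N, and let S = {λ ∈ ℤ : |λ| = N + jb for some 0 ≤ j ≤ K}. Then for every ε > 0 there exists a real trigonometric polynomial f with spectrum contained in S and an interval I ⊆ [0,1] of length |I| ≥ (K+1)/(bK+2N) − ε such that f(t) > 0 for every t ∈ I. -/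
open scoped BigOperators

open Complex Finset Polynomial Real


lemma KO.sum_id (K : ℕ) : ∑ j ∈ Finset.range K, ((j:ℝ)+1) = K*(K+1)/2 := by
  induction K with
  | zero => simp
  | succ n ih => rw [Finset.sum_range_succ, ih]; push_cast; ring

lemma KO.exp_sub_exp (x y : ℝ) :
    Complex.exp (↑(2*π*x) * I) - Complex.exp (↑(2*π*y) * I)
      = Complex.exp (↑(π*(x+y)) * I) * (2 * I * ↑(Real.sin (π*(x-y)))) := by
  have hx : (↑(2*π*x) : ℂ) * I = ↑(π*(x+y)) * I + ↑(π*(x-y)) * I := by push_cast; ring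
  have hy : (↑(2*π*y) : ℂ) * I = ↑(π*(x+y)) * I + ↑(-(π*(x-y))) * I := by push_cast; ring
  rw [hx, hy, Complex.exp_add, Complex.exp_add, ← mul_sub]
  congr 1
  rw [Complex.exp_mul_I, Complex.exp_mul_I, ← Complex.ofReal_cos, ← Complex.ofReal_sin,
    ← Complex.ofReal_cos, ← Complex.ofReal_sin, Real.cos_neg, Real.sin_neg]
  push_cast
  ring

lemma KO.re_formula (ρ θ : ℝ) : (↑ρ * Complex.exp (↑θ * I) / (2*I)).re = ρ * Real.sin θ / 2 := by
  have h2I : (2*I : ℂ) ≠ 0 := by simp [Complex.I_ne_zero]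
  have : (↑ρ * Complex.exp (↑θ * I) / (2*I)) = ↑(ρ * Real.sin θ / 2) + ↑(-(ρ * Real.cos θ)/2) * I := by
    rw [div_eq_iff h2I, Complex.exp_mul_I, ← Complex.ofReal_cos, ← Complex.ofReal_sin]
    push_cast
    ring_nf
    rw [Complex.I_sq]
    ring
  rw [this]
  simp [Complex.sin_ofReal_re]

lemma KO.conj_exp_I (θ : ℝ) : (starRingEnd ℂ) (Complex.exp (↑θ * I)) = Complex.exp (↑(-θ) * I) := by
  rw [← Complex.exp_conj]
  congr 1
  simp

noncomputable def KO.w (b M : ℕ) (s : ℝ) (j : ℕ) : ℂ :=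
  Complex.exp (↑(2*π*((b:ℝ)*((j+1)/M + s))) * I)

noncomputable def KO.us (K b M : ℕ) (s : ℝ) : ℂ :=
  (-1:ℂ)^K * 2^K * ((2*I)^(K+1))⁻¹
    * Complex.exp (↑(-(π*((b:ℝ)*((K:ℝ)*s + ((K:ℝ)*((K:ℝ)+1)/2)/(M:ℝ)) + (M:ℝ)*s))) * I)

noncomputable def KO.Fprod (K b M : ℕ) (x : ℝ) : ℝ :=
  (-1:ℝ)^K * 2^K * ∏ j ∈ Finset.range K, Real.sin (π*((b:ℝ)*(x - (j+1)/M)))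

noncomputable def KO.F (K b M : ℕ) (x : ℝ) : ℝ :=
  KO.Fprod K b M x * Real.sin (π*((M:ℝ)*x))

lemma KO.keyZ (N K b M : ℕ) (hM : (M:ℝ) = b*K + 2*N) (s t : ℝ) :
    KO.us K b M s * Complex.exp (↑(2*π*((N:ℝ)*t)) * I)
      * ∏ j ∈ Finset.range K, (Complex.exp (↑(2*π*((b:ℝ)*t)) * I) - KO.w b M s j)
    = ↑(KO.Fprod K b M (t - s)) * Complex.exp (↑(π*((M:ℝ)*(t-s))) * I) / (2*I) := by
  have h2I : (2*I : ℂ) ≠ 0 := by simp [Complex.I_ne_zero]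
  have hMc : (M:ℂ) = (b:ℂ)*K + 2*N := by exact_mod_cast hM
  have hfac : ∀ j ∈ Finset.range K,
      (Complex.exp (↑(2*π*((b:ℝ)*t)) * I) - KO.w b M s j)
        = Complex.exp (↑(π*((b:ℝ)*t + (b:ℝ)*((j+1)/M + s))) * I)
            * (2 * I * ↑(Real.sin (π*((b:ℝ)*((t-s) - (j+1)/M))))) := by
    intro j _
    rw [KO.w, KO.exp_sub_exp]
    have : (b:ℝ)*t - (b:ℝ)*((j+1)/M + s) = (b:ℝ)*((t-s) - (j+1)/M) := by ring
    rw [this]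
  rw [Finset.prod_congr rfl hfac, Finset.prod_mul_distrib, ← Complex.exp_sum,
    Finset.prod_mul_distrib, Finset.prod_const, Finset.card_range, ← Complex.ofReal_prod]
  have hsum : (∑ j ∈ Finset.range K, ((↑(π*((b:ℝ)*t + (b:ℝ)*((j+1)/M + s))) : ℂ) * I))
      = ↑(π*((b:ℝ)*((K:ℝ)*t + (K:ℝ)*s) + (b:ℝ)*(((K:ℝ)*((K:ℝ)+1)/2)/(M:ℝ)))) * I := by
    rw [← Finset.sum_mul, ← Complex.ofReal_sum]
    congr 2
    have h1 : ∀ j ∈ Finset.range K, π*((b:ℝ)*t + (b:ℝ)*((j+1)/M + s))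
        = (π*((b:ℝ)*t+(b:ℝ)*s)) + (π*(b:ℝ)/M)*((j:ℝ)+1) := fun j _ => by ring
    rw [Finset.sum_congr rfl h1, Finset.sum_add_distrib, Finset.sum_const, ← Finset.mul_sum,
      KO.sum_id, Finset.card_range, nsmul_eq_mul]
    ring
  rw [hsum, KO.us, KO.Fprod]
  have hexp : Complex.exp (↑(-(π*((b:ℝ)*((K:ℝ)*s + ((K:ℝ)*((K:ℝ)+1)/2)/(M:ℝ)) + (M:ℝ)*s))) * I)
      * Complex.exp (↑(2*π*((N:ℝ)*t)) * I)
      * Complex.exp (↑(π*((b:ℝ)*((K:ℝ)*t + (K:ℝ)*s) + (b:ℝ)*(((K:ℝ)*((K:ℝ)+1)/2)/(M:ℝ)))) * I)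
      = Complex.exp (↑(π*((M:ℝ)*(t-s))) * I) := by
    rw [← Complex.exp_add, ← Complex.exp_add]
    congr 1
    push_cast
    rw [hMc]
    ring
  have hpow : ((2*I:ℂ)^(K+1))⁻¹ * (2*I)^K = (2*I)⁻¹ := by
    rw [pow_succ, mul_inv]
    field_simp
  calc (-1:ℂ)^K * 2^K * ((2*I)^(K+1))⁻¹
        * Complex.exp (↑(-(π*((b:ℝ)*((K:ℝ)*s + ((K:ℝ)*((K:ℝ)+1)/2)/(M:ℝ)) + (M:ℝ)*s))) * I)
        * Complex.exp (↑(2*π*((N:ℝ)*t)) * I)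
        * (Complex.exp (↑(π*((b:ℝ)*((K:ℝ)*t + (K:ℝ)*s) + (b:ℝ)*(((K:ℝ)*((K:ℝ)+1)/2)/(M:ℝ)))) * I)
          * ((2*I)^K * ↑(∏ j ∈ Finset.range K, Real.sin (π*((b:ℝ)*((t-s) - (j+1)/M))))))
      = ((-1:ℂ)^K * 2^K * (((2*I)^(K+1))⁻¹ * (2*I)^K)
          * ↑(∏ j ∈ Finset.range K, Real.sin (π*((b:ℝ)*((t-s) - (j+1)/M)))))
        * (Complex.exp (↑(-(π*((b:ℝ)*((K:ℝ)*s + ((K:ℝ)*((K:ℝ)+1)/2)/(M:ℝ)) + (M:ℝ)*s))) * I)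
          * Complex.exp (↑(2*π*((N:ℝ)*t)) * I)
          * Complex.exp (↑(π*((b:ℝ)*((K:ℝ)*t + (K:ℝ)*s) + (b:ℝ)*(((K:ℝ)*((K:ℝ)+1)/2)/(M:ℝ)))) * I)) := by
        ring
    _ = ↑((-1:ℝ)^K * 2^K * ∏ j ∈ Finset.range K, Real.sin (π*((b:ℝ)*((t-s) - (j+1)/M))))
        * Complex.exp (↑(π*((M:ℝ)*(t-s))) * I) / (2*I) := by
        rw [hexp, hpow]
        push_cast
        ring

noncomputable def KO.Qs (K b M : ℕ) (s : ℝ) : Polynomial ℂ :=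
  Polynomial.C (KO.us K b M s) * ∏ j ∈ Finset.range K, (Polynomial.X - Polynomial.C (KO.w b M s j))

lemma KO.Qs_natDegree (K b M : ℕ) (s : ℝ) : (KO.Qs K b M s).natDegree ≤ K := by
  refine le_trans (Polynomial.natDegree_mul_le) ?_
  rw [Polynomial.natDegree_C, Polynomial.natDegree_prod_of_monic _ _
    (fun j _ => Polynomial.monic_X_sub_C _)]
  simp

lemma KO.Qs_eval (K b M : ℕ) (s : ℝ) (z : ℂ) :
    (KO.Qs K b M s).eval z = KO.us K b M s * ∏ j ∈ Finset.range K, (z - KO.w b M s j) := by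
  simp [KO.Qs, Polynomial.eval_prod]

noncomputable def KO.Q (K b M : ℕ) (h : ℝ) : Polynomial ℂ := KO.Qs K b M 0 + KO.Qs K b M h

noncomputable def KO.c (N b : ℕ) (Q : Polynomial ℂ) : ℤ → ℂ := fun lam =>
  if 0 < lam then Q.coeff ((lam - N).toNat / b)
  else (starRingEnd ℂ) (Q.coeff ((-lam - N).toNat / b))

lemma KO.npos (N b : ℕ) (hN : 1 ≤ N) (j : ℕ) : (0:ℤ) < (N:ℤ) + j*b := by
  have h1 : (1:ℤ) ≤ (N:ℤ) := by exact_mod_cast hN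
  have h2 : (0:ℤ) ≤ (j:ℤ)*(b:ℤ) := by positivity
  omega

lemma KO.toNat_div (N b : ℕ) (hb : 1 ≤ b) (j : ℕ) (x : ℤ) (hx : x = (N:ℤ) + j*b) :
    ((x - N).toNat / b) = j := by
  have : x - N = ((j*b : ℕ) : ℤ) := by rw [hx]; push_cast; ring
  rw [this, Int.toNat_natCast]
  exact Nat.mul_div_cancel j (by omega : 0 < b)

lemma KO.c_pos (N b : ℕ) (hN : 1 ≤ N) (hb : 1 ≤ b) (Q : Polynomial ℂ) (j : ℕ) :
    KO.c N b Q ((N:ℤ) + j*b) = Q.coeff j := by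
  rw [KO.c]
  simp only [if_pos (KO.npos N b hN j)]
  rw [KO.toNat_div N b hb j _ rfl]

lemma KO.c_neg (N b : ℕ) (hN : 1 ≤ N) (hb : 1 ≤ b) (Q : Polynomial ℂ) (j : ℕ) :
    KO.c N b Q (-((N:ℤ) + j*b)) = (starRingEnd ℂ) (Q.coeff j) := by
  rw [KO.c]
  have h1 := KO.npos N b hN j
  simp only [if_neg (by omega : ¬ (0:ℤ) < -((N:ℤ) + j*b))]
  rw [show (-(-((N:ℤ) + j*b)) - N) = ((N:ℤ) + j*b) - N by ring]
  rw [KO.toNat_div N b hb j _ rfl]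

lemma KO.sum_S (N K b : ℕ) (hN : 1 ≤ N) (hb : 1 ≤ b)
    (S : Finset ℤ)
    (hS : ∀ lam : ℤ, lam ∈ S ↔ ∃ j : ℕ, j ≤ K ∧ |lam| = (N : ℤ) + j * b)
    (g : ℤ → ℂ) :
    ∑ lam ∈ S, g lam
      = ∑ j ∈ Finset.range (K+1), g ((N:ℤ) + j*b)
        + ∑ j ∈ Finset.range (K+1), g (-((N:ℤ) + j*b)) := by
  have hpos : ∀ j : ℕ, (0:ℤ) < (N:ℤ) + j*b := KO.npos N b hN
  have hSeq : S = (Finset.range (K+1)).image (fun j : ℕ => (N:ℤ) + j*b)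
      ∪ (Finset.range (K+1)).image (fun j : ℕ => -((N:ℤ) + j*b)) := by
    ext lam
    rw [hS, Finset.mem_union, Finset.mem_image, Finset.mem_image]
    constructor
    · rintro ⟨j, hj, habs⟩
      rcases (abs_eq ((hpos j).le)).mp habs with h | h
      · exact Or.inl ⟨j, Finset.mem_range.mpr (Nat.lt_succ_iff.mpr hj), h.symm⟩
      · exact Or.inr ⟨j, Finset.mem_range.mpr (Nat.lt_succ_iff.mpr hj), h.symm⟩
    · rintro (⟨j, hj, h⟩ | ⟨j, hj, h⟩)
      · exact ⟨j, Nat.lt_succ_iff.mp (Finset.mem_range.mp hj),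
          by rw [← h, abs_of_pos (hpos j)]⟩
      · exact ⟨j, Nat.lt_succ_iff.mp (Finset.mem_range.mp hj),
          by rw [← h, abs_neg, abs_of_pos (hpos j)]⟩
  have hb' : (b:ℤ) ≠ 0 := by
    have : (1:ℤ) ≤ (b:ℤ) := by exact_mod_cast hb
    omega
  have hinj1 : ∀ i ∈ Finset.range (K+1), ∀ j ∈ Finset.range (K+1),
      (N:ℤ) + i*b = (N:ℤ) + j*b → i = j := by
    intro i _ j _ h
    have h2 : (i:ℤ)*b = (j:ℤ)*b := by omega
    have := mul_right_cancel₀ hb' h2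
    exact_mod_cast this
  have hinj2 : ∀ i ∈ Finset.range (K+1), ∀ j ∈ Finset.range (K+1),
      -((N:ℤ) + i*b) = -((N:ℤ) + j*b) → i = j := by
    intro i hi j hj h
    exact hinj1 i hi j hj (by omega)
  have hdisj : Disjoint ((Finset.range (K+1)).image (fun j : ℕ => (N:ℤ) + j*b))
      ((Finset.range (K+1)).image (fun j : ℕ => -((N:ℤ) + j*b))) := by
    rw [Finset.disjoint_left]
    rintro a ha hb2
    rw [Finset.mem_image] at ha hb2
    obtain ⟨i, _, hi⟩ := ha
    obtain ⟨j, _, hj⟩ := hb2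
    have := hpos i
    have := hpos j
    omega
  rw [hSeq, Finset.sum_union hdisj, Finset.sum_image hinj1, Finset.sum_image hinj2]

lemma KO.master (N K b M : ℕ) (hN : 1 ≤ N) (hb : 1 ≤ b) (hM : (M:ℝ) = b*K + 2*N)
    (S : Finset ℤ)
    (hS : ∀ lam : ℤ, lam ∈ S ↔ ∃ j : ℕ, j ≤ K ∧ |lam| = (N : ℤ) + j * b)
    (h t : ℝ) :
    ∑ lam ∈ S, KO.c N b (KO.Q K b M h) lam
        * Complex.exp (2 * Real.pi * Complex.I * (lam : ℂ) * (t : ℂ))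
      = ↑(KO.F K b M t + KO.F K b M (t - h)) := by
  rw [KO.sum_S N K b hN hb S hS]
  set Q := KO.Q K b M h with hQdef
  set ζ : ℂ := Complex.exp (↑(2*π*((b:ℝ)*t)) * I) with hζ
  set E0 : ℂ := Complex.exp (↑(2*π*((N:ℝ)*t)) * I) with hE0
  have hdeg : Q.natDegree < K + 1 :=
    Nat.lt_succ_of_le (le_trans (Polynomial.natDegree_add_le _ _)
      (max_le (KO.Qs_natDegree K b M 0) (KO.Qs_natDegree K b M h)))
  have heval : ∑ j ∈ Finset.range (K+1), E0 * (Q.coeff j * ζ^j) = E0 * Q.eval ζ := by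
    rw [Polynomial.eval_eq_sum_range' hdeg, Finset.mul_sum]
  have hterm1 : ∀ j ∈ Finset.range (K+1),
      KO.c N b Q ((N:ℤ)+j*b) * Complex.exp (2 * Real.pi * Complex.I * ((((N:ℤ)+j*b) : ℤ):ℂ) * (t:ℂ))
        = E0 * (Q.coeff j * ζ^j) := by
    intro j _
    rw [KO.c_pos N b hN hb Q j]
    have harg : (2 * (Real.pi:ℂ) * Complex.I * ((((N:ℤ)+j*b) : ℤ):ℂ) * (t:ℂ))
        = ↑(2*π*((N:ℝ)*t))*I + (j:ℕ) * (↑(2*π*((b:ℝ)*t))*I) := by push_cast; ring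
    rw [harg, Complex.exp_add, Complex.exp_nat_mul]
    rw [hζ, hE0]
    ring
  have hterm2 : ∀ j ∈ Finset.range (K+1),
      KO.c N b Q (-((N:ℤ)+j*b))
          * Complex.exp (2 * Real.pi * Complex.I * (((-((N:ℤ)+j*b)) : ℤ):ℂ) * (t:ℂ))
        = (starRingEnd ℂ) (E0 * (Q.coeff j * ζ^j)) := by
    intro j _
    rw [KO.c_neg N b hN hb Q j]
    have harg : (2 * (Real.pi:ℂ) * Complex.I * (((-((N:ℤ)+j*b)) : ℤ):ℂ) * (t:ℂ))
        = ↑(-(2*π*((N:ℝ)*t)))*I + (j:ℕ) * (↑(-(2*π*((b:ℝ)*t)))*I) := by push_cast; ring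
    rw [harg, Complex.exp_add, Complex.exp_nat_mul]
    rw [map_mul, map_mul, map_pow, hζ, hE0, KO.conj_exp_I, KO.conj_exp_I]
    ring
  rw [Finset.sum_congr rfl hterm1, Finset.sum_congr rfl hterm2, ← map_sum, heval,
    Complex.add_conj]
  congr 1
  have hZ : E0 * Q.eval ζ
      = ↑(KO.Fprod K b M (t-0)) * Complex.exp (↑(π*((M:ℝ)*(t-0))) * I) / (2*I)
        + ↑(KO.Fprod K b M (t-h)) * Complex.exp (↑(π*((M:ℝ)*(t-h))) * I) / (2*I) := by
    rw [hQdef, KO.Q, Polynomial.eval_add, mul_add, KO.Qs_eval, KO.Qs_eval]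
    rw [← KO.keyZ N K b M hM 0 t, ← KO.keyZ N K b M hM h t]
    rw [hζ, hE0]
    ring
  rw [hZ, Complex.add_re, KO.re_formula, KO.re_formula, KO.F, KO.F, sub_zero]
  ring

lemma KO.F_zero (K b M : ℕ) (x : ℝ) (m : ℤ) (hx : (M:ℝ)*x = m) : KO.F K b M x = 0 := by
  rw [KO.F, show π*((M:ℝ)*x) = (m:ℝ)*π by rw [hx]; ring, Real.sin_int_mul_pi, mul_zero]

lemma KO.prod_neg_eq {m : ℕ} (f : ℕ → ℝ) :
    ∏ i ∈ Finset.range m, (-(f i)) = (-1:ℝ)^m * ∏ i ∈ Finset.range m, f i := by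
  calc ∏ i ∈ Finset.range m, (-(f i)) = ∏ i ∈ Finset.range m, ((-1) * f i) := by simp
  _ = (∏ i ∈ Finset.range m, (-1:ℝ)) * ∏ i ∈ Finset.range m, f i := Finset.prod_mul_distrib
  _ = (-1:ℝ)^m * ∏ i ∈ Finset.range m, f i := by rw [Finset.prod_const, Finset.card_range]

lemma KO.F_pos (N K b M : ℕ) (hN : 1 ≤ N) (hb : 1 ≤ b) (hbN : b < 2*N)
    (hM : (M:ℝ) = b*K + 2*N) (x : ℝ) (hx0 : 0 < x) (hx1 : x < ((K:ℝ)+1)/(M:ℝ))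
    (hni : ∀ m : ℤ, (M:ℝ)*x ≠ m) : 0 < KO.F K b M x := by
  have hbR : (1:ℝ) ≤ b := by exact_mod_cast hb
  have hNR : (1:ℝ) ≤ N := by exact_mod_cast hN
  have hbNR : (b:ℝ) < 2*N := by exact_mod_cast hbN
  have hbK0 : (0:ℝ) ≤ (b:ℝ)*K := by positivity
  have hK0 : (0:ℝ) ≤ (K:ℝ) := Nat.cast_nonneg K
  have hMpos : (0:ℝ) < M := by rw [hM]; nlinarith
  have hbK1 : (b:ℝ)*((K:ℝ)+1) < M := by rw [hM]; nlinarith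
  have hbKM : (b:ℝ)*(K:ℝ) < M := by rw [hM]; nlinarith
  rw [KO.F, KO.Fprod]
  set y : ℝ := (M:ℝ)*x with hy
  have hy0 : 0 < y := by rw [hy]; positivity
  have hyK : y < (K:ℝ)+1 := by
    rw [hy]
    calc (M:ℝ)*x < M*(((K:ℝ)+1)/M) := mul_lt_mul_of_pos_left hx1 hMpos
    _ = (K:ℝ)+1 := by field_simp
  set k : ℤ := ⌊y⌋ with hk
  have hk0 : 0 ≤ k := Int.floor_nonneg.mpr hy0.le
  have hky : (k:ℝ) < y := lt_of_le_of_ne (Int.floor_le y) (fun hc => (hni k) hc.symm)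
  have hyk1 : y < (k:ℝ)+1 := Int.lt_floor_add_one y
  have hkK : k ≤ K := by
    have h1 : k < (K:ℤ)+1 := by
      rw [hk, Int.floor_lt]
      push_cast
      exact hyK
    omega
  set k' : ℕ := k.toNat with hk'
  have hk'k : (k':ℝ) = (k:ℝ) := by rw [hk']; exact_mod_cast Int.toNat_of_nonneg hk0
  have hk'K : k' ≤ K := by omega
  have hbx : (b:ℝ)*x < 1 := by
    have h1 : (b:ℝ)*y < (b:ℝ)*((K:ℝ)+1) := mul_lt_mul_of_pos_left hyK (by linarith)
    have h0 : (b:ℝ)*y = (M:ℝ)*((b:ℝ)*x) := by rw [hy]; ring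
    have h2 : (M:ℝ)*((b:ℝ)*x) < M*1 := by rw [← h0]; rw [mul_one]; linarith
    exact lt_of_mul_lt_mul_left h2 hMpos.le
  have hs0 : Real.sin (π*y) = (-1:ℝ)^k' * Real.sin (π*(y - k')) := by
    have h1 : π*y = π*(y - k') + (k':ℤ)*π := by push_cast; ring
    rw [h1, Real.sin_add_int_mul_pi, zpow_natCast]
  have hs0pos : 0 < Real.sin (π*(y - k')) := by
    apply Real.sin_pos_of_pos_of_lt_pi
    · apply mul_pos Real.pi_pos
      rw [hk'k]; linarith
    · have h1 : y - (k':ℝ) < 1 := by rw [hk'k]; linarith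
      nlinarith [Real.pi_pos]
  set g : ℕ → ℝ := fun j => Real.sin (π*((b:ℝ)*(x - ((j:ℝ)+1)/M))) with hg
  have hgpos : ∀ j ∈ Finset.range k', 0 < g j := by
    intro j hj
    have hjk : (j:ℝ)+1 ≤ (k':ℝ) := by exact_mod_cast Nat.succ_le_of_lt (Finset.mem_range.mp hj)
    have hlt : ((j:ℝ)+1)/M < x := by
      rw [div_lt_iff₀ hMpos]
      rw [hk'k] at hjk
      nlinarith
    have hj0 : (0:ℝ) ≤ ((j:ℝ)+1)/M := by positivity
    have harg1 : 0 < (b:ℝ)*(x - ((j:ℝ)+1)/M) :=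
      mul_pos (by linarith) (by linarith)
    have harg2 : (b:ℝ)*(x - ((j:ℝ)+1)/M) < 1 := by
      have h1 : (b:ℝ)*(x - ((j:ℝ)+1)/M) ≤ (b:ℝ)*x :=
        mul_le_mul_of_nonneg_left (by linarith) (by linarith)
      linarith
    simp only [hg]
    apply Real.sin_pos_of_pos_of_lt_pi
    · positivity
    · have := mul_lt_mul_of_pos_left harg2 Real.pi_pos
      simpa using this
  have hgneg : ∀ i ∈ Finset.range (K - k'), 0 < -(g (k' + i)) := by
    intro i hi
    have hiK : ((k' + i : ℕ):ℝ) + 1 ≤ (K:ℝ) := by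
      have := Finset.mem_range.mp hi
      exact_mod_cast Nat.succ_le_of_lt (by omega : k' + i < K)
    have hjge : (k':ℝ) + 1 ≤ ((k'+i : ℕ):ℝ) + 1 := by
      push_cast
      linarith [Nat.cast_nonneg (α := ℝ) i]
    have hlt : x < (((k'+i:ℕ):ℝ)+1)/M := by
      rw [lt_div_iff₀ hMpos]
      rw [hk'k] at hjge
      have hxy : x*(M:ℝ) = y := by rw [hy]; ring
      rw [hxy]
      linarith
    have harg1 : 0 < (b:ℝ)*((((k'+i:ℕ):ℝ)+1)/M - x) :=
      mul_pos (by linarith) (by linarith)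
    have harg2 : (b:ℝ)*((((k'+i:ℕ):ℝ)+1)/M - x) < 1 := by
      have h3 : (b:ℝ)*((((k'+i:ℕ):ℝ)+1)) ≤ (b:ℝ)*(K:ℝ) :=
        mul_le_mul_of_nonneg_left hiK (by linarith)
      have h4 : (b:ℝ)*((((k'+i:ℕ):ℝ)+1))/M < 1 := (div_lt_one hMpos).mpr (by linarith)
      have h5 : (b:ℝ)*((((k'+i:ℕ):ℝ)+1)/M - x) ≤ (b:ℝ)*((((k'+i:ℕ):ℝ)+1)/M) :=
        mul_le_mul_of_nonneg_left (by linarith) (by linarith)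
      have h6 : (b:ℝ)*((((k'+i:ℕ):ℝ)+1)/M) = (b:ℝ)*((((k'+i:ℕ):ℝ)+1))/M :=
        (mul_div_assoc _ _ _).symm
      linarith
    have hflip : π*((b:ℝ)*(x - (((k'+i:ℕ):ℝ)+1)/M))
        = -(π*((b:ℝ)*((((k'+i:ℕ):ℝ)+1)/M - x))) := by ring
    simp only [hg]
    rw [hflip, Real.sin_neg, neg_neg]
    apply Real.sin_pos_of_pos_of_lt_pi
    · positivity
    · have := mul_lt_mul_of_pos_left harg2 Real.pi_pos
      simpa using this
  have hsplit : ∏ j ∈ Finset.range K, g j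
      = (∏ j ∈ Finset.range k', g j) * ∏ i ∈ Finset.range (K - k'), g (k' + i) := by
    have hKk : K = k' + (K - k') := by omega
    conv_lhs => rw [hKk]
    exact Finset.prod_range_add g k' (K - k')
  have e2 : ∏ i ∈ Finset.range (K - k'), g (k' + i)
      = (-1:ℝ)^(K - k') * ∏ i ∈ Finset.range (K - k'), (-(g (k' + i))) := by
    rw [KO.prod_neg_eq, ← mul_assoc, ← pow_add,
      show (K - k') + (K - k') = 2*(K - k') by omega, pow_mul]
    norm_num
  have hP1 : 0 < ∏ j ∈ Finset.range k', g j := Finset.prod_pos hgpos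
  have hP2 : 0 < ∏ i ∈ Finset.range (K - k'), (-(g (k' + i))) := Finset.prod_pos hgneg
  rw [hsplit, e2, hs0]
  have hre : (-1:ℝ)^K * 2^K
        * ((∏ j ∈ Finset.range k', g j)
            * ((-1:ℝ)^(K - k') * ∏ i ∈ Finset.range (K - k'), (-(g (k' + i)))))
        * ((-1:ℝ)^k' * Real.sin (π*(y - k')))
      = (-1:ℝ)^(K + ((K - k') + k'))
        * (2^K * (∏ j ∈ Finset.range k', g j)
            * (∏ i ∈ Finset.range (K - k'), (-(g (k' + i)))) * Real.sin (π*(y - k'))) := by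
    ring
  rw [hre, show K + ((K - k') + k') = 2*K by omega, pow_mul, neg_one_sq, one_pow, one_mul]
  have h2K : (0:ℝ) < 2^K := by positivity
  exact mul_pos (mul_pos (mul_pos h2K hP1) hP2) hs0pos

/-- Lower bound in **Theorem 3** (Kozma–Oravecz): for every `ε > 0` there is a real
trigonometric polynomial with spectrum in `S = {λ ∈ ℤ : |λ| = N + jb, 0 ≤ j ≤ K}`
(where `b < 2N`) which is strictly positive on an interval `I ⊆ [0,1]` of length at
least `(K+1)/(bK+2N) - ε`. -/
theorem exists_pos_on_long_interval
    (N K b : ℕ) (hN : 1 ≤ N) (hb : 1 ≤ b) (hbN : b < 2 * N)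
    (S : Finset ℤ)
    (hS : ∀ lam : ℤ, lam ∈ S ↔ ∃ j : ℕ, j ≤ K ∧ |lam| = (N : ℤ) + j * b)
    (ε : ℝ) (hε : 0 < ε) :
    ∃ (c : ℤ → ℂ) (u v : ℝ), 0 ≤ u ∧ u ≤ v ∧ v ≤ 1 ∧
      ((K : ℝ) + 1) / (b * K + 2 * N) - ε ≤ v - u ∧
      (∀ t : ℝ, (∑ lam ∈ S,
        c lam * Complex.exp (2 * Real.pi * Complex.I * (lam : ℂ) * (t : ℂ))).im = 0) ∧
      (∀ t ∈ Set.Icc u v, 0 < (∑ lam ∈ S,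
        c lam * Complex.exp (2 * Real.pi * Complex.I * (lam : ℂ) * (t : ℂ))).re) := by
  have hbN' : b < 2*N := hbN
  set M : ℕ := b*K + 2*N with hMdef
  have hM : (M:ℝ) = (b:ℝ)*K + 2*N := by rw [hMdef]; push_cast; ring
  have hbR : (1:ℝ) ≤ b := by exact_mod_cast hb
  have hNR : (1:ℝ) ≤ N := by exact_mod_cast hN
  have hK0 : (0:ℝ) ≤ (K:ℝ) := Nat.cast_nonneg K
  have hbK0 : (0:ℝ) ≤ (b:ℝ)*K := by positivity
  have hKbK : (K:ℝ) ≤ (b:ℝ)*K := by nlinarith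
  have hMpos : (0:ℝ) < M := by rw [hM]; nlinarith
  set L : ℝ := ((K:ℝ)+1)/(M:ℝ) with hL
  have hL0 : 0 < L := by rw [hL]; positivity
  have hL1 : L < 1 := by
    rw [hL, div_lt_one hMpos, hM]
    nlinarith
  set δ : ℝ := min (ε/2) (L/4) with hδ
  have hδ0 : 0 < δ := lt_min (by linarith) (by linarith)
  have hδε : δ ≤ ε/2 := min_le_left _ _
  have hδL : δ ≤ L/4 := min_le_right _ _
  set h : ℝ := min (δ/2) (1/(2*(M:ℝ))) with hh
  have hh0 : 0 < h := lt_min (by linarith) (by positivity)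
  have hhδ : h ≤ δ/2 := min_le_left _ _
  have hhM : (M:ℝ)*h ≤ 1/2 := by
    have h1 : h ≤ 1/(2*(M:ℝ)) := min_le_right _ _
    have h2 : (M:ℝ)*h ≤ (M:ℝ)*(1/(2*(M:ℝ))) := mul_le_mul_of_nonneg_left h1 hMpos.le
    have h3 : (M:ℝ)*(1/(2*(M:ℝ))) = 1/2 := by field_simp
    linarith
  refine ⟨KO.c N b (KO.Q K b M h), δ, L - δ, by linarith, by linarith, by linarith, ?_, ?_, ?_⟩
  · -- length
    have : ((K:ℝ)+1)/((b:ℝ)*K + 2*N) = L := by rw [hL, hM]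
    rw [this]
    linarith
  · intro t
    rw [KO.master N K b M hN hb hM S hS h t]
    exact Complex.ofReal_im _
  · intro t ht
    obtain ⟨htu, htv⟩ := Set.mem_Icc.mp ht
    rw [KO.master N K b M hN hb hM S hS h t, Complex.ofReal_re]
    have ht0 : 0 < t := by linarith
    have htL : t < L := by linarith
    have ht0' : 0 < t - h := by linarith
    have ht'L : t - h < L := by linarith
    by_cases hc : ∃ m : ℤ, (M:ℝ)*t = m
    · obtain ⟨m, hm⟩ := hc
      have hFt : KO.F K b M t = 0 := KO.F_zero K b M t m hm
      have hni : ∀ m' : ℤ, (M:ℝ)*(t-h) ≠ m' := by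
        intro m' hm'
        have e1 : (M:ℝ)*h = (m:ℝ) - m' := by
          have e0 : (M:ℝ)*(t-h) = (M:ℝ)*t - M*h := by ring
          rw [e0, hm] at hm'
          linarith
        have h1 : 0 < (M:ℝ)*h := by positivity
        have h2 : m' < m := by
          have : (m':ℝ) < m := by linarith
          exact_mod_cast this
        have h3 : (1:ℝ) ≤ (m:ℝ) - m' := by
          have : (1:ℤ) ≤ m - m' := by omega
          exact_mod_cast this
        linarith
      have hpos := KO.F_pos N K b M hN hb hbN' hM (t-h) ht0' ht'L hni
      rw [hFt, zero_add]
      exact hpos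
    · push_neg at hc
      have h1 := KO.F_pos N K b M hN hb hbN' hM t ht0 htL hc
      have h2 : 0 ≤ KO.F K b M (t-h) := by
        by_cases hc2 : ∃ m : ℤ, (M:ℝ)*(t-h) = m
        · obtain ⟨m, hm⟩ := hc2
          rw [KO.F_zero K b M (t-h) m hm]
        · push_neg at hc2
          exact (KO.F_pos N K b M hN hb hbN' hM (t-h) ht0' ht'L hc2).le
      linarith
end

section
/- Let N, K, b be integers with N ≥ 1, K ≥ 0, b ≥ 1 and b < 2N. Set η = 1/(bK+2N), a = (K+1)·η, τ = exp(2πiη), and Q(z) = c·∏_{j=1}^{K}(z^b − τ^{jb}) where the constant c ∈ ℂ is chosen so that Q(1) = −i. Define f(t) = Re( exp(2πiNt)·Q(exp(2πit)) ). Then f is a real trigonometric polynomial with spectrum contained in S = {λ ∈ ℤ : |λ| = N + jb for some 0 ≤ j ≤ K}, f(t) ≥ 0 for every t ∈ [0,a], and for t ∈ [0,a] one has f(t) = 0 if and only if t ∈ {0, η, 2η, …, Kη, (K+1)η}. -/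
open scoped BigOperators
open Finset

noncomputable def KOE (θ : ℝ) : ℂ := Complex.exp ((θ : ℂ) * Complex.I)

lemma KOE_eq {x y : ℝ} (h : x = y) : KOE x = KOE y := by rw [h]

lemma KOE_add (x y : ℝ) : KOE (x + y) = KOE x * KOE y := by
  simp [KOE, ← Complex.exp_add]; ring_nf

lemma KOE_zero : KOE 0 = 1 := by simp [KOE]

lemma KOE_pow (x : ℝ) (n : ℕ) : KOE x ^ n = KOE (n * x) := by
  rw [KOE, KOE, ← Complex.exp_nat_mul]
  congr 1
  push_cast
  ring

lemma KOE_conj (x : ℝ) : (starRingEnd ℂ) (KOE x) = KOE (-x) := by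
  rw [KOE, KOE, ← Complex.exp_conj]
  congr 1
  simp

lemma KOE_sum (s : Finset ℕ) (g : ℕ → ℝ) : ∏ j ∈ s, KOE (g j) = KOE (∑ j ∈ s, g j) := by
  simp only [KOE]
  rw [Complex.ofReal_sum, Finset.sum_mul, Complex.exp_sum]

lemma KOE_sub_neg (θ : ℝ) : KOE θ - KOE (-θ) = 2 * Complex.I * (Real.sin θ : ℂ) := by
  have h : ((-θ : ℝ) : ℂ) * Complex.I = (-(θ:ℂ)) * Complex.I := by push_cast; ring
  rw [KOE, KOE, h, Complex.exp_mul_I, Complex.exp_mul_I, Complex.cos_neg, Complex.sin_neg,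
    Complex.ofReal_sin]
  ring

lemma KO_factor (x y : ℝ) :
    KOE (2*Real.pi*x) - KOE (2*Real.pi*y)
      = KOE (Real.pi*(x+y)) * (2 * Complex.I * (Real.sin (Real.pi*(x-y)) : ℂ)) := by
  have h1 : 2*Real.pi*x = Real.pi*(x+y) + Real.pi*(x-y) := by ring
  have h2 : 2*Real.pi*y = Real.pi*(x+y) + -(Real.pi*(x-y)) := by ring
  rw [h1, h2, KOE_add, KOE_add, ← mul_sub, KOE_sub_neg]

lemma KO_cos_nat_pi (m : ℕ) : Real.cos ((m:ℝ) * Real.pi) = (-1)^m := by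
  have := Real.cos_nat_mul_pi_sub 0 m
  simpa using this

lemma KO_sin_shift (m : ℕ) (x : ℝ) :
    Real.sin (Real.pi * x) = (-1)^m * Real.sin (Real.pi * (x - m)) := by
  have h : Real.pi * x = Real.pi * (x - m) + (m:ℝ) * Real.pi := by ring
  rw [h, Real.sin_add, Real.sin_nat_mul_pi, KO_cos_nat_pi]
  ring

lemma KO_prod_neg_sign (s : Finset ℕ) (f : ℕ → ℝ) (h : ∀ j ∈ s, f j < 0) :
    0 < (-1:ℝ)^s.card * ∏ j ∈ s, f j := by
  have h1 : ∏ j ∈ s, f j = (-1:ℝ)^s.card * ∏ j ∈ s, (-f j) := by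
    rw [← Finset.prod_const, ← Finset.prod_mul_distrib]
    exact Finset.prod_congr rfl fun j _ => by ring
  have hp : 0 < ∏ j ∈ s, (-f j) := Finset.prod_pos fun j hj => by linarith [h j hj]
  have he : (-1:ℝ)^s.card * (-1:ℝ)^s.card = 1 := by
    rw [← pow_add]; exact Even.neg_one_pow ⟨s.card, rfl⟩
  rw [h1, ← mul_assoc, he, one_mul]
  exact hp

set_option maxHeartbeats 1000000 in
lemma KO_spectrum (N K b : ℕ) (S : Finset ℤ)
    (hS : ∀ lam : ℤ, lam ∈ S ↔ ∃ j : ℕ, j ≤ K ∧ |lam| = (N : ℤ) + j * b)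
    (τ : ℂ) (c : ℂ) (Q : ℂ → ℂ)
    (hQ : ∀ z : ℂ, Q z = c * ∏ j ∈ Finset.Icc 1 K, (z ^ b - τ ^ (j * b)))
    (f : ℝ → ℝ)
    (hf : ∀ t : ℝ, f t = (Complex.exp (2 * Real.pi * Complex.I * (N : ℂ) * (t : ℂ)) *
        Q (Complex.exp (2 * Real.pi * Complex.I * (t : ℂ)))).re) :
    ∃ co : ℤ → ℂ, ∀ t : ℝ, ((f t : ℝ) : ℂ) = ∑ lam ∈ S,
        co lam * Complex.exp (2 * Real.pi * Complex.I * (lam : ℂ) * (t : ℂ)) := by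
  classical
  have hexp2 : ∀ (z : ℂ) (x : ℝ), z = (x:ℂ) * Complex.I → Complex.exp z = KOE x := by
    intro z x h; rw [h]; rfl
  set P1 : Finset (Finset ℕ) := (Finset.Icc 1 K).powerset with hP1
  set w : Finset ℕ → ℂ := fun T => ∏ j ∈ (Finset.Icc 1 K) \ T, (-(τ^(j*b))) with hwdef
  set lamOf : Finset ℕ → ℤ := fun T => (N:ℤ) + (b:ℤ)*T.card with hlamdef
  have hcard : ∀ T ∈ P1, T.card ≤ K := by
    intro T hT
    have h := Finset.card_le_card (Finset.mem_powerset.1 (by rwa [hP1] at hT))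
    simpa [Nat.card_Icc] using h
  have hmem1 : ∀ T ∈ P1, lamOf T ∈ S := by
    intro T hT
    refine (hS _).2 ⟨T.card, hcard T hT, ?_⟩
    simp only [hlamdef]
    rw [abs_of_nonneg (by positivity)]
    ring
  have hmem2 : ∀ T ∈ P1, -lamOf T ∈ S := by
    intro T hT
    refine (hS _).2 ⟨T.card, hcard T hT, ?_⟩
    simp only [hlamdef]
    rw [abs_neg, abs_of_nonneg (by positivity)]
    ring
  have hgexp : ∀ t : ℝ, KOE (2*Real.pi*((N:ℝ)*t)) * Q (KOE (2*Real.pi*t))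
      = ∑ T ∈ P1, (c * w T) * KOE (2*Real.pi*(((N:ℝ) + (b:ℝ)*T.card)*t)) := by
    intro t
    rw [hQ]
    have hpa : ∏ j ∈ Finset.Icc 1 K, ((KOE (2*Real.pi*t)) ^ b - τ ^ (j*b))
        = ∑ T ∈ P1, (KOE (2*Real.pi*t)) ^ (b*T.card) * w T := by
      calc ∏ j ∈ Finset.Icc 1 K, ((KOE (2*Real.pi*t)) ^ b - τ ^ (j*b))
          = ∏ j ∈ Finset.Icc 1 K, ((KOE (2*Real.pi*t)) ^ b + -(τ ^ (j*b))) := by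
            apply Finset.prod_congr rfl; intros; ring
        _ = ∑ T ∈ P1, (∏ _j ∈ T, (KOE (2*Real.pi*t)) ^ b)
              * ∏ j ∈ Finset.Icc 1 K \ T, -(τ^(j*b)) :=
            Finset.prod_add _ _ _
        _ = _ := by
            apply Finset.sum_congr rfl
            intro T hT
            rw [Finset.prod_const, ← pow_mul]
    rw [hpa, Finset.mul_sum, Finset.mul_sum]
    apply Finset.sum_congr rfl
    intro T hT
    rw [KOE_pow]
    have hph : KOE (2*Real.pi*((N:ℝ)*t)) * KOE (((b*T.card : ℕ):ℝ) * (2*Real.pi*t))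
        = KOE (2*Real.pi*(((N:ℝ) + (b:ℝ)*T.card)*t)) := by
      rw [← KOE_add]; exact KOE_eq (by push_cast; ring)
    linear_combination (c * w T) * hph
  set co : ℤ → ℂ := fun lam =>
      (∑ T ∈ P1.filter (fun T => lamOf T = lam), c * w T)/2
      + (∑ T ∈ P1.filter (fun T => -lamOf T = lam), (starRingEnd ℂ) (c * w T))/2 with hco
  have hFG : ∀ t : ℝ, (((f t : ℝ)) : ℂ)
      = (∑ T ∈ P1, (c * w T) * KOE (2*Real.pi*(((N:ℝ)+(b:ℝ)*T.card)*t)))/2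
        + (∑ T ∈ P1, (starRingEnd ℂ) (c * w T)
            * KOE (-(2*Real.pi*(((N:ℝ)+(b:ℝ)*T.card)*t))))/2 := by
    intro t
    rw [hf t, hexp2 _ (2*Real.pi*((N:ℝ)*t)) (by push_cast; ring),
      hexp2 _ (2*Real.pi*t) (by push_cast; ring)]
    have h1 : ∀ z : ℂ, ((z.re : ℝ) : ℂ) = (z + (starRingEnd ℂ) z)/2 := by
      intro z
      rw [Complex.add_conj]
      push_cast
      ring
    rw [h1, hgexp t, map_sum, add_div]
    congr 1
    apply congrArg (fun x : ℂ => x/2)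
    apply Finset.sum_congr rfl
    intro T hT
    rw [map_mul, KOE_conj]
  refine ⟨co, ?_⟩
  intro t
  rw [hFG t]
  have hconv : ∀ lam : ℤ, Complex.exp (2*(Real.pi:ℂ)*Complex.I*(lam:ℂ)*(t:ℂ))
      = KOE (2*Real.pi*(((lam:ℝ))*t)) := by
    intro lam; apply hexp2; push_cast; ring
  have hstep : ∀ lam ∈ S, co lam * Complex.exp (2*(Real.pi:ℂ)*Complex.I*(lam:ℂ)*(t:ℂ))
      = (∑ T ∈ P1.filter (fun T => lamOf T = lam),
          (c*w T) * KOE (2*Real.pi*(((N:ℝ)+(b:ℝ)*T.card)*t)))/2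
        + (∑ T ∈ P1.filter (fun T => -lamOf T = lam),
          (starRingEnd ℂ) (c*w T) * KOE (-(2*Real.pi*(((N:ℝ)+(b:ℝ)*T.card)*t))))/2 := by
    intro lam _
    rw [hconv lam, hco]
    simp only []
    rw [add_mul, div_mul_eq_mul_div, div_mul_eq_mul_div, Finset.sum_mul, Finset.sum_mul]
    congr 1
    · apply congrArg (fun x : ℂ => x/2)
      apply Finset.sum_congr rfl
      intro T hT
      have hT' := (Finset.mem_filter.1 hT).2
      congr 1
      apply KOE_eq
      have h' : ((lam:ℝ)) = (N:ℝ) + (b:ℝ)*T.card := by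
        rw [← hT']
        simp only [hlamdef]
        push_cast
        ring
      rw [h']
    · apply congrArg (fun x : ℂ => x/2)
      apply Finset.sum_congr rfl
      intro T hT
      have hT' := (Finset.mem_filter.1 hT).2
      congr 1
      apply KOE_eq
      have h' : ((lam:ℝ)) = -((N:ℝ) + (b:ℝ)*T.card) := by
        rw [← hT']
        simp only [hlamdef]
        push_cast
        ring
      rw [h']
      ring
  rw [Finset.sum_congr rfl hstep, Finset.sum_add_distrib, ← Finset.sum_div, ← Finset.sum_div,
    Finset.sum_fiberwise_of_maps_to hmem1, Finset.sum_fiberwise_of_maps_to hmem2]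

set_option maxHeartbeats 1000000 in
/-- The extremal polynomial in the proof of **Theorem 3** (Kozma–Oravecz): with
`η = 1/(bK+2N)`, `a = (K+1)η`, `τ = exp(2πiη)` and `Q(z) = c·∏_{j=1}^{K}(z^b - τ^{jb})`
normalized by `Q(1) = -i`, the function `f(t) = Re(exp(2πiNt)·Q(exp(2πit)))` is a real
trigonometric polynomial with spectrum in `S = {λ : |λ| = N + jb, 0 ≤ j ≤ K}`, is
nonnegative on `[0, a]`, and vanishes there exactly at `0, η, 2η, …, (K+1)η`. -/
theorem extremal_polynomial_properties
    (N K b : ℕ) (hN : 1 ≤ N) (hb : 1 ≤ b) (hbN : b < 2 * N)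
    (S : Finset ℤ)
    (hS : ∀ lam : ℤ, lam ∈ S ↔ ∃ j : ℕ, j ≤ K ∧ |lam| = (N : ℤ) + j * b)
    (η a : ℝ) (hη : η = 1 / ((b : ℝ) * K + 2 * N)) (ha : a = ((K : ℝ) + 1) * η)
    (τ : ℂ) (hτ : τ = Complex.exp (2 * Real.pi * Complex.I * (η : ℂ)))
    (c : ℂ) (Q : ℂ → ℂ)
    (hQ : ∀ z : ℂ, Q z = c * ∏ j ∈ Finset.Icc 1 K, (z ^ b - τ ^ (j * b)))
    (hc : Q 1 = -Complex.I)
    (f : ℝ → ℝ)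
    (hf : ∀ t : ℝ, f t = (Complex.exp (2 * Real.pi * Complex.I * (N : ℂ) * (t : ℂ)) *
        Q (Complex.exp (2 * Real.pi * Complex.I * (t : ℂ)))).re) :
    (∃ co : ℤ → ℂ, ∀ t : ℝ, ((f t : ℝ) : ℂ) = ∑ lam ∈ S,
        co lam * Complex.exp (2 * Real.pi * Complex.I * (lam : ℂ) * (t : ℂ))) ∧
    (∀ t ∈ Set.Icc 0 a, 0 ≤ f t) ∧
    (∀ t ∈ Set.Icc 0 a, (f t = 0 ↔ ∃ j : ℕ, j ≤ K + 1 ∧ t = (j : ℝ) * η)) := by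
  classical
  have hπ := Real.pi_pos
  have hN' : (1:ℝ) ≤ (N:ℝ) := by exact_mod_cast hN
  have hb' : (1:ℝ) ≤ (b:ℝ) := by exact_mod_cast hb
  set D : ℝ := (b:ℝ)*K + 2*N with hDdef
  have hD : 0 < D := by
    have : (0:ℝ) ≤ (b:ℝ)*K := by positivity
    simp only [hDdef]; nlinarith
  have hη0 : 0 < η := by rw [hη]; positivity
  have hηD : η * D = 1 := by rw [hη]; field_simp
  have hKD : (b:ℝ) * K * η < 1 := by nlinarith [Nat.cast_nonneg (α := ℝ) K]
  -- exp argument conversions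
  have hexp2 : ∀ (z : ℂ) (x : ℝ), z = (x:ℂ) * Complex.I → Complex.exp z = KOE x := by
    intro z x h; rw [h]; rfl
  -- τ powers
  have hτj : ∀ j : ℕ, τ ^ (j*b) = KOE (2*Real.pi*((b:ℝ)*((j:ℝ)*η))) := by
    intro j
    rw [hτ, ← Complex.exp_nat_mul]
    apply hexp2
    push_cast
    ring
  set P : ℝ → ℝ := fun t => ∏ j ∈ Finset.Icc 1 K,
      Real.sin (Real.pi*((b:ℝ)*t - (b:ℝ)*((j:ℝ)*η))) with hPdef
  set J : ℝ := ∑ j ∈ Finset.Icc 1 K, (j:ℝ) with hJdef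
  set CC : ℂ := c * (2*Complex.I)^K * KOE (Real.pi*((b:ℝ)*η*J)) with hCCdef
  have hQt : ∀ t : ℝ, Q (KOE (2*Real.pi*t)) =
      c * ∏ j ∈ Finset.Icc 1 K,
        (KOE (Real.pi*((b:ℝ)*t + (b:ℝ)*((j:ℝ)*η))) *
          (2*Complex.I*(Real.sin (Real.pi*((b:ℝ)*t - (b:ℝ)*((j:ℝ)*η))) : ℂ))) := by
    intro t
    rw [hQ]
    congr 1
    refine Finset.prod_congr rfl fun j hj => ?_
    rw [KOE_pow, hτj, show (b:ℝ)*(2*Real.pi*t) = 2*Real.pi*((b:ℝ)*t) by ring, KO_factor]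
  have hg : ∀ t : ℝ, KOE (2*Real.pi*((N:ℝ)*t)) * Q (KOE (2*Real.pi*t))
      = CC * KOE (Real.pi*(D*t)) * ((P t : ℝ) : ℂ) := by
    intro t
    have hsum : ∑ j ∈ Finset.Icc 1 K, (Real.pi*((b:ℝ)*t + (b:ℝ)*((j:ℝ)*η)))
        = (K:ℝ)*(Real.pi*((b:ℝ)*t)) + Real.pi*((b:ℝ)*η*J) := by
      have h1 : ∀ j ∈ Finset.Icc 1 K, (Real.pi*((b:ℝ)*t + (b:ℝ)*((j:ℝ)*η)))
          = Real.pi*((b:ℝ)*t) + Real.pi*((b:ℝ)*η)*(j:ℝ) := fun j _ => by ring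
      rw [Finset.sum_congr rfl h1, Finset.sum_add_distrib, Finset.sum_const, ← Finset.mul_sum,
        ← hJdef, Nat.card_Icc]
      simp only [Nat.add_sub_cancel, nsmul_eq_mul]
      ring
    have h2 : ∏ j ∈ Finset.Icc 1 K,
        (2*Complex.I*(Real.sin (Real.pi*((b:ℝ)*t - (b:ℝ)*((j:ℝ)*η))) : ℂ))
        = (2*Complex.I)^K * ((P t : ℝ) : ℂ) := by
      rw [Finset.prod_mul_distrib, Finset.prod_const, Nat.card_Icc, ← Complex.ofReal_prod]
      simp only [Nat.add_sub_cancel, hPdef]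
    have hph : KOE (2*Real.pi*((N:ℝ)*t)) * KOE ((K:ℝ)*(Real.pi*((b:ℝ)*t)) + Real.pi*((b:ℝ)*η*J))
        = KOE (Real.pi*((b:ℝ)*η*J)) * KOE (Real.pi*(D*t)) := by
      rw [← KOE_add, ← KOE_add]
      exact KOE_eq (by simp only [hDdef]; ring)
    rw [hQt t, Finset.prod_mul_distrib, KOE_sum, h2, hsum, hCCdef]
    linear_combination (c * ((2*Complex.I)^K * ((P t : ℝ) : ℂ))) * hph
  have hQ1 : -Complex.I = CC * ((P 0 : ℝ) : ℂ) := by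
    have h0 := hg 0
    rw [show 2*Real.pi*((N:ℝ)*0) = 0 by ring, show (2*Real.pi*(0:ℝ)) = 0 by ring,
      show Real.pi*(D*0) = 0 by ring, KOE_zero] at h0
    rw [← hc]
    simpa using h0
  have hjbound : ∀ j : ℕ, 1 ≤ j → j ≤ K → 0 < (b:ℝ)*((j:ℝ)*η) ∧ (b:ℝ)*((j:ℝ)*η) < 1 := by
    intro j hj1 hjK
    have hj1' : (1:ℝ) ≤ (j:ℝ) := by exact_mod_cast hj1
    have hjK' : (j:ℝ) ≤ (K:ℝ) := by exact_mod_cast hjK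
    constructor
    · positivity
    · nlinarith
  have hP0neg : ∀ j ∈ Finset.Icc 1 K,
      Real.sin (Real.pi*((b:ℝ)*0 - (b:ℝ)*((j:ℝ)*η))) < 0 := by
    intro j hj
    obtain ⟨hj1, hjK⟩ := Finset.mem_Icc.1 hj
    obtain ⟨hlo, hhi⟩ := hjbound j hj1 hjK
    apply Real.sin_neg_of_neg_of_neg_pi_lt
    · nlinarith
    · nlinarith
  have hsP0 : 0 < (-1:ℝ)^K * P 0 := by
    have := KO_prod_neg_sign (Finset.Icc 1 K) _ hP0neg
    simpa [Nat.card_Icc, hPdef] using this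
  have hP0ne : P 0 ≠ 0 := by
    intro h
    rw [h, mul_zero] at hsP0
    exact lt_irrefl 0 hsP0
  have hne : ((P 0 : ℝ) : ℂ) ≠ 0 := by exact_mod_cast hP0ne
  have hCC2 : CC = (((P 0)⁻¹ : ℝ) : ℂ) * (-Complex.I) := by
    rw [Complex.ofReal_inv, inv_mul_eq_div, eq_div_iff hne]
    exact hQ1.symm
  have hfkey : ∀ t : ℝ, f t = (P 0)⁻¹ * (Real.sin (Real.pi*(D*t)) * P t) := by
    intro t
    rw [hf t]
    rw [hexp2 _ (2*Real.pi*((N:ℝ)*t)) (by push_cast; ring),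
      hexp2 _ (2*Real.pi*t) (by push_cast; ring), hg t, hCC2]
    have : (((P 0)⁻¹ : ℝ) : ℂ) * (-Complex.I) * KOE (Real.pi*(D*t)) * ((P t : ℝ) : ℂ)
        = Complex.ofReal ((P 0)⁻¹ * (Real.sin (Real.pi*(D*t)) * P t))
          + Complex.ofReal (-((P 0)⁻¹ * (Real.cos (Real.pi*(D*t)) * P t))) * Complex.I := by
      rw [KOE, Complex.exp_mul_I, ← Complex.ofReal_cos, ← Complex.ofReal_sin]
      push_cast
      ring_nf
      rw [Complex.I_sq]
      ring
    rw [this]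
    simp only [Complex.add_re, Complex.mul_re, Complex.ofReal_re, Complex.ofReal_im,
      Complex.I_re, Complex.I_im]
    ring
  -- lattice zeros
  have hzero : ∀ j : ℕ, f ((j:ℝ)*η) = 0 := by
    intro j
    rw [hfkey]
    have h1 : D*((j:ℝ)*η) = (j:ℝ) := by
      have : D*((j:ℝ)*η) = (j:ℝ) * (η * D) := by ring
      rw [this, hηD, mul_one]
    rw [h1, mul_comm Real.pi ((j:ℝ)), Real.sin_nat_mul_pi]
    ring
  -- strict positivity between lattice points
  have hpos : ∀ t : ℝ, ∀ m : ℕ, m ≤ K → (m:ℝ)*η < t → t < ((m:ℝ)+1)*η → 0 < f t := by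
    intro t m hmK h1 h2
    have hmK' : (m:ℝ) ≤ (K:ℝ) := by exact_mod_cast hmK
    have hmη : D*((m:ℝ)*η) = (m:ℝ) := by
      have h' : D*((m:ℝ)*η) = (m:ℝ)*(η*D) := by ring
      rw [h', hηD, mul_one]
    have hm1η : D*(((m:ℝ)+1)*η) = (m:ℝ)+1 := by
      have h' : D*(((m:ℝ)+1)*η) = ((m:ℝ)+1)*(η*D) := by ring
      rw [h', hηD, mul_one]
    have hDt1 : (m:ℝ) < D*t := by
      have := mul_lt_mul_of_pos_left h1 hD
      rw [hmη] at this
      linarith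
    have hDt2 : D*t < (m:ℝ)+1 := by
      have := mul_lt_mul_of_pos_left h2 hD
      rw [hm1η] at this
      linarith
    have hsin1 : 0 < Real.sin (Real.pi*(D*t)) * (-1:ℝ)^m := by
      rw [KO_sin_shift m (D*t)]
      have hp : 0 < Real.sin (Real.pi*((D*t) - (m:ℝ))) := by
        apply Real.sin_pos_of_pos_of_lt_pi
        · exact mul_pos hπ (by linarith)
        · have h' : Real.pi*((D*t) - (m:ℝ)) < Real.pi*1 :=
            mul_lt_mul_of_pos_left (by linarith) hπ
          simpa using h'
      have he : (-1:ℝ)^m * (-1:ℝ)^m = 1 := by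
        rw [← pow_add]; exact Even.neg_one_pow ⟨m, rfl⟩
      have h'' : ((-1:ℝ)^m * Real.sin (Real.pi*((D*t) - (m:ℝ)))) * (-1:ℝ)^m
          = Real.sin (Real.pi*((D*t) - (m:ℝ))) := by
        rw [mul_comm ((-1:ℝ)^m) _, mul_assoc, he, mul_one]
      rw [h'']
      exact hp
    have hsplit : P t = (∏ j ∈ Finset.Ioc 0 m, Real.sin (Real.pi*((b:ℝ)*t - (b:ℝ)*((j:ℝ)*η))))
        * (∏ j ∈ Finset.Ioc m K, Real.sin (Real.pi*((b:ℝ)*t - (b:ℝ)*((j:ℝ)*η)))) := by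
      rw [hPdef]
      simp only []
      rw [show Finset.Icc 1 K = Finset.Ioc 0 K from Finset.Icc_add_one_left_eq_Ioc 0 K]
      exact (Finset.prod_Ioc_consecutive _ (Nat.zero_le m) hmK).symm
    have hA : 0 < ∏ j ∈ Finset.Ioc 0 m, Real.sin (Real.pi*((b:ℝ)*t - (b:ℝ)*((j:ℝ)*η))) := by
      apply Finset.prod_pos
      intro j hj
      obtain ⟨hj0, hjm⟩ := Finset.mem_Ioc.1 hj
      have hj1' : (1:ℝ) ≤ (j:ℝ) := by exact_mod_cast hj0
      have hjm' : (j:ℝ) ≤ (m:ℝ) := by exact_mod_cast hjm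
      have hbpos : (0:ℝ) < (b:ℝ) := by linarith
      have hjη : η ≤ (j:ℝ)*η := le_mul_of_one_le_left hη0.le hj1'
      have hmKη : (m:ℝ)*η ≤ (K:ℝ)*η := mul_le_mul_of_nonneg_right hmK' hη0.le
      have hjmη : (j:ℝ)*η ≤ (m:ℝ)*η := mul_le_mul_of_nonneg_right hjm' hη0.le
      have h5 : (b:ℝ)*((j:ℝ)*η) < (b:ℝ)*t :=
        mul_lt_mul_of_pos_left (by linarith) hbpos
      have h6 : (b:ℝ)*(t - (j:ℝ)*η) < (b:ℝ)*((K:ℝ)*η) :=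
        mul_lt_mul_of_pos_left (by linarith) hbpos
      apply Real.sin_pos_of_pos_of_lt_pi
      · exact mul_pos hπ (by linarith)
      · have h7 : (b:ℝ)*t - (b:ℝ)*((j:ℝ)*η) < 1 := by nlinarith
        have h8 : Real.pi*((b:ℝ)*t - (b:ℝ)*((j:ℝ)*η)) < Real.pi*1 :=
          mul_lt_mul_of_pos_left h7 hπ
        simpa using h8
    have hBneg : ∀ j ∈ Finset.Ioc m K, Real.sin (Real.pi*((b:ℝ)*t - (b:ℝ)*((j:ℝ)*η))) < 0 := by
      intro j hj
      obtain ⟨hjm, hjK⟩ := Finset.mem_Ioc.1 hj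
      have hjm' : (m:ℝ)+1 ≤ (j:ℝ) := by exact_mod_cast hjm
      have hjK' : (j:ℝ) ≤ (K:ℝ) := by exact_mod_cast hjK
      have hbpos : (0:ℝ) < (b:ℝ) := by linarith
      have hm0 : (0:ℝ) ≤ (m:ℝ)*η := by positivity
      have hm1jη : ((m:ℝ)+1)*η ≤ (j:ℝ)*η := mul_le_mul_of_nonneg_right hjm' hη0.le
      have hjKη : (j:ℝ)*η ≤ (K:ℝ)*η := mul_le_mul_of_nonneg_right hjK' hη0.le
      have h5 : (b:ℝ)*t < (b:ℝ)*((j:ℝ)*η) :=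
        mul_lt_mul_of_pos_left (by linarith) hbpos
      have h6 : (b:ℝ)*((j:ℝ)*η - t) < (b:ℝ)*((K:ℝ)*η) :=
        mul_lt_mul_of_pos_left (by linarith) hbpos
      apply Real.sin_neg_of_neg_of_neg_pi_lt
      · have h8 : Real.pi*((b:ℝ)*t - (b:ℝ)*((j:ℝ)*η)) < Real.pi*0 :=
          mul_lt_mul_of_pos_left (by linarith) hπ
        simpa using h8
      · have h7 : -1 < (b:ℝ)*t - (b:ℝ)*((j:ℝ)*η) := by nlinarith
        have h8 : Real.pi*(-1) < Real.pi*((b:ℝ)*t - (b:ℝ)*((j:ℝ)*η)) :=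
          mul_lt_mul_of_pos_left h7 hπ
        linarith [h8]
    have hB : 0 < (-1:ℝ)^(K-m) * ∏ j ∈ Finset.Ioc m K,
        Real.sin (Real.pi*((b:ℝ)*t - (b:ℝ)*((j:ℝ)*η))) := by
      have := KO_prod_neg_sign (Finset.Ioc m K) _ hBneg
      simpa [Nat.card_Ioc] using this
    rw [hfkey t, hsplit]
    set p0 := P 0
    set s1 := Real.sin (Real.pi*(D*t))
    set A := ∏ j ∈ Finset.Ioc 0 m, Real.sin (Real.pi*((b:ℝ)*t - (b:ℝ)*((j:ℝ)*η)))
    set B := ∏ j ∈ Finset.Ioc m K, Real.sin (Real.pi*((b:ℝ)*t - (b:ℝ)*((j:ℝ)*η)))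
    have e2 : (-1:ℝ)^K * (-1:ℝ)^m * (-1:ℝ)^(K-m) = 1 := by
      rw [← pow_add, ← pow_add]
      have hKmm : K + m + (K-m) = 2*K := by omega
      rw [hKmm, pow_mul]
      norm_num
    have hw : 0 < p0 * (s1 * (A*B)) := by
      have hcomb := mul_pos (mul_pos (mul_pos hsP0 hsin1) hA) hB
      have e1 : (-1:ℝ)^K * p0 * (s1*(-1:ℝ)^m) * A * ((-1:ℝ)^(K-m) * B)
          = ((-1:ℝ)^K * (-1:ℝ)^m * (-1:ℝ)^(K-m)) * (p0 * (s1 * (A*B))) := by ring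
      rw [e1, e2, one_mul] at hcomb
      exact hcomb
    have hfin : p0⁻¹ * (s1 * (A*B)) = (p0 * (s1 * (A*B))) / (p0^2) := by
      field_simp
    rw [hfin]
    exact div_pos hw (by positivity)
  have htri : ∀ t ∈ Set.Icc (0:ℝ) a,
      (∃ j:ℕ, j ≤ K+1 ∧ t = (j:ℝ)*η) ∨ (∃ m:ℕ, m ≤ K ∧ (m:ℝ)*η < t ∧ t < ((m:ℝ)+1)*η) := by
    rintro t ⟨ht0, hta⟩
    have hxK : t ≤ ((K:ℝ)+1)*η := by rw [ha] at hta; exact hta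
    set n : ℕ := (⌊t/η⌋).toNat with hn
    have hx0 : 0 ≤ t/η := div_nonneg ht0 hη0.le
    have hfl0 : (0:ℤ) ≤ ⌊t/η⌋ := Int.floor_nonneg.2 hx0
    have hncast : ((n:ℝ)) = ((⌊t/η⌋ : ℤ) : ℝ) := by
      rw [hn]
      exact_mod_cast congrArg (fun z : ℤ => (z:ℝ)) (Int.toNat_of_nonneg hfl0)
    have hfl : ((n:ℝ)) ≤ t/η := by rw [hncast]; exact Int.floor_le _
    have hfl2 : t/η < (n:ℝ)+1 := by
      rw [hncast]
      exact_mod_cast Int.lt_floor_add_one (t/η)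
    have hnη : (n:ℝ)*η ≤ t := (le_div_iff₀ hη0).1 hfl
    have htn1 : t < ((n:ℝ)+1)*η := (div_lt_iff₀ hη0).1 hfl2
    have hxK' : t/η ≤ (K:ℝ)+1 := by rw [div_le_iff₀ hη0]; linarith
    by_cases he : t = (n:ℝ)*η
    · left
      refine ⟨n, ?_, he⟩
      have h2 : (n:ℝ) ≤ (K:ℝ)+1 := le_trans hfl hxK'
      exact_mod_cast h2
    · right
      have hlt : (n:ℝ)*η < t := lt_of_le_of_ne hnη (fun h => he h.symm)
      refine ⟨n, ?_, hlt, htn1⟩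
      have h1 : (n:ℝ) < t/η := by
        rcases lt_or_eq_of_le hfl with h|h
        · exact h
        · exfalso
          apply he
          have h' : t/η = (n:ℝ) := h.symm
          rw [div_eq_iff hη0.ne'] at h'
          exact h'
      have h2 : (n:ℝ) < (K:ℝ)+1 := lt_of_lt_of_le h1 hxK'
      have h3 : n < K+1 := by exact_mod_cast h2
      omega
  refine ⟨?_, ?_, ?_⟩
  · exact KO_spectrum N K b S hS τ c Q hQ f hf
  · intro t ht
    rcases htri t ht with ⟨j, _, hjeq⟩ | ⟨m, hm, h1, h2⟩
    · rw [hjeq]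
      exact le_of_eq (hzero j).symm
    · exact (hpos t m hm h1 h2).le
  · intro t ht
    constructor
    · intro hft
      rcases htri t ht with ⟨j, hj1, hj2⟩ | ⟨m, hm, h1, h2⟩
      · exact ⟨j, hj1, hj2⟩
      · exact absurd hft (ne_of_gt (hpos t m hm h1 h2))
    · rintro ⟨j, hj1, rfl⟩
      exact hzero j
end

section
/- Let d ≥ 1, let S ⊂ ℤ^d be a finite set with 0 ∉ S and −S = S, and let f(x) = Σ_{λ∈S} c(λ)·exp(2πi⟨x,λ⟩) be real-valued for every x ∈ ℝ^d. Fix ν ∈ S, set μ = ν/(2‖ν‖₂²) ∈ ℝ^d, and define f̃(x) = f(x) + f(x+μ). Then f̃(x) = Σ_{λ∈S} c(λ)·(1 + exp(2πi⟨μ,λ⟩))·exp(2πi⟨x,λ⟩) is a real trigonometric polynomial with spectrum contained in S \ {ν, −ν}, and if f(x) > 0 for every x in the closed Euclidean ball B(y,R) with R ≥ ‖μ‖₂/2, then f̃(x) > 0 for every x in the closed Euclidean ball B(y − μ/2, R − ‖μ‖₂/2). -/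
open scoped BigOperators

private lemma sqrt_triangle {d : ℕ} (a b : Fin d → ℝ) :
    Real.sqrt (∑ j, (a j + b j) ^ 2) ≤
      Real.sqrt (∑ j, a j ^ 2) + Real.sqrt (∑ j, b j ^ 2) := by
  have h := norm_add_le (E := EuclideanSpace ℝ (Fin d)) (WithLp.toLp 2 a) (WithLp.toLp 2 b)
  simpa [EuclideanSpace.norm_eq, Real.norm_eq_abs, sq_abs] using h

private lemma exp_half : Complex.exp (2 * Real.pi * Complex.I *
    (((1:ℝ)/2 : ℝ) : ℂ)) = -1 := by
  rw [show (2 * (Real.pi:ℂ) * Complex.I * (((1:ℝ)/2 : ℝ) : ℂ)) = Real.pi * Complex.I by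
    push_cast; ring]
  exact Complex.exp_pi_mul_I

private lemma exp_neg_half : Complex.exp (2 * Real.pi * Complex.I *
    ((-(1/2) : ℝ) : ℂ)) = -1 := by
  rw [show (2 * (Real.pi:ℂ) * Complex.I * ((-(1/2) : ℝ) : ℂ)) = -(Real.pi * Complex.I) by
    push_cast; ring]
  rw [Complex.exp_neg, Complex.exp_pi_mul_I]
  norm_num

/-- The induction step in the proof of **Theorem 1** (Kozma–Oravecz): for `ν ∈ S` and
`μ = ν/(2‖ν‖₂²)`, the function `f̃(x) = f(x) + f(x+μ)` is the trigonometric polynomial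
`∑_{λ∈S} c(λ)(1 + e^{2πi⟨μ,λ⟩})e^{2πi⟨x,λ⟩}`; it is real-valued, its coefficients at
`±ν` vanish (so its spectrum is contained in `S \ {ν, -ν}`), and if `f > 0` on the closed
ball `B(y,R)` with `R ≥ ‖μ‖₂/2` then `f̃ > 0` on the closed ball `B(y-μ/2, R-‖μ‖₂/2)`. -/
theorem translate_and_add_step
    (d : ℕ) (hd : 1 ≤ d)
    (S : Finset (Fin d → ℤ)) (h0 : (0 : Fin d → ℤ) ∉ S)
    (hsym : ∀ lam ∈ S, -lam ∈ S)
    (c : (Fin d → ℤ) → ℂ) (f : (Fin d → ℝ) → ℂ)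
    (hf : ∀ x : Fin d → ℝ, f x = ∑ lam ∈ S,
      c lam * Complex.exp (2 * Real.pi * Complex.I * ((∑ j, x j * (lam j : ℝ) : ℝ) : ℂ)))
    (hreal : ∀ x : Fin d → ℝ, (f x).im = 0)
    (ν : Fin d → ℤ) (hν : ν ∈ S)
    (μ : Fin d → ℝ)
    (hμ : μ = fun j => (ν j : ℝ) / (2 * ∑ i, ((ν i : ℝ)) ^ 2))
    (g : (Fin d → ℝ) → ℂ)
    (hg : ∀ x : Fin d → ℝ, g x = f x + f (x + μ)) :
    (∀ x : Fin d → ℝ, g x = ∑ lam ∈ S,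
      c lam * (1 + Complex.exp (2 * Real.pi * Complex.I *
          ((∑ j, μ j * (lam j : ℝ) : ℝ) : ℂ))) *
        Complex.exp (2 * Real.pi * Complex.I * ((∑ j, x j * (lam j : ℝ) : ℝ) : ℂ))) ∧
    (∀ x : Fin d → ℝ, (g x).im = 0) ∧
    (1 + Complex.exp (2 * Real.pi * Complex.I *
        ((∑ j, μ j * (ν j : ℝ) : ℝ) : ℂ)) = 0) ∧
    (1 + Complex.exp (2 * Real.pi * Complex.I *
        ((∑ j, μ j * ((-ν) j : ℝ) : ℝ) : ℂ)) = 0) ∧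
    (∀ (y : Fin d → ℝ) (R : ℝ), Real.sqrt (∑ j, μ j ^ 2) / 2 ≤ R →
      (∀ x : Fin d → ℝ, Real.sqrt (∑ j, (x j - y j) ^ 2) ≤ R → 0 < (f x).re) →
      ∀ x : Fin d → ℝ,
        Real.sqrt (∑ j, (x j - (y j - μ j / 2)) ^ 2) ≤ R - Real.sqrt (∑ j, μ j ^ 2) / 2 →
        0 < (g x).re) := by
  have hν0 : ν ≠ 0 := fun h => h0 (h ▸ hν)
  have hT : 0 < ∑ i, ((ν i : ℝ)) ^ 2 := by
    obtain ⟨i, hi⟩ := Function.ne_iff.mp hν0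
    exact Finset.sum_pos' (fun j _ => sq_nonneg _)
      ⟨i, Finset.mem_univ i, by
        have : ((ν i : ℝ)) ≠ 0 := Int.cast_ne_zero.mpr hi
        positivity⟩
  have hdot : (∑ j, μ j * (ν j : ℝ)) = 1/2 := by
    rw [hμ]
    have h1 : ∀ j ∈ Finset.univ, ((ν j : ℝ) / (2 * ∑ i, ((ν i : ℝ)) ^ 2)) * (ν j : ℝ)
        = (ν j : ℝ) ^ 2 * (2 * ∑ i, ((ν i : ℝ)) ^ 2)⁻¹ := fun j _ => by ring
    rw [Finset.sum_congr rfl h1, ← Finset.sum_mul]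
    field_simp
  have hdot' : (∑ j, μ j * ((-ν) j : ℝ)) = -(1/2) := by
    have : ∀ j ∈ Finset.univ, μ j * ((-ν) j : ℝ) = -(μ j * (ν j : ℝ)) := fun j _ => by
      simp [Pi.neg_apply]
    rw [Finset.sum_congr rfl this, Finset.sum_neg_distrib, hdot]
  have hexpadd : ∀ (a b : ℝ), Complex.exp (2 * Real.pi * Complex.I * ((a + b : ℝ) : ℂ))
      = Complex.exp (2 * Real.pi * Complex.I * (a : ℂ)) *
        Complex.exp (2 * Real.pi * Complex.I * (b : ℂ)) := by
    intro a b
    rw [← Complex.exp_add]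
    congr 1
    push_cast
    ring
  refine ⟨?_, ?_, ?_, ?_, ?_⟩
  · intro x
    rw [hg, hf, hf, ← Finset.sum_add_distrib]
    refine Finset.sum_congr rfl fun lam _ => ?_
    have e1 : (∑ j, (x + μ) j * (lam j : ℝ))
        = (∑ j, x j * (lam j : ℝ)) + (∑ j, μ j * (lam j : ℝ)) := by
      rw [← Finset.sum_add_distrib]
      exact Finset.sum_congr rfl fun j _ => by simp [Pi.add_apply]; ring
    rw [e1, hexpadd]
    ring
  · intro x
    rw [hg]
    simp [Complex.add_im, hreal]
  · rw [hdot, exp_half]; ring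
  · rw [hdot', exp_neg_half]; ring
  · intro y R hR hpos x hx
    have hμhalf : Real.sqrt (∑ j, (μ j / 2) ^ 2) = Real.sqrt (∑ j, μ j ^ 2) / 2 := by
      have e : (∑ j, (μ j / 2) ^ 2) = (∑ j, μ j ^ 2) * (1/4 : ℝ) := by
        rw [Finset.sum_mul]
        exact Finset.sum_congr rfl fun j _ => by ring
      rw [e, Real.sqrt_mul (by positivity),
        show ((1:ℝ)/4) = (1/2 : ℝ)^2 by norm_num, Real.sqrt_sq (by norm_num)]
      ring
    have key : ∀ s : Fin d → ℝ, (∀ j, (s j) ^ 2 = (μ j / 2) ^ 2) →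
        Real.sqrt (∑ j, ((x j - (y j - μ j / 2)) + s j) ^ 2) ≤ R := by
      intro s hs
      calc Real.sqrt (∑ j, ((x j - (y j - μ j / 2)) + s j) ^ 2)
          ≤ Real.sqrt (∑ j, (x j - (y j - μ j / 2)) ^ 2) + Real.sqrt (∑ j, s j ^ 2) :=
            sqrt_triangle _ _
        _ ≤ (R - Real.sqrt (∑ j, μ j ^ 2) / 2) + Real.sqrt (∑ j, μ j ^ 2) / 2 := by
            gcongr
            rw [show (∑ j, s j ^ 2) = ∑ j, (μ j / 2) ^ 2 from
              Finset.sum_congr rfl fun j _ => hs j, hμhalf]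
        _ = R := by ring
    have h1 : 0 < (f x).re := by
      apply hpos
      have := key (fun j => -(μ j / 2)) (fun j => by ring)
      calc Real.sqrt (∑ j, (x j - y j) ^ 2)
          = Real.sqrt (∑ j, ((x j - (y j - μ j / 2)) + -(μ j / 2)) ^ 2) := by
            congr 1; exact Finset.sum_congr rfl fun j _ => by ring
        _ ≤ R := this
    have h2 : 0 < (f (x + μ)).re := by
      apply hpos
      have := key (fun j => μ j / 2) (fun j => rfl)
      calc Real.sqrt (∑ j, ((x + μ) j - y j) ^ 2)
          = Real.sqrt (∑ j, ((x j - (y j - μ j / 2)) + μ j / 2) ^ 2) := by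
            congr 1; exact Finset.sum_congr rfl fun j _ => by simp [Pi.add_apply]; ring
        _ ≤ R := this
    rw [hg]
    simpa [Complex.add_re] using add_pos h1 h2
end
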